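/- arXiv:1807.05202 — 8 statements merged into one kernel-verified Lean document; each statement's English description precedes it below -/
import Mathlib

section
/- Let $f : \{0,1\}^n \to \mathbb{R}$ satisfy $|f(x_1,\dots,x_{i-1},0,x_{i+1},\dots,x_n) - f(x_1,\dots,x_{i-1},1,x_{i+1},\dots,x_n)| \le c_i$ for all $x \in \{0,1\}^n$ and all $i \in [n]$. Let $\xi$ be a uniformly random element of the set of vectors in $\{0,1\}^n$ with exactly $k$ ones. Then for every $t \ge 0$, $\Pr(f(\xi) - \mathbb{E} f(\xi) \ge t) \le \exp\left(-t^2 / (8 \sum_{i=1}^n c_i^2)\right)$. -/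
open Finset Real

/-- Convexity bound: for `|u| ≤ L`, `exp u ≤ cosh L + (u/L) sinh L`. -/
lemma exp_le_cosh_add (u L : ℝ) (hL : 0 < L) (h : |u| ≤ L) :
    Real.exp u ≤ Real.cosh L + (u / L) * Real.sinh L := by
  rw [abs_le] at h
  set α := (u + L) / (2 * L) with hα
  have h1 : 0 ≤ α := by apply div_nonneg (by linarith) (by linarith)
  have h2 : 0 ≤ 1 - α := by
    have : α ≤ 1 := by rw [hα, div_le_one (by linarith)]; linarith
    linarith
  have h3 : α + (1 - α) = 1 := by ring
  have hcv := convexOn_exp.2 (Set.mem_univ L) (Set.mem_univ (-L)) h1 h2 h3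
  rw [smul_eq_mul, smul_eq_mul, smul_eq_mul, smul_eq_mul] at hcv
  have hcomb : α * L + (1 - α) * (-L) = u := by rw [hα]; field_simp; ring
  rw [hcomb] at hcv
  refine hcv.trans_eq ?_
  rw [Real.cosh_eq, Real.sinh_eq, hα]
  field_simp
  ring

/-- Two-point Hoeffding-type bound. -/
lemma bern (a b y₀ y₁ L : ℝ) (ha : 0 < a) (hb : 0 < b) (hL : |y₁ - y₀| ≤ L) :
    a * Real.exp (y₀ - (a * y₀ + b * y₁) / (a + b)) +
      b * Real.exp (y₁ - (a * y₀ + b * y₁) / (a + b)) ≤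
      (a + b) * Real.exp (L ^ 2 / 2) := by
  have hab : 0 < a + b := by linarith
  have hL0 : 0 ≤ L := le_trans (abs_nonneg _) hL
  rcases eq_or_lt_of_le hL0 with h0 | hLpos
  · -- L = 0, so y₀ = y₁
    have hye : y₁ = y₀ := by
      have h' : |y₁ - y₀| ≤ 0 := by rw [h0]; exact hL
      have := abs_nonpos_iff.mp h'
      linarith [sub_eq_zero.mp this]
    rw [hye]
    have hm : (a * y₀ + b * y₀) / (a + b) = y₀ := by field_simp
    rw [hm]
    simp only [sub_self, Real.exp_zero, mul_one]
    nlinarith [Real.one_le_exp (by positivity : (0:ℝ) ≤ L^2/2)]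
  · set m := (a * y₀ + b * y₁) / (a + b) with hm
    have h₀ : |y₀ - m| ≤ L := by
      have he : y₀ - m = b * (y₀ - y₁) / (a + b) := by rw [hm]; field_simp; ring
      rw [he, abs_div, abs_of_pos hab, div_le_iff₀ hab, abs_mul, abs_of_pos hb]
      have : |y₀ - y₁| ≤ L := by rwa [abs_sub_comm]
      nlinarith [abs_nonneg (y₀ - y₁)]
    have h₁ : |y₁ - m| ≤ L := by
      have he : y₁ - m = a * (y₁ - y₀) / (a + b) := by rw [hm]; field_simp; ring
      rw [he, abs_div, abs_of_pos hab, div_le_iff₀ hab, abs_mul, abs_of_pos ha]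
      nlinarith [abs_nonneg (y₁ - y₀)]
    have key : a * (y₀ - m) + b * (y₁ - m) = 0 := by rw [hm]; field_simp; ring
    have e0 := mul_le_mul_of_nonneg_left (exp_le_cosh_add (y₀ - m) L hLpos h₀) ha.le
    have e1 := mul_le_mul_of_nonneg_left (exp_le_cosh_add (y₁ - m) L hLpos h₁) hb.le
    have hch := Real.cosh_le_exp_half_sq L
    have hz : a * ((y₀ - m) / L * Real.sinh L) + b * ((y₁ - m) / L * Real.sinh L) =
        (a * (y₀ - m) + b * (y₁ - m)) * Real.sinh L / L := by ring
    have hz' : a * ((y₀ - m) / L * Real.sinh L) + b * ((y₁ - m) / L * Real.sinh L) = 0 := by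
      rw [hz, key]; simp
    have step : a * Real.exp (y₀ - m) + b * Real.exp (y₁ - m) ≤ (a + b) * Real.cosh L := by
      nlinarith [e0, e1, hz']
    calc a * Real.exp (y₀ - m) + b * Real.exp (y₁ - m) ≤ (a + b) * Real.cosh L := step
      _ ≤ (a + b) * Real.exp (L ^ 2 / 2) := mul_le_mul_of_nonneg_left hch hab.le

variable {n : ℕ}

/-- The slice: vectors agreeing with `x₀` off `s` and having exactly `k` ones in `s`. -/
def Sl (s : Finset (Fin n)) (k : ℕ) (x₀ : Fin n → Bool) : Finset (Fin n → Bool) :=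
  univ.filter (fun x => (∀ j ∉ s, x j = x₀ j) ∧ (s.filter (fun i => x i = true)).card = k)

lemma mem_Sl {s : Finset (Fin n)} {k : ℕ} {x₀ x : Fin n → Bool} :
    x ∈ Sl s k x₀ ↔ (∀ j ∉ s, x j = x₀ j) ∧ (s.filter (fun i => x i = true)).card = k := by
  simp [Sl]

lemma Sl_nonempty {s : Finset (Fin n)} {k : ℕ} (x₀ : Fin n → Bool) (hk : k ≤ s.card) :
    (Sl s k x₀).Nonempty := by
  obtain ⟨u, hus, hu⟩ := Finset.exists_subset_card_eq (s := s) hk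
  refine ⟨fun j => if j ∈ s then decide (j ∈ u) else x₀ j, mem_Sl.mpr ⟨?_, ?_⟩⟩
  · intro j hj; simp [hj]
  · rw [← hu]
    congr 1
    ext j
    simp only [Finset.mem_filter]
    constructor
    · rintro ⟨hjs, h⟩
      rw [if_pos hjs] at h
      exact of_decide_eq_true h
    · intro hju
      exact ⟨hus hju, by rw [if_pos (hus hju)]; exact decide_eq_true hju⟩

lemma Sl_subsingleton {s : Finset (Fin n)} {k : ℕ} (x₀ : Fin n → Bool)
    (h : k = 0 ∨ k = s.card) :
    ∀ x ∈ Sl s k x₀, ∀ y ∈ Sl s k x₀, x = y := by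
  intro x hx y hy
  rw [mem_Sl] at hx hy
  funext j
  by_cases hj : j ∈ s
  · rcases h with rfl | rfl
    · have hx0 : x j = false := by
        have := Finset.card_eq_zero.mp hx.2
        cases hxj : x j
        · rfl
        · exfalso
          have : j ∈ s.filter (fun i => x i = true) := by simp [hj, hxj]
          simp_all
      have hy0 : y j = false := by
        have := Finset.card_eq_zero.mp hy.2
        cases hyj : y j
        · rfl
        · exfalso
          have : j ∈ s.filter (fun i => y i = true) := by simp [hj, hyj]
          simp_all
      rw [hx0, hy0]
    · have hxf : s.filter (fun i => x i = true) = s :=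
        Finset.eq_of_subset_of_card_le (Finset.filter_subset _ _) (by rw [hx.2])
      have hyf : s.filter (fun i => y i = true) = s :=
        Finset.eq_of_subset_of_card_le (Finset.filter_subset _ _) (by rw [hy.2])
      have hx1 : x j = true := by have := hxf ▸ hj; simp at this; exact this.2
      have hy1 : y j = true := by have := hyf ▸ hj; simp at this; exact this.2
      rw [hx1, hy1]
  · rw [hx.1 j hj, hy.1 j hj]

lemma Sl_split {s : Finset (Fin n)} {k : ℕ} {x₀ : Fin n → Bool} {i : Fin n}
    (hi : i ∈ s) (hk : 1 ≤ k) :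
    Sl s k x₀ = Sl (s.erase i) k (Function.update x₀ i false) ∪
      Sl (s.erase i) (k - 1) (Function.update x₀ i true) := by
  ext x
  simp only [Finset.mem_union, mem_Sl]
  have hfe : (s.erase i).filter (fun j => x j = true) =
      (s.filter (fun j => x j = true)).erase i := Finset.filter_erase _ _ _
  by_cases hxi : x i = true
  · have himem : i ∈ s.filter (fun j => x j = true) := by simp [hi, hxi]
    have hcard : ((s.erase i).filter (fun j => x j = true)).card =
        (s.filter (fun j => x j = true)).card - 1 := by
      rw [hfe, Finset.card_erase_of_mem himem]
    constructor
    · rintro ⟨h1, h2⟩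
      right
      refine ⟨?_, ?_⟩
      · intro j hj
        rcases eq_or_ne j i with rfl | hji
        · simp [hxi]
        · rw [Function.update_of_ne hji, h1 j (by simp [Finset.mem_erase, hji] at hj; tauto)]
      · omega
    · rintro (⟨h1, h2⟩ | ⟨h1, h2⟩)
      · exfalso
        have := h1 i (by simp)
        rw [Function.update_self] at this
        simp [hxi] at this
      · constructor
        · intro j hj
          have hji : j ≠ i := fun h => by subst h; exact hj hi
          have := h1 j (by simp [Finset.mem_erase, hji, hj])
          rwa [Function.update_of_ne hji] at this
        · have hkk : k - 1 + 1 = k := by omega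
          have : (s.filter (fun j => x j = true)).card =
              ((s.erase i).filter (fun j => x j = true)).card + 1 := by
            rw [hfe, Finset.card_erase_of_mem himem]
            have : 1 ≤ (s.filter (fun j => x j = true)).card :=
              Finset.card_pos.mpr ⟨i, himem⟩
            omega
          omega
  · have himem : i ∉ s.filter (fun j => x j = true) := by simp [hxi]
    have hcard : ((s.erase i).filter (fun j => x j = true)).card =
        (s.filter (fun j => x j = true)).card := by
      rw [hfe, Finset.erase_eq_of_notMem himem]
    constructor
    · rintro ⟨h1, h2⟩
      left
      refine ⟨?_, by omega⟩
      intro j hj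
      rcases eq_or_ne j i with rfl | hji
      · simp [Function.update_self]; exact Bool.not_eq_true _ |>.mp hxi |>.symm ▸ rfl
      · rw [Function.update_of_ne hji, h1 j (by simp [Finset.mem_erase, hji] at hj; tauto)]
    · rintro (⟨h1, h2⟩ | ⟨h1, h2⟩)
      · constructor
        · intro j hj
          have hji : j ≠ i := fun h => by subst h; exact hj hi
          have := h1 j (by simp [Finset.mem_erase, hji, hj])
          rwa [Function.update_of_ne hji] at this
        · omega
      · exfalso
        have := h1 i (by simp)
        rw [Function.update_self] at this
        simp [hxi] at this

lemma Sl_disj {s : Finset (Fin n)} {k : ℕ} {x₀ : Fin n → Bool} {i : Fin n} (hi : i ∈ s)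
    (hk : 1 ≤ k) :
    Disjoint (Sl (s.erase i) k (Function.update x₀ i false))
      (Sl (s.erase i) (k - 1) (Function.update x₀ i true)) := by
  rw [Finset.disjoint_left]
  intro x hx hx'
  have h1 := (mem_Sl.mp hx).1 i (by simp)
  have h2 := (mem_Sl.mp hx').1 i (by simp)
  rw [Function.update_self] at h1 h2
  rw [h1] at h2
  exact Bool.false_ne_true h2

/-- Move a one from position `j` to position `i`. -/
def flip01 (i j : Fin n) (x : Fin n → Bool) : Fin n → Bool :=
  Function.update (Function.update x j false) i true

def flip10 (i j : Fin n) (y : Fin n → Bool) : Fin n → Bool :=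
  Function.update (Function.update y j true) i false

lemma flip01_apply (i j j' : Fin n) (x : Fin n → Bool) :
    flip01 i j x j' = if j' = i then true else if j' = j then false else x j' := by
  simp [flip01, Function.update_apply]

lemma flip10_apply (i j j' : Fin n) (y : Fin n → Bool) :
    flip10 i j y j' = if j' = i then false else if j' = j then true else y j' := by
  simp [flip10, Function.update_apply]

section coupling

variable {s' : Finset (Fin n)} {k : ℕ} {x₀ : Fin n → Bool} {i : Fin n}

lemma flip01_mem (hi' : i ∉ s') {j : Fin n} (hj : j ∈ s')
    {x : Fin n → Bool} (hx : x ∈ Sl s' k (Function.update x₀ i false)) (hxj : x j = true) :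
    flip01 i j x ∈ Sl s' (k - 1) (Function.update x₀ i true) := by
  have hij : j ≠ i := fun h => hi' (h ▸ hj)
  rw [mem_Sl] at hx ⊢
  constructor
  · intro j'' hj''
    rcases eq_or_ne j'' i with rfl | h2
    · rw [flip01_apply]; simp
    · have h3 : j'' ≠ j := fun h => hj'' (h ▸ hj)
      rw [flip01_apply, if_neg h2, if_neg h3, hx.1 j'' hj'',
        Function.update_of_ne h2, Function.update_of_ne h2]
  · have hfe : s'.filter (fun j' => flip01 i j x j' = true) =
        (s'.filter (fun j' => x j' = true)).erase j := by
      ext j'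
      simp only [Finset.mem_filter, Finset.mem_erase, flip01_apply]
      constructor
      · rintro ⟨h1, h2⟩
        have hne : j' ≠ i := fun h => hi' (h ▸ h1)
        rw [if_neg hne] at h2
        by_cases h3 : j' = j
        · rw [if_pos h3] at h2; exact absurd h2 (by simp)
        · rw [if_neg h3] at h2; exact ⟨h3, h1, h2⟩
      · rintro ⟨h1, h2, h3⟩
        have hne : j' ≠ i := fun h => hi' (h ▸ h2)
        rw [if_neg hne, if_neg h1]
        exact ⟨h2, h3⟩
    rw [hfe, Finset.card_erase_of_mem (by simp [hj, hxj]), hx.2]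

lemma flip10_mem (hi' : i ∉ s') (hk : 1 ≤ k) {j : Fin n} (hj : j ∈ s')
    {y : Fin n → Bool} (hy : y ∈ Sl s' (k - 1) (Function.update x₀ i true)) (hyj : y j = false) :
    flip10 i j y ∈ Sl s' k (Function.update x₀ i false) := by
  have hij : j ≠ i := fun h => hi' (h ▸ hj)
  rw [mem_Sl] at hy ⊢
  constructor
  · intro j'' hj''
    rcases eq_or_ne j'' i with rfl | h2
    · rw [flip10_apply]; simp
    · have h3 : j'' ≠ j := fun h => hj'' (h ▸ hj)
      rw [flip10_apply, if_neg h2, if_neg h3, hy.1 j'' hj'',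
        Function.update_of_ne h2, Function.update_of_ne h2]
  · have hfe : s'.filter (fun j' => flip10 i j y j' = true) =
        insert j (s'.filter (fun j' => y j' = true)) := by
      ext j'
      simp only [Finset.mem_filter, Finset.mem_insert, flip10_apply]
      constructor
      · rintro ⟨h1, h2⟩
        have hne : j' ≠ i := fun h => hi' (h ▸ h1)
        rw [if_neg hne] at h2
        by_cases h3 : j' = j
        · exact Or.inl h3
        · rw [if_neg h3] at h2; exact Or.inr ⟨h1, h2⟩
      · rintro (rfl | ⟨h1, h2⟩)
        · rw [if_neg hij, if_pos rfl]; exact ⟨hj, rfl⟩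
        · have hne : j' ≠ i := fun h => hi' (h ▸ h1)
          have h3 : j' ≠ j := by
            rintro rfl; rw [hyj] at h2; exact Bool.false_ne_true h2
          rw [if_neg hne, if_neg h3]
          exact ⟨h1, h2⟩
    have hjn : j ∉ s'.filter (fun j' => y j' = true) := by simp [hyj]
    rw [hfe, Finset.card_insert_of_notMem hjn, hy.2]
    omega

lemma flip10_flip01 {j : Fin n} (hij : j ≠ i) {x : Fin n → Bool}
    (hxi : x i = false) (hxj : x j = true) : flip10 i j (flip01 i j x) = x := by
  funext j'
  rw [flip10_apply]
  rcases eq_or_ne j' i with rfl | h1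
  · rw [if_pos rfl, hxi]
  · rw [if_neg h1]
    rcases eq_or_ne j' j with rfl | h2
    · rw [if_pos rfl, hxj]
    · rw [if_neg h2, flip01_apply, if_neg h1, if_neg h2]

lemma flip01_flip10 {j : Fin n} (hij : j ≠ i) {y : Fin n → Bool}
    (hyi : y i = true) (hyj : y j = false) : flip01 i j (flip10 i j y) = y := by
  funext j'
  rw [flip01_apply]
  rcases eq_or_ne j' i with rfl | h1
  · rw [if_pos rfl, hyi]
  · rw [if_neg h1]
    rcases eq_or_ne j' j with rfl | h2
    · rw [if_pos rfl, hyj]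
    · rw [if_neg h2, flip10_apply, if_neg h1, if_neg h2]

lemma Sl_false_at (hi' : i ∉ s') {x : Fin n → Bool} {m : ℕ}
    (hx : x ∈ Sl s' m (Function.update x₀ i false)) : x i = false := by
  have := (mem_Sl.mp hx).1 i hi'
  rwa [Function.update_self] at this

lemma Sl_true_at (hi' : i ∉ s') {y : Fin n → Bool} {m : ℕ}
    (hy : y ∈ Sl s' m (Function.update x₀ i true)) : y i = true := by
  have := (mem_Sl.mp hy).1 i hi'
  rwa [Function.update_self] at this

/-- The coupling sum-transfer identity. -/
lemma transfer (hi' : i ∉ s') (hk0 : 0 < k) (hks : k ≤ s'.card)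
    (g : (Fin n → Bool) → ℝ) :
    ∑ x ∈ Sl s' k (Function.update x₀ i false),
      ∑ j ∈ s'.filter (fun j => x j = true), g (flip01 i j x)
    = ∑ y ∈ Sl s' (k - 1) (Function.update x₀ i true),
        ∑ j ∈ s'.filter (fun j => y j = false), g y := by
  rw [Finset.sum_sigma', Finset.sum_sigma']
  refine Finset.sum_nbij' (fun p => ⟨flip01 i p.2 p.1, p.2⟩)
    (fun q => ⟨flip10 i q.2 q.1, q.2⟩) ?_ ?_ ?_ ?_ ?_
  · rintro ⟨x, j⟩ hp
    rw [Finset.mem_sigma] at hp ⊢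
    obtain ⟨hx, hj⟩ := hp
    rw [Finset.mem_filter] at hj
    refine ⟨flip01_mem hi' hj.1 hx hj.2, ?_⟩
    rw [Finset.mem_filter]
    refine ⟨hj.1, ?_⟩
    show flip01 i j x j = false
    rw [flip01_apply, if_neg (by rintro rfl; exact hi' hj.1), if_pos rfl]
  · rintro ⟨y, j⟩ hq
    rw [Finset.mem_sigma] at hq ⊢
    obtain ⟨hy, hj⟩ := hq
    rw [Finset.mem_filter] at hj
    refine ⟨flip10_mem hi' hk0 hj.1 hy hj.2, ?_⟩
    rw [Finset.mem_filter]
    refine ⟨hj.1, ?_⟩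
    show flip10 i j y j = true
    rw [flip10_apply, if_neg (by rintro rfl; exact hi' hj.1), if_pos rfl]
  · rintro ⟨x, j⟩ hp
    rw [Finset.mem_sigma] at hp
    obtain ⟨hx, hj⟩ := hp
    rw [Finset.mem_filter] at hj
    have : flip10 i j (flip01 i j x) = x :=
      flip10_flip01 (by rintro rfl; exact hi' hj.1) (Sl_false_at hi' hx) hj.2
    simp [this]
  · rintro ⟨y, j⟩ hq
    rw [Finset.mem_sigma] at hq
    obtain ⟨hy, hj⟩ := hq
    rw [Finset.mem_filter] at hj
    have : flip01 i j (flip10 i j y) = y :=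
      flip01_flip10 (by rintro rfl; exact hi' hj.1) (Sl_true_at hi' hy) hj.2
    simp [this]
  · rintro ⟨x, j⟩ hp
    rfl

end coupling

section meandiff

variable {s' : Finset (Fin n)} {k : ℕ} {x₀ : Fin n → Bool} {i : Fin n}

lemma card_zeros {y : Fin n → Bool}
    {m : ℕ} (hy : (s'.filter (fun j => y j = true)).card = m) :
    (s'.filter (fun j => y j = false)).card = s'.card - m := by
  have h := Finset.card_filter_add_card_filter_not
    (s := s') (p := fun j => y j = true)
  have he : s'.filter (fun j => ¬ y j = true) = s'.filter (fun j => y j = false) := by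
    apply Finset.filter_congr
    intro j _
    simp
  rw [he] at h
  omega

lemma mean_diff (hi' : i ∉ s') (hk0 : 0 < k) (hks : k ≤ s'.card)
    (f : (Fin n → Bool) → ℝ) (c : Fin n → ℝ)
    (hbd' : ∀ (x : Fin n → Bool) (j : Fin n) (b : Bool),
      |f (Function.update x j b) - f x| ≤ c j)
    (hci : ∀ j ∈ s', c j ≤ c i) :
    |(∑ y ∈ Sl s' (k - 1) (Function.update x₀ i true), f y) /
        ((Sl s' (k - 1) (Function.update x₀ i true)).card : ℝ) -
      (∑ x ∈ Sl s' k (Function.update x₀ i false), f x) /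
        ((Sl s' k (Function.update x₀ i false)).card : ℝ)| ≤ 2 * c i := by
  set A := Sl s' k (Function.update x₀ i false) with hA
  set B := Sl s' (k - 1) (Function.update x₀ i true) with hB
  have ha0 : 0 < (A.card : ℝ) := by
    exact_mod_cast Finset.card_pos.mpr (Sl_nonempty _ hks)
  have hb0 : 0 < (B.card : ℝ) := by
    exact_mod_cast Finset.card_pos.mpr (Sl_nonempty _ (by omega))
  set M : ℕ := s'.card - (k - 1) with hM
  have hM0 : 0 < M := by omega
  -- inner cardinalities
  have hones : ∀ x ∈ A, (s'.filter (fun j => x j = true)).card = k := by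
    intro x hx; exact (mem_Sl.mp hx).2
  have hzeros : ∀ y ∈ B, (s'.filter (fun j => y j = false)).card = M := by
    intro y hy
    exact card_zeros (mem_Sl.mp hy).2
  -- transfer with g = f
  have htf : ∑ x ∈ A, ∑ j ∈ s'.filter (fun j => x j = true), f (flip01 i j x)
      = (M : ℝ) * ∑ y ∈ B, f y := by
    rw [transfer hi' hk0 hks f, Finset.mul_sum]
    apply Finset.sum_congr rfl
    intro y hy
    rw [Finset.sum_const, hzeros y hy, nsmul_eq_mul]
  -- transfer with g = 1 : counting
  have hcount : (k : ℝ) * A.card = (M : ℝ) * B.card := by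
    have h1 := transfer (x₀ := x₀) hi' hk0 hks (fun _ => (1:ℝ))
    simp only [Finset.sum_const, nsmul_eq_mul, mul_one] at h1
    have hL : ∑ x ∈ A, ((s'.filter (fun j => x j = true)).card : ℝ)
        = (A.card : ℝ) * k := by
      rw [show ∑ x ∈ A, ((s'.filter (fun j => x j = true)).card : ℝ) = ∑ _x ∈ A, (k : ℝ)
          from Finset.sum_congr rfl (fun x hx => by rw [hones x hx]),
        Finset.sum_const, nsmul_eq_mul]
    have hR : ∑ y ∈ B, ((s'.filter (fun j => y j = false)).card : ℝ)
        = (B.card : ℝ) * M := by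
      rw [show ∑ y ∈ B, ((s'.filter (fun j => y j = false)).card : ℝ) = ∑ _y ∈ B, (M : ℝ)
          from Finset.sum_congr rfl (fun y hy => by rw [hzeros y hy]),
        Finset.sum_const, nsmul_eq_mul]
    rw [hL, hR] at h1
    linarith
  -- error bound
  have herr : |(M : ℝ) * ∑ y ∈ B, f y - (k : ℝ) * ∑ x ∈ A, f x|
      ≤ 2 * c i * ((k : ℝ) * A.card) := by
    have hE : (M : ℝ) * ∑ y ∈ B, f y - (k : ℝ) * ∑ x ∈ A, f x
        = ∑ x ∈ A, ∑ j ∈ s'.filter (fun j => x j = true), (f (flip01 i j x) - f x) := by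
      rw [Finset.sum_congr rfl (fun x hx => Finset.sum_sub_distrib _ _), Finset.sum_sub_distrib,
        htf]
      congr 1
      rw [Finset.mul_sum]
      apply Finset.sum_congr rfl
      intro x hx
      rw [Finset.sum_const, hones x hx, nsmul_eq_mul]
    rw [hE]
    calc |∑ x ∈ A, ∑ j ∈ s'.filter (fun j => x j = true), (f (flip01 i j x) - f x)|
        ≤ ∑ x ∈ A, |∑ j ∈ s'.filter (fun j => x j = true), (f (flip01 i j x) - f x)| :=
          Finset.abs_sum_le_sum_abs _ _
      _ ≤ ∑ x ∈ A, ∑ j ∈ s'.filter (fun j => x j = true), |f (flip01 i j x) - f x| :=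
          Finset.sum_le_sum (fun x _ => Finset.abs_sum_le_sum_abs _ _)
      _ ≤ ∑ x ∈ A, ∑ j ∈ s'.filter (fun j => x j = true), 2 * c i := by
          apply Finset.sum_le_sum
          intro x _
          apply Finset.sum_le_sum
          intro j hj
          rw [Finset.mem_filter] at hj
          have h1 : |f (flip01 i j x) - f (Function.update x j false)| ≤ c i := by
            have := hbd' (Function.update x j false) i true
            exact this
          have h2 : |f (Function.update x j false) - f x| ≤ c j := hbd' x j false
          have h3 : c j ≤ c i := hci j hj.1
          calc |f (flip01 i j x) - f x|
              ≤ |f (flip01 i j x) - f (Function.update x j false)| +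
                |f (Function.update x j false) - f x| := abs_sub_le _ _ _
            _ ≤ 2 * c i := by linarith
      _ = 2 * c i * ((k : ℝ) * A.card) := by
          rw [Finset.sum_congr rfl (fun x hx => by
            rw [Finset.sum_const, hones x hx, nsmul_eq_mul])]
          rw [Finset.sum_const, nsmul_eq_mul]
          ring
  -- conclude
  have hka : 0 < (k : ℝ) * A.card := by positivity
  have heq : (∑ y ∈ B, f y) / (B.card : ℝ) - (∑ x ∈ A, f x) / (A.card : ℝ)
      = ((M : ℝ) * ∑ y ∈ B, f y - (k : ℝ) * ∑ x ∈ A, f x) / ((k : ℝ) * A.card) := by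
    rw [eq_div_iff (ne_of_gt hka)]
    field_simp
    linear_combination (∑ y ∈ B, f y) * hcount
  rw [heq, abs_div, abs_of_pos hka, div_le_iff₀ hka]
  exact herr

end meandiff

/-- MGF bound on slices, by strong induction conditioning on the max-`c` coordinate. -/
lemma mgf_bound (f : (Fin n → Bool) → ℝ) (c : Fin n → ℝ)
    (hbd' : ∀ (x : Fin n → Bool) (j : Fin n) (b : Bool),
      |f (Function.update x j b) - f x| ≤ c j)
    (l : ℝ) (s : Finset (Fin n)) :
    ∀ (k : ℕ) (x₀ : Fin n → Bool), k ≤ s.card →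
      ∑ x ∈ Sl s k x₀, Real.exp (l * (f x - (∑ y ∈ Sl s k x₀, f y) / ((Sl s k x₀).card : ℝ)))
        ≤ ((Sl s k x₀).card : ℝ) * Real.exp (2 * l ^ 2 * ∑ j ∈ s, (c j) ^ 2) := by
  induction s using Finset.strongInduction with
  | _ s ih =>
    intro k x₀ hk
    have hcsq : (0:ℝ) ≤ 2 * l ^ 2 * ∑ j ∈ s, (c j) ^ 2 := by positivity
    by_cases hcase : k = 0 ∨ k = s.card
    · obtain ⟨z, hz⟩ := Sl_nonempty x₀ hk
      have hsing : Sl s k x₀ = {z} :=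
        Finset.eq_singleton_iff_unique_mem.mpr
          ⟨hz, fun y hy => Sl_subsingleton x₀ hcase y hy z hz⟩
      rw [hsing]
      simp only [Finset.sum_singleton, Finset.card_singleton, Nat.cast_one, div_one,
        sub_self, mul_zero, Real.exp_zero, one_mul]
      exact Real.one_le_exp hcsq
    · push_neg at hcase
      have hk0 : 0 < k := Nat.pos_of_ne_zero hcase.1
      have hks : k < s.card := lt_of_le_of_ne hk hcase.2
      have hsne : s.Nonempty := Finset.card_pos.mp (by omega)
      obtain ⟨i, hi, hmax⟩ := Finset.exists_max_image s c hsne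
      have hi' : i ∉ s.erase i := Finset.notMem_erase i s
      have hs'card : (s.erase i).card = s.card - 1 := Finset.card_erase_of_mem hi
      have hss : s.erase i ⊂ s := Finset.erase_ssubset hi
      have hk1 : k ≤ (s.erase i).card := by omega
      have hk2 : k - 1 ≤ (s.erase i).card := by omega
      set A := Sl (s.erase i) k (Function.update x₀ i false) with hA
      set B := Sl (s.erase i) (k - 1) (Function.update x₀ i true) with hB
      have hsplit : Sl s k x₀ = A ∪ B := Sl_split hi hk0
      have hdisj : Disjoint A B := Sl_disj hi hk0
      have ha0 : 0 < (A.card : ℝ) := by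
        exact_mod_cast Finset.card_pos.mpr (Sl_nonempty _ hk1)
      have hb0 : 0 < (B.card : ℝ) := by
        exact_mod_cast Finset.card_pos.mpr (Sl_nonempty _ hk2)
      set μA := (∑ x ∈ A, f x) / (A.card : ℝ) with hμA
      set μB := (∑ y ∈ B, f y) / (B.card : ℝ) with hμB
      have hcard : ((Sl s k x₀).card : ℝ) = (A.card : ℝ) + (B.card : ℝ) := by
        rw [hsplit, Finset.card_union_of_disjoint hdisj]; push_cast; ring
      have hsum : ∑ y ∈ Sl s k x₀, f y = ∑ x ∈ A, f x + ∑ y ∈ B, f y := by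
        rw [hsplit, Finset.sum_union hdisj]
      set μ := (∑ y ∈ Sl s k x₀, f y) / ((Sl s k x₀).card : ℝ) with hμ
      have hμeq : μ = ((A.card : ℝ) * μA + (B.card : ℝ) * μB) / ((A.card : ℝ) + (B.card : ℝ)) := by
        rw [hμ, hcard, hsum, hμA, hμB]
        field_simp
      -- IH on the two parts
      have ihA := ih (s.erase i) hss k (Function.update x₀ i false) hk1
      have ihB := ih (s.erase i) hss (k - 1) (Function.update x₀ i true) hk2
      rw [← hA, ← hμA] at ihA
      rw [← hB, ← hμB] at ihB
      -- split the sum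
      have hsplitsum : ∑ x ∈ Sl s k x₀, Real.exp (l * (f x - μ))
          = Real.exp (l * (μA - μ)) * ∑ x ∈ A, Real.exp (l * (f x - μA))
            + Real.exp (l * (μB - μ)) * ∑ y ∈ B, Real.exp (l * (f y - μB)) := by
        rw [hsplit, Finset.sum_union hdisj, Finset.mul_sum, Finset.mul_sum]
        congr 1
        · apply Finset.sum_congr rfl
          intro x _
          rw [← Real.exp_add]
          congr 1
          ring
        · apply Finset.sum_congr rfl
          intro y _
          rw [← Real.exp_add]
          congr 1
          ring
      -- mean difference bound
      have hmd : |μB - μA| ≤ 2 * c i :=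
        mean_diff hi' hk0 hk1 f c hbd' (fun j hj => hmax j (Finset.mem_of_mem_erase hj))
      -- Bernoulli step
      set L : ℝ := |l| * (2 * c i) with hL
      have hLbd : |l * μB - l * μA| ≤ L := by
        rw [show l * μB - l * μA = l * (μB - μA) by ring, abs_mul, hL]
        exact mul_le_mul_of_nonneg_left hmd (abs_nonneg l)
      have hbern := bern (A.card : ℝ) (B.card : ℝ) (l * μA) (l * μB) L ha0 hb0 hLbd
      have hyA : l * μA - ((A.card : ℝ) * (l * μA) + (B.card : ℝ) * (l * μB)) /
          ((A.card : ℝ) + (B.card : ℝ)) = l * (μA - μ) := by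
        rw [hμeq, show (A.card : ℝ) * (l * μA) + (B.card : ℝ) * (l * μB)
            = l * ((A.card : ℝ) * μA + (B.card : ℝ) * μB) from by ring,
          mul_sub, mul_div_assoc]
      have hyB : l * μB - ((A.card : ℝ) * (l * μA) + (B.card : ℝ) * (l * μB)) /
          ((A.card : ℝ) + (B.card : ℝ)) = l * (μB - μ) := by
        rw [hμeq, show (A.card : ℝ) * (l * μA) + (B.card : ℝ) * (l * μB)
            = l * ((A.card : ℝ) * μA + (B.card : ℝ) * μB) from by ring,
          mul_sub, mul_div_assoc]
      rw [hyA, hyB] at hbern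
      have hLsq : L ^ 2 / 2 = 2 * l ^ 2 * (c i) ^ 2 := by
        rw [hL]; rw [mul_pow, sq_abs]; ring
      rw [hLsq] at hbern
      -- combine
      have hexpnn : (0:ℝ) ≤ Real.exp (2 * l ^ 2 * ∑ j ∈ s.erase i, (c j) ^ 2) :=
        (Real.exp_pos _).le
      calc ∑ x ∈ Sl s k x₀, Real.exp (l * (f x - μ))
          = Real.exp (l * (μA - μ)) * ∑ x ∈ A, Real.exp (l * (f x - μA))
            + Real.exp (l * (μB - μ)) * ∑ y ∈ B, Real.exp (l * (f y - μB)) := hsplitsum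
        _ ≤ Real.exp (l * (μA - μ)) * ((A.card : ℝ) *
              Real.exp (2 * l ^ 2 * ∑ j ∈ s.erase i, (c j) ^ 2))
            + Real.exp (l * (μB - μ)) * ((B.card : ℝ) *
              Real.exp (2 * l ^ 2 * ∑ j ∈ s.erase i, (c j) ^ 2)) := by
            apply add_le_add
            · exact mul_le_mul_of_nonneg_left ihA (Real.exp_pos _).le
            · exact mul_le_mul_of_nonneg_left ihB (Real.exp_pos _).le
        _ = Real.exp (2 * l ^ 2 * ∑ j ∈ s.erase i, (c j) ^ 2) *
              ((A.card : ℝ) * Real.exp (l * (μA - μ)) + (B.card : ℝ) * Real.exp (l * (μB - μ))) := by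
            ring
        _ ≤ Real.exp (2 * l ^ 2 * ∑ j ∈ s.erase i, (c j) ^ 2) *
              (((A.card : ℝ) + (B.card : ℝ)) * Real.exp (2 * l ^ 2 * (c i) ^ 2)) :=
            mul_le_mul_of_nonneg_left hbern hexpnn
        _ = ((Sl s k x₀).card : ℝ) * Real.exp (2 * l ^ 2 * ∑ j ∈ s, (c j) ^ 2) := by
            rw [hcard, show ∑ j ∈ s, (c j) ^ 2 = (c i) ^ 2 + ∑ j ∈ s.erase i, (c j) ^ 2 from
              (Finset.add_sum_erase s (fun j => (c j) ^ 2) hi).symm, mul_add, Real.exp_add]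
            ring

/-- Azuma-type concentration on the slice. If `f : {0,1}^n → ℝ` has the
bounded-difference property with constants `c i`, and `ξ` is uniform on the zero-one
vectors with exactly `k` ones, then `Pr(f(ξ) - E f(ξ) ≥ t) ≤ exp(-t² / (8 ∑ cᵢ²))`. -/
theorem stmt1 (n k : ℕ) (hk : k ≤ n) (f : (Fin n → Bool) → ℝ) (c : Fin n → ℝ)
    (hbd : ∀ (x : Fin n → Bool) (i : Fin n),
      |f (Function.update x i false) - f (Function.update x i true)| ≤ c i)
    (t : ℝ) (ht : 0 ≤ t) :
    (((Finset.univ : Finset (Fin n → Bool)).filter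
          (fun x => ((Finset.univ.filter (fun i => x i = true)).card = k) ∧
            t ≤ f x - (∑ y ∈ (Finset.univ : Finset (Fin n → Bool)).filter
                (fun y => (Finset.univ.filter (fun i => y i = true)).card = k), f y) /
              (((Finset.univ : Finset (Fin n → Bool)).filter
                (fun y => (Finset.univ.filter (fun i => y i = true)).card = k)).card : ℝ))).card : ℝ) /
        (((Finset.univ : Finset (Fin n → Bool)).filter
          (fun y => (Finset.univ.filter (fun i => y i = true)).card = k)).card : ℝ)
      ≤ Real.exp (-(t ^ 2) / (8 * ∑ i : Fin n, (c i) ^ 2)) := by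
  classical
  -- basic facts
  have hc : ∀ i, 0 ≤ c i := fun i => le_trans (abs_nonneg _) (hbd (fun _ => false) i)
  have hbd' : ∀ (x : Fin n → Bool) (j : Fin n) (b : Bool),
      |f (Function.update x j b) - f x| ≤ c j := by
    intro x j b
    cases hb : x j <;> cases b
    · have hup : Function.update x j false = x := by
        conv_lhs => rw [← hb]
        exact Function.update_eq_self j x
      rw [hup, sub_self, abs_zero]; exact hc j
    · have hup : Function.update x j false = x := by
        conv_lhs => rw [← hb]
        exact Function.update_eq_self j x
      rw [show x = Function.update x j false from hup.symm, abs_sub_comm]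
      simpa using hbd x j
    · have hup : Function.update x j true = x := by
        conv_lhs => rw [← hb]
        exact Function.update_eq_self j x
      rw [show x = Function.update x j true from hup.symm]
      simpa using hbd x j
    · have hup : Function.update x j true = x := by
        conv_lhs => rw [← hb]
        exact Function.update_eq_self j x
      rw [hup, sub_self, abs_zero]; exact hc j
  set Q : Finset (Fin n → Bool) := (Finset.univ : Finset (Fin n → Bool)).filter
    (fun y => (Finset.univ.filter (fun i => y i = true)).card = k) with hQdef
  have hQSl : Q = Sl Finset.univ k (fun _ => false) := by
    rw [hQdef]
    unfold Sl
    apply Finset.filter_congr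
    intro x _
    simp
  have hkuniv : k ≤ (Finset.univ : Finset (Fin n)).card := by
    rwa [Finset.card_univ, Fintype.card_fin]
  have hQne : Q.Nonempty := by rw [hQSl]; exact Sl_nonempty _ hkuniv
  have hQ0 : 0 < (Q.card : ℝ) := by exact_mod_cast Finset.card_pos.mpr hQne
  set μ := (∑ y ∈ Q, f y) / (Q.card : ℝ) with hμdef
  have hFeq : (Finset.univ : Finset (Fin n → Bool)).filter
      (fun x => ((Finset.univ.filter (fun i => x i = true)).card = k) ∧ t ≤ f x - μ)
      = Q.filter (fun x => t ≤ f x - μ) := by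
    rw [hQdef, Finset.filter_filter]
  rw [hFeq]
  set F := Q.filter (fun x => t ≤ f x - μ) with hFdef
  have hFQ : F ⊆ Q := Finset.filter_subset _ _
  set S := ∑ i : Fin n, (c i) ^ 2 with hSdef
  have hS0 : 0 ≤ S := Finset.sum_nonneg (fun i _ => sq_nonneg _)
  -- the MGF bound specialized
  have hmgf : ∀ l : ℝ, ∑ x ∈ Q, Real.exp (l * (f x - μ))
      ≤ (Q.card : ℝ) * Real.exp (2 * l ^ 2 * S) := by
    intro l
    have := mgf_bound f c hbd' l Finset.univ k (fun _ => false) hkuniv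
    rw [← hQSl] at this
    simpa [hμdef, hSdef] using this
  -- Chernoff with parameter l ≥ 0
  have hchern : ∀ l : ℝ, 0 ≤ l →
      (F.card : ℝ) * Real.exp (l * t) ≤ (Q.card : ℝ) * Real.exp (2 * l ^ 2 * S) := by
    intro l hl
    calc (F.card : ℝ) * Real.exp (l * t) = ∑ _x ∈ F, Real.exp (l * t) := by
          rw [Finset.sum_const, nsmul_eq_mul]
      _ ≤ ∑ x ∈ F, Real.exp (l * (f x - μ)) := by
          apply Finset.sum_le_sum
          intro x hx
          have hxF := (Finset.mem_filter.mp hx).2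
          exact Real.exp_le_exp.mpr (mul_le_mul_of_nonneg_left hxF hl)
      _ ≤ ∑ x ∈ Q, Real.exp (l * (f x - μ)) :=
          Finset.sum_le_sum_of_subset_of_nonneg hFQ (fun x _ _ => (Real.exp_pos _).le)
      _ ≤ (Q.card : ℝ) * Real.exp (2 * l ^ 2 * S) := hmgf l
  by_cases htriv : t = 0 ∨ S = 0
  · -- trivial case: RHS = 1
    have hrhs : Real.exp (-(t ^ 2) / (8 * S)) = 1 := by
      rcases htriv with rfl | h
      · norm_num
      · rw [h]; norm_num
    rw [hrhs, div_le_one hQ0]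
    exact_mod_cast Finset.card_le_card hFQ
  · push_neg at htriv
    have htpos : 0 < t := lt_of_le_of_ne ht (Ne.symm htriv.1)
    have hSpos : 0 < S := lt_of_le_of_ne hS0 (Ne.symm htriv.2)
    set l := t / (4 * S) with hl
    have hlpos : 0 ≤ l := by positivity
    have h1 := hchern l hlpos
    have hexp : 2 * l ^ 2 * S - l * t = -(t ^ 2) / (8 * S) := by
      rw [hl]; field_simp; ring
    rw [div_le_iff₀ hQ0]
    have h2 : (F.card : ℝ) ≤ (Q.card : ℝ) * Real.exp (2 * l ^ 2 * S) * Real.exp (-(l * t)) := by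
      have h3 := mul_le_mul_of_nonneg_right h1 (Real.exp_pos (-(l * t))).le
      rwa [mul_assoc (F.card : ℝ), ← Real.exp_add, add_neg_cancel, Real.exp_zero, mul_one] at h3
    calc (F.card : ℝ) ≤ (Q.card : ℝ) * Real.exp (2 * l ^ 2 * S) * Real.exp (-(l * t)) := h2
      _ = Real.exp (-(t ^ 2) / (8 * S)) * (Q.card : ℝ) := by
          rw [mul_assoc, ← Real.exp_add, show 2 * l ^ 2 * S + -(l * t)
            = 2 * l ^ 2 * S - l * t from by ring, hexp]
          ring
end

section
/- Let $Z$ be a non-constant real random variable with $\mathbb{E} Z = 0$ and $\mathbb{E} Z^4 \le b (\mathbb{E} Z^2)^2$ for some $b > 0$. Then for any $\ell \in \mathbb{R}$, $\Pr(Z \ne \ell) \ge 1/(2^{4/3} b)$. -/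
open MeasureTheory
open scoped ENNReal

lemma cs_aux {Ω : Type*} [MeasurableSpace Ω] (μ : Measure Ω) [IsFiniteMeasure μ] (f : Ω → ℝ)
    (hf : Integrable f μ) (hf2 : Integrable (fun ω => f ω ^ 2) μ) :
    (∫ ω, f ω ∂μ) ^ 2 ≤ (∫ ω, f ω ^ 2 ∂μ) * (μ Set.univ).toReal := by
  by_cases hμ : μ Set.univ = 0
  · have : μ = 0 := Measure.measure_univ_eq_zero.mp hμ
    simp [this]
  · set m := (μ Set.univ).toReal with hm_def
    have hm : 0 < m := ENNReal.toReal_pos hμ (measure_ne_top μ _)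
    set S : ℝ := ∫ ω, f ω ∂μ with hS_def
    set t : ℝ := S / m with ht_def
    have h0 : 0 ≤ ∫ ω, (f ω - t) ^ 2 ∂μ := integral_nonneg fun ω => sq_nonneg _
    have hInt1 : Integrable (fun ω => f ω ^ 2 - 2 * t * f ω) μ := hf2.sub (hf.const_mul (2*t))
    have hexp : ∫ ω, (f ω - t) ^ 2 ∂μ
        = (∫ ω, f ω ^ 2 ∂μ) - 2 * t * S + t ^ 2 * m := by
      have h1 : ∀ ω, (f ω - t) ^ 2 = (f ω ^ 2 - (2 * t) * f ω) + t ^ 2 := fun ω => by ring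
      simp_rw [h1]
      rw [integral_add hInt1 (integrable_const _),
        integral_sub hf2 (hf.const_mul (2*t)), integral_const_mul, integral_const]
      simp [hm_def, smul_eq_mul, hS_def, Measure.real]
      ring
    rw [hexp] at h0
    have h2 : 2 * t * S = 2 * (S ^ 2 / m) := by rw [ht_def]; ring
    have ht2 : t ^ 2 * m = S ^ 2 / m := by rw [ht_def]; field_simp
    rw [h2, ht2] at h0
    have hle : S ^ 2 / m ≤ ∫ ω, f ω ^ 2 ∂μ := by linarith
    calc S ^ 2 = S ^ 2 / m * m := by field_simp
    _ ≤ (∫ ω, f ω ^ 2 ∂μ) * m := mul_le_mul_of_nonneg_right hle hm.le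


lemma arith_one_le (b V M4 : ℝ) (hV0 : 0 < V) (h1 : V ^ 2 ≤ M4) (h2 : M4 ≤ b * V ^ 2) :
    1 ≤ b := by nlinarith [mul_pos hV0 hV0]

lemma arith_sqrt_bd (x : ℝ) (hx0 : 0 ≤ x) (hx2 : x ^ 2 ≤ 0.403225) : x ≤ 0.635 := by
  nlinarith [sq_nonneg (x - 0.635)]

lemma arith_le_of_sq_le_sq (s v : ℝ) (hs : 0 ≤ s) (hv : 0 ≤ v) (h : s ^ 2 ≤ v ^ 2) :
    s ≤ v := by nlinarith

lemma arith_final (p x : ℝ) (hp0 : 0 ≤ p) (hp1 : p ≤ 1) (hx0 : 0 ≤ x) (hx6 : x ≤ 0.635)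
    (hpx : p ≤ x ^ 2)
    (hkey : (1 - p) ^ 3 ≤ x ^ 2 * (1 - p) - (1 - x) ^ 2 * p) : False := by
  nlinarith [sq_nonneg (x - 0.635), mul_nonneg (sub_nonneg.2 hpx) (sub_nonneg.2 hp1),
    sq_nonneg (1 - x), mul_nonneg hp0 (sq_nonneg (1 - x)), sq_nonneg (x ^ 2 - p),
    mul_nonneg (sub_nonneg.2 hx6) hp0, mul_nonneg (mul_nonneg hp0 hp0) hx0]

set_option maxHeartbeats 1000000 in
/-- If `Z` is a non-constant real random variable with mean zero and
`E Z⁴ ≤ b (E Z²)²`, then for every `ℓ ∈ ℝ`, `Pr(Z ≠ ℓ) ≥ 1/(2^{4/3} b)`. -/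
theorem stmt2 {Ω : Type*} [MeasurableSpace Ω] (μ : Measure Ω) [IsProbabilityMeasure μ]
    (Z : Ω → ℝ) (hZ : MemLp Z 4 μ)
    (hnc : ¬ ∃ c : ℝ, ∀ᵐ ω ∂μ, Z ω = c)
    (hmean : ∫ ω, Z ω ∂μ = 0)
    (b : ℝ) (hb : 0 < b)
    (h4 : ∫ ω, (Z ω) ^ 4 ∂μ ≤ b * (∫ ω, (Z ω) ^ 2 ∂μ) ^ 2) :
    ∀ ℓ : ℝ, 1 / (2 ^ ((4 : ℝ) / 3) * b) ≤ (μ {ω | Z ω ≠ ℓ}).toReal := by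
  intro ℓ
  set c : ℝ := 2 ^ ((4 : ℝ) / 3) with hc_def
  have hc0 : 0 < c := Real.rpow_pos_of_pos two_pos _
  have hc : (2.5 : ℝ) ≤ c := by
    by_contra hlt
    push_neg at hlt
    have h1 : c ^ (3:ℕ) < 2.5 ^ (3:ℕ) := by
      exact pow_lt_pow_left₀ hlt hc0.le (by norm_num)
    have h2 : c ^ (3:ℕ) = 16 := by
      rw [hc_def, ← Real.rpow_natCast (2 ^ ((4:ℝ)/3)) 3, ← Real.rpow_mul (by norm_num : (0:ℝ) ≤ 2)]
      norm_num
    rw [h2] at h1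
    norm_num at h1
  -- measurable representative
  obtain ⟨Z', hZ'sm, hae⟩ : ∃ Z' : Ω → ℝ, StronglyMeasurable Z' ∧ Z =ᵐ[μ] Z' :=
    ⟨hZ.aestronglyMeasurable.mk Z, hZ.aestronglyMeasurable.stronglyMeasurable_mk,
      hZ.aestronglyMeasurable.ae_eq_mk⟩
  have hZ' : MemLp Z' 4 μ := hZ.ae_eq hae
  have hI1 : Integrable Z' μ := (hZ'.mono_exponent (by norm_num)).integrable le_rfl
  have hI2 : Integrable (fun ω => Z' ω ^ 2) μ :=
    (hZ'.mono_exponent (by norm_num)).integrable_sq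
  have hI4 : Integrable (fun ω => Z' ω ^ 4) μ := by
    have h := hZ'.integrable_norm_rpow (by norm_num) (by norm_num)
    refine h.congr (Filter.Eventually.of_forall fun ω => ?_)
    have h1 : ((4:ℝ≥0∞).toReal) = ((4:ℕ):ℝ) := by norm_num
    show ‖Z' ω‖ ^ (4:ℝ≥0∞).toReal = Z' ω ^ 4
    rw [h1, Real.rpow_natCast, Real.norm_eq_abs, ← abs_pow, abs_of_nonneg (by positivity)]
  have hI22 : Integrable (fun ω => (Z' ω ^ 2) ^ 2) μ := by
    have : (fun ω => (Z' ω ^ 2) ^ 2) = fun ω => Z' ω ^ 4 := funext fun ω => by ring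
    rw [this]; exact hI4
  -- transfer integrals
  have hmean' : ∫ ω, Z' ω ∂μ = 0 := by rw [← integral_congr_ae hae]; exact hmean
  have e2 : ∫ ω, (Z ω) ^ 2 ∂μ = ∫ ω, Z' ω ^ 2 ∂μ :=
    integral_congr_ae (hae.mono fun ω h => by show Z ω ^ 2 = Z' ω ^ 2; rw [h])
  have e4 : ∫ ω, (Z ω) ^ 4 ∂μ = ∫ ω, Z' ω ^ 4 ∂μ :=
    integral_congr_ae (hae.mono fun ω h => by show Z ω ^ 4 = Z' ω ^ 4; rw [h])
  have h4' : ∫ ω, Z' ω ^ 4 ∂μ ≤ b * (∫ ω, Z' ω ^ 2 ∂μ) ^ 2 := by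
    rw [← e2, ← e4]; exact h4
  set V : ℝ := ∫ ω, Z' ω ^ 2 ∂μ with hV_def
  set M4 : ℝ := ∫ ω, Z' ω ^ 4 ∂μ with hM4_def
  -- the set
  set A : Set Ω := {ω | Z' ω ≠ ℓ} with hA_def
  have hA : MeasurableSet A := by
    have : A = Z' ⁻¹' ({ℓ}ᶜ) := by ext ω; simp [hA_def]
    rw [this]
    exact hZ'sm.measurable (measurableSet_singleton ℓ).compl
  have hμA : μ {ω | Z ω ≠ ℓ} = μ A := by
    refine measure_congr (Filter.eventuallyEq_set.mpr (hae.mono fun ω h => ?_))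
    simp [hA_def, Set.mem_setOf_eq, h]
  set p : ℝ := (μ A).toReal with hp_def
  set q : ℝ := (μ Aᶜ).toReal with hq_defn
  have hp0 : 0 ≤ p := ENNReal.toReal_nonneg
  have hq0 : 0 ≤ q := ENNReal.toReal_nonneg
  have hpq : p + q = 1 := by
    have h := measure_add_measure_compl (μ := μ) hA
    rw [measure_univ] at h
    rw [hp_def, hq_defn, ← ENNReal.toReal_add (measure_ne_top μ A) (measure_ne_top μ Aᶜ), h]
    simp
  -- values on the complement
  have hcomp : ∀ ω ∈ Aᶜ, Z' ω = ℓ := fun ω hω => by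
    simpa [hA_def, Set.mem_setOf_eq] using hω
  have ec1 : ∫ ω in Aᶜ, Z' ω ∂μ = ℓ * q := by
    rw [setIntegral_congr_fun hA.compl (fun ω hω => hcomp ω hω), setIntegral_const,
      smul_eq_mul, mul_comm]; rfl
  have ec2 : ∫ ω in Aᶜ, Z' ω ^ 2 ∂μ = ℓ ^ 2 * q := by
    rw [setIntegral_congr_fun hA.compl (fun ω hω => by
      show Z' ω ^ 2 = ℓ ^ 2; rw [hcomp ω hω] :
      Set.EqOn (fun ω => Z' ω ^ 2) (fun _ => ℓ ^ 2) Aᶜ), setIntegral_const, smul_eq_mul, mul_comm]; rfl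
  have ec4 : ∫ ω in Aᶜ, Z' ω ^ 4 ∂μ = ℓ ^ 4 * q := by
    rw [setIntegral_congr_fun hA.compl (fun ω hω => by
      show Z' ω ^ 4 = ℓ ^ 4; rw [hcomp ω hω] :
      Set.EqOn (fun ω => Z' ω ^ 4) (fun _ => ℓ ^ 4) Aᶜ), setIntegral_const, smul_eq_mul, mul_comm]; rfl
  set a : ℝ := ∫ ω in A, Z' ω ∂μ with ha_def
  set s : ℝ := ∫ ω in A, Z' ω ^ 2 ∂μ with hs_def
  set T : ℝ := ∫ ω in A, Z' ω ^ 4 ∂μ with hT_def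
  have hs1 : a + ℓ * q = 0 := by
    have h := integral_add_compl hA hI1
    rw [ec1, hmean'] at h; exact h
  have hs2 : s + ℓ ^ 2 * q = V := by
    have h := integral_add_compl hA hI2
    rw [ec2] at h; exact h
  have hs4 : T + ℓ ^ 4 * q = M4 := by
    have h := integral_add_compl hA hI4
    rw [ec4] at h; exact h
  -- Cauchy-Schwarz
  have hCS1 : a ^ 2 ≤ s * p := by
    have h := cs_aux (μ.restrict A) Z' (hI1.restrict) (hI2.restrict)
    rwa [Measure.restrict_apply_univ] at h
  have hCS2 : s ^ 2 ≤ T * p := by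
    have h := cs_aux (μ.restrict A) (fun ω => Z' ω ^ 2) hI2.restrict hI22.restrict
    rw [Measure.restrict_apply_univ] at h
    simp_rw [show ∀ x : ℝ, (x ^ 2) ^ 2 = x ^ 4 from fun x => by ring] at h
    exact h
  have hCSb : V ^ 2 ≤ M4 := by
    have h := cs_aux μ (fun ω => Z' ω ^ 2) hI2 hI22
    simp_rw [show ∀ x : ℝ, (x ^ 2) ^ 2 = x ^ 4 from fun x => by ring] at h
    rw [measure_univ] at h
    simpa using h
  have hs0 : 0 ≤ s := setIntegral_nonneg hA fun ω _ => sq_nonneg _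
  have hT0 : 0 ≤ T := setIntegral_nonneg hA fun ω _ => by positivity
  have hV0 : 0 < V := by
    rcases lt_or_ge 0 V with h | h
    · exact h
    exfalso
    have hVnn : 0 ≤ V := integral_nonneg fun ω => sq_nonneg _
    have hV00 : V = 0 := le_antisymm h hVnn
    have hz2 : (fun ω => Z' ω ^ 2) =ᵐ[μ] 0 :=
      (integral_eq_zero_iff_of_nonneg (fun ω => sq_nonneg _) hI2).mp hV00
    refine hnc ⟨0, ?_⟩
    filter_upwards [hae, hz2] with ω h1 h2
    have h3 : Z' ω ^ 2 = 0 := h2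
    have h4 : Z' ω = 0 := by
      exact pow_eq_zero_iff (n := 2) (by norm_num) |>.mp h3
    rw [h1, h4]
  have hb1 : 1 ≤ b := arith_one_le b V M4 hV0 hCSb h4'
  -- main case split
  by_cases hple : 1 / (c * b) ≤ p
  · rw [hμA]; exact hple
  push_neg at hple
  exfalso
  have hbp : b * p < 1 / c := by
    calc b * p < b * (1 / (c * b)) := by exact mul_lt_mul_of_pos_left hple hb
    _ = 1 / c := by field_simp
  have hbp' : b * p ≤ 0.403225 := by
    have h1 : (1:ℝ) / c ≤ 1 / 2.5 := by
      apply one_div_le_one_div_of_le (by norm_num) hc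
    linarith
  set x : ℝ := Real.sqrt (b * p) with hx_def
  have hx0 : 0 ≤ x := Real.sqrt_nonneg _
  have hx2 : x ^ 2 = b * p := Real.sq_sqrt (by positivity)
  have hx635 : x ≤ 0.635 := arith_sqrt_bd x hx0 (by linarith [hx2])
  have hplex2 : p ≤ x ^ 2 := by
    have h1 : 1 * p ≤ b * p := mul_le_mul_of_nonneg_right hb1 hp0
    linarith
  have hp1 : p ≤ 1 := by linarith
  have hq1 : q ≤ 1 := by linarith
  -- V*q ≤ s
  have hpeq : p = 1 - q := by linarith
  have hsVq : V * q ≤ s := by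
    have ha2 : a ^ 2 = (V - s) * q := by
      have h1 : a = -(ℓ * q) := by linarith
      have h2 : V - s = ℓ ^ 2 * q := by linarith
      rw [h1, h2]; ring
    have hCS1' : V * q - s * q ≤ s - s * q := by
      calc V * q - s * q = (V - s) * q := by ring
      _ = a ^ 2 := ha2.symm
      _ ≤ s * p := hCS1
      _ = s - s * q := by rw [hpeq]; ring
    linarith
  -- s ≤ V*x
  have hTb : T ≤ b * V ^ 2 := by
    have h0 : 0 ≤ ℓ ^ 4 * q := by positivity
    linarith
  have hsVx : s ≤ V * x := by
    have h1 : s ^ 2 ≤ (V * x) ^ 2 := by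
      calc s ^ 2 ≤ T * p := hCS2
      _ ≤ b * V ^ 2 * p := mul_le_mul_of_nonneg_right hTb hp0
      _ = (V * x) ^ 2 := by rw [mul_pow, hx2]; ring
    exact arith_le_of_sq_le_sq s (V*x) hs0 (mul_nonneg hV0.le hx0) h1
  -- the key chain
  have hx1 : x ≤ 1 := by linarith
  have hu0 : 0 ≤ V * (1 - x) := mul_nonneg hV0.le (by linarith)
  have husq : (V * (1 - x)) ^ 2 ≤ (V - s) ^ 2 := by
    apply pow_le_pow_left₀ hu0 (by linarith)
  have hVq0 : 0 ≤ V * q := mul_nonneg hV0.le hq0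
  have h1 : (V * q) ^ 2 ≤ s ^ 2 := pow_le_pow_left₀ hVq0 hsVq 2
  have hTeq : T = M4 - ℓ ^ 4 * q := by linarith
  have hl2 : V - s = ℓ ^ 2 * q := by linarith
  have hchain : (V * q) ^ 2 * q ≤ b * V ^ 2 * p * q - (V - s) ^ 2 * p := by
    have h2 : s ^ 2 * q ≤ T * p * q := mul_le_mul_of_nonneg_right hCS2 hq0
    have h3 : T * p * q = M4 * p * q - (ℓ ^ 2 * q) ^ 2 * p := by rw [hTeq]; ring
    have h4'' : M4 * p * q ≤ b * V ^ 2 * p * q :=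
      mul_le_mul_of_nonneg_right (mul_le_mul_of_nonneg_right h4' hp0) hq0
    have h5 : (ℓ ^ 2 * q) ^ 2 = (V - s) ^ 2 := by rw [hl2]
    have h6 : (V * q) ^ 2 * q ≤ s ^ 2 * q := mul_le_mul_of_nonneg_right h1 hq0
    calc (V * q) ^ 2 * q ≤ s ^ 2 * q := h6
    _ ≤ T * p * q := h2
    _ = M4 * p * q - (V - s) ^ 2 * p := by rw [h3, h5]
    _ ≤ b * V ^ 2 * p * q - (V - s) ^ 2 * p := by linarith
  have hchain2 : V ^ 2 * q ^ 3 ≤ V ^ 2 * (x ^ 2 * q - (1 - x) ^ 2 * p) := by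
    have h7 : (V - s) ^ 2 * p ≥ (V * (1 - x)) ^ 2 * p := mul_le_mul_of_nonneg_right husq hp0
    have h8 : b * V ^ 2 * p * q = V ^ 2 * (x ^ 2 * q) := by rw [hx2]; ring
    have h9 : (V * (1 - x)) ^ 2 * p = V ^ 2 * ((1 - x) ^ 2 * p) := by ring
    have h10 : (V * q) ^ 2 * q = V ^ 2 * q ^ 3 := by ring
    calc V ^ 2 * q ^ 3 = (V * q) ^ 2 * q := h10.symm
    _ ≤ b * V ^ 2 * p * q - (V - s) ^ 2 * p := hchain
    _ ≤ V ^ 2 * (x ^ 2 * q) - V ^ 2 * ((1 - x) ^ 2 * p) := by linarith [h7, h8, h9]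
    _ = V ^ 2 * (x ^ 2 * q - (1 - x) ^ 2 * p) := by ring
  have hV2 : 0 < V ^ 2 := by positivity
  have hkey : q ^ 3 ≤ x ^ 2 * q - (1 - x) ^ 2 * p := le_of_mul_le_mul_left
    (by linarith [hchain2] : V ^ 2 * q ^ 3 ≤ V ^ 2 * (x ^ 2 * q - (1 - x) ^ 2 * p)) hV2
  -- final contradiction
  have hqeq : q = 1 - p := by linarith
  rw [hqeq] at hkey
  exact arith_final p x hp0 hp1 hx0 hx635 hplex2 hkey
end

section
/- Let $r$ be a positive integer, and let $G$ be an $r$-uniform hypergraph on $2k$ vertices with $k \ge r$. If every $k$-element vertex subset of $G$ induces the same number of edges, then $G$ is a complete $r$-uniform hypergraph or has no edges at all. -/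
open Finset

private lemma sum_powersetCard_insert {α : Type*} [DecidableEq α] {u : α} {C : Finset α}
    (hu : u ∉ C) (r : ℕ) (h : Finset α → ℚ) :
    ∑ S ∈ (insert u C).powersetCard (r + 1), h S =
      (∑ S ∈ C.powersetCard (r + 1), h S) + ∑ T ∈ C.powersetCard r, h (insert u T) := by
  rw [powersetCard_succ_insert hu, sum_union, sum_image]
  · intro a ha b hb hab
    have hua : u ∉ a := fun h' => hu ((mem_powersetCard.1 ha).1 h')
    have hub : u ∉ b := fun h' => hu ((mem_powersetCard.1 hb).1 h')
    have := congrArg (fun s => Finset.erase s u) hab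
    simpa [Finset.erase_insert_of_ne, Finset.erase_eq_of_notMem, hua, hub] using this
  · rw [Finset.disjoint_right]
    intro a ha ha2
    obtain ⟨T, hT, rfl⟩ := Finset.mem_image.1 ha
    exact hu ((mem_powersetCard.1 ha2).1 (Finset.mem_insert_self u T))

private lemma key {α : Type*} [DecidableEq α] :
    ∀ (r k : ℕ), r ≤ k → ∀ (V : Finset α), 2 * k ≤ V.card →
      ∀ (h : Finset α → ℚ),
        (∀ C ⊆ V, C.card = k → ∑ S ∈ C.powersetCard r, h S = 0) →
        ∀ S ⊆ V, S.card = r → h S = 0 := by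
  intro r
  induction r with
  | zero =>
    intro k hk V hV h hsum S hS hcard
    obtain ⟨C, hCV, hCcard⟩ := V.exists_subset_card_eq (n := k) (by omega)
    have := hsum C hCV hCcard
    rw [Finset.card_eq_zero.1 hcard]
    simpa using this
  | succ r IH =>
    intro k hk V hV h hsum
    have hk1 : 1 ≤ k := le_trans (by omega) hk
    -- adjacency step
    have adj : ∀ T ⊆ V, T.card = r → ∀ u ∈ V, ∀ v ∈ V, u ∉ T → v ∉ T → u ≠ v →
        h (insert u T) = h (insert v T) := by
      intro T hTV hTcard u hu v hv huT hvT huv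
      have hcard2 : ({u, v} : Finset α).card = 2 := by
        rw [Finset.card_insert_of_notMem (by simp [huv]), Finset.card_singleton]
      have hsub : ({u, v} : Finset α) ⊆ V := by
        intro x hx; rcases Finset.mem_insert.1 hx with rfl | hx
        · exact hu
        · rw [Finset.mem_singleton.1 hx]; exact hv
      have hVcard : 2 * (k - 1) ≤ (V \ {u, v}).card := by
        rw [Finset.card_sdiff_of_subset hsub, hcard2]; omega
      have hTV' : T ⊆ V \ {u, v} := by
        intro x hx
        refine Finset.mem_sdiff.2 ⟨hTV hx, ?_⟩
        simp only [Finset.mem_insert, Finset.mem_singleton]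
        rintro (rfl | rfl)
        · exact huT hx
        · exact hvT hx
      have := IH (k - 1) (by omega) (V \ {u, v}) hVcard
        (fun T' => h (insert u T') - h (insert v T')) ?_ T hTV' hTcard
      · exact sub_eq_zero.1 this
      intro C' hC' hC'card
      have huC : u ∉ C' := fun hx => by simpa using (Finset.mem_sdiff.1 (hC' hx)).2
      have hvC : v ∉ C' := fun hx => by simpa using (Finset.mem_sdiff.1 (hC' hx)).2
      have hCV : C' ⊆ V := fun x hx => (Finset.mem_sdiff.1 (hC' hx)).1
      have F1 := hsum (insert u C') (Finset.insert_subset hu hCV)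
        (by rw [Finset.card_insert_of_notMem huC, hC'card]; omega)
      have F2 := hsum (insert v C') (Finset.insert_subset hv hCV)
        (by rw [Finset.card_insert_of_notMem hvC, hC'card]; omega)
      rw [sum_powersetCard_insert huC] at F1
      rw [sum_powersetCard_insert hvC] at F2
      rw [Finset.sum_sub_distrib]
      linarith
    -- constancy on (r+1)-sets
    have const : ∀ d : ℕ, ∀ S ⊆ V, S.card = r + 1 → ∀ S' ⊆ V, S'.card = r + 1 →
        (S \ S').card = d → h S = h S' := by
      intro d
      induction d with
      | zero =>
        intro S hS hSc S' hS' hSc' hd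
        have : S ⊆ S' := by
          intro x hx
          by_contra hx'
          have : x ∈ S \ S' := Finset.mem_sdiff.2 ⟨hx, hx'⟩
          rw [Finset.card_eq_zero.1 hd] at this
          simp at this
        rw [Finset.eq_of_subset_of_card_le this (by omega)]
      | succ d IHd =>
        intro S hS hSc S' hS' hSc' hd
        have h1 : (S \ S').Nonempty := by
          rw [← Finset.card_pos, hd]; omega
        obtain ⟨x, hx⟩ := h1
        have hxS : x ∈ S := (Finset.mem_sdiff.1 hx).1
        have hxS' : x ∉ S' := (Finset.mem_sdiff.1 hx).2
        have h2 : (S' \ S).Nonempty := by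
          rw [← Finset.card_pos]
          by_contra h2
          push_neg at h2
          have : S' \ S = ∅ := Finset.card_eq_zero.1 (by omega)
          have hsub : S' ⊆ S := by
            intro y hy; by_contra hy'
            have : y ∈ S' \ S := Finset.mem_sdiff.2 ⟨hy, hy'⟩
            rw [Finset.card_eq_zero.1 (by omega : (S' \ S).card = 0)] at this
            simp at this
          have := Finset.eq_of_subset_of_card_le hsub (by omega)
          rw [this] at hx
          simp at hx
        obtain ⟨y, hy⟩ := h2
        have hyS' : y ∈ S' := (Finset.mem_sdiff.1 hy).1
        have hyS : y ∉ S := (Finset.mem_sdiff.1 hy).2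
        set T := S.erase x with hT
        have hTV : T ⊆ V := (Finset.erase_subset x S).trans hS
        have hTc : T.card = r := by rw [hT, Finset.card_erase_of_mem hxS, hSc]; omega
        have hxy : x ≠ y := fun h' => hyS (h' ▸ hxS)
        have hstep : h S = h (insert y T) := by
          rw [← Finset.insert_erase hxS]
          exact adj T hTV hTc x (hS hxS) y (hS' hyS') (Finset.notMem_erase x S)
            (fun hyT => hyS (Finset.erase_subset x S hyT)) hxy
        rw [hstep]
        refine IHd (insert y T) ?_ ?_ S' hS' hSc' ?_
        · exact Finset.insert_subset (hS' hyS') hTV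
        · rw [Finset.card_insert_of_notMem (fun hyT => hyS (Finset.erase_subset x S hyT)), hTc]
        · have : insert y T \ S' = (S \ S').erase x := by
            ext z
            simp only [hT, Finset.mem_sdiff, Finset.mem_insert, Finset.mem_erase]
            constructor
            · rintro ⟨rfl | ⟨hzx, hzS⟩, hz'⟩
              · exact absurd hyS' hz'
              · exact ⟨hzx, hzS, hz'⟩
            · rintro ⟨hzx, hzS, hzS'⟩
              exact ⟨Or.inr ⟨hzx, hzS⟩, hzS'⟩
          rw [this, Finset.card_erase_of_mem hx, hd]
          omega
    -- conclude
    intro S hS hScard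
    obtain ⟨C, hCV, hCcard⟩ := V.exists_subset_card_eq (n := k) (by omega)
    have hz := hsum C hCV hCcard
    have hall : ∀ S' ∈ C.powersetCard (r + 1), h S' = h S := by
      intro S' hS'
      obtain ⟨hS'C, hS'c⟩ := mem_powersetCard.1 hS'
      exact const _ S' (hS'C.trans hCV) hS'c S hS hScard rfl
    rw [Finset.sum_congr rfl hall, Finset.sum_const, nsmul_eq_mul] at hz
    have hne : (C.powersetCard (r + 1)).card ≠ 0 := by
      rw [card_powersetCard, hCcard]
      exact (Nat.choose_pos hk).ne'
    rcases mul_eq_zero.1 hz with h0 | h0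
    · exact absurd (by exact_mod_cast h0) hne
    · exact h0

open scoped Classical in
/-- If an `r`-uniform hypergraph on `2k` vertices (with `k ≥ r ≥ 1`) is such
that every `k`-vertex subset induces the same number of edges, then it is complete or empty. -/
theorem stmt3 (r k : ℕ) (hr : 0 < r) (hrk : r ≤ k)
    (G : Finset (Finset (Fin (2 * k)))) (hG : ∀ e ∈ G, e.card = r)
    (hconst : ∀ A ∈ (Finset.univ : Finset (Fin (2 * k))).powersetCard k,
      ∀ B ∈ (Finset.univ : Finset (Fin (2 * k))).powersetCard k,
        (G.filter (fun e => e ⊆ A)).card = (G.filter (fun e => e ⊆ B)).card) :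
    G = (Finset.univ : Finset (Fin (2 * k))).powersetCard r ∨ G = ∅ := by
  by_cases hGe : G = ∅
  · exact Or.inr hGe
  left
  have hVcard : (Finset.univ : Finset (Fin (2 * k))).card = 2 * k := by simp
  obtain ⟨B0, hB0V, hB0c⟩ :=
    (Finset.univ : Finset (Fin (2 * k))).exists_subset_card_eq (n := k) (by omega)
  set m : ℕ := (G.filter (fun e => e ⊆ B0)).card with hm
  have hchoose : (0 : ℚ) < (k.choose r : ℚ) := by
    exact_mod_cast Nat.choose_pos hrk
  set c : ℚ := (m : ℚ) / (k.choose r : ℚ) with hc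
  set h : Finset (Fin (2 * k)) → ℚ := fun S => (if S ∈ G then 1 else 0) - c with hdef
  have hkey : ∀ S ⊆ (Finset.univ : Finset (Fin (2 * k))), S.card = r → h S = 0 := by
    refine key r k hrk _ (by omega) h ?_
    intro C hCV hCc
    have hcount : (G.filter (fun e => e ⊆ C)).card = m := by
      rw [hm]
      exact hconst C (mem_powersetCard.2 ⟨hCV, hCc⟩) B0 (mem_powersetCard.2 ⟨hB0V, hB0c⟩)
    have hfilter : (C.powersetCard r).filter (fun S => S ∈ G) = G.filter (fun e => e ⊆ C) := by
      ext e
      simp only [Finset.mem_filter, mem_powersetCard]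
      constructor
      · rintro ⟨⟨h1, _⟩, h2⟩; exact ⟨h2, h1⟩
      · rintro ⟨h1, h2⟩; exact ⟨⟨h2, hG e h1⟩, h1⟩
    have hsum1 : ∑ S ∈ C.powersetCard r, (if S ∈ G then (1 : ℚ) else 0) = (m : ℚ) := by
      rw [Finset.sum_boole, hfilter, hcount]
    rw [hdef]
    simp only [Finset.sum_sub_distrib, hsum1, Finset.sum_const, nsmul_eq_mul,
      card_powersetCard, hCc, hc]
    field_simp
    simp
  have hc1 : c = 1 := by
    obtain ⟨e0, he0⟩ := Finset.nonempty_iff_ne_empty.2 hGe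
    have := hkey e0 (Finset.subset_univ _) (hG e0 he0)
    rw [hdef] at this
    simp only [he0, if_true] at this
    linarith
  ext e
  rw [mem_powersetCard]
  constructor
  · intro he
    exact ⟨Finset.subset_univ _, hG e he⟩
  · rintro ⟨-, hec⟩
    have := hkey e (Finset.subset_univ _) hec
    rw [hdef, hc1] at this
    by_contra hne
    simp only [hne, if_false] at this
    norm_num at this
end

section
/- Let $G$ be an $r$-uniform hypergraph on a vertex set $V$ of size $2k$, with $k \ge r$, such that every $k$-element subset of $V$ induces the same number of edges. Then for every $s \le k$, the quantity $\deg(S)$, the number of edges containing $S$, is constant over all $s$-element vertex subsets $S$. -/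
open Finset

open scoped Classical in
/-- Number of `k`-subsets of `A` containing a fixed `e ⊆ A`. -/
lemma aux_count_supersets {α : Type*} [DecidableEq α] (A e : Finset α) (he : e ⊆ A) (k : ℕ)
    (hk : e.card ≤ k) :
    ((A.powersetCard k).filter (fun P => e ⊆ P)).card
      = (A.card - e.card).choose (k - e.card) := by
  have hAe : (A \ e).card = A.card - e.card := card_sdiff_of_subset he
  rw [← hAe, ← Finset.card_powersetCard (k - e.card) (A \ e)]
  apply Finset.card_bij (fun P _ => P \ e)
  · intro P hP
    simp only [mem_filter, mem_powersetCard] at hP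
    rw [mem_powersetCard]
    exact ⟨sdiff_subset_sdiff hP.1.1 Subset.rfl, by rw [card_sdiff_of_subset hP.2, hP.1.2]⟩
  · intro P hP Q hQ h
    simp only [mem_filter, mem_powersetCard] at hP hQ
    rw [← sdiff_union_of_subset hP.2, ← sdiff_union_of_subset hQ.2, h]
  · intro Q hQ
    rw [mem_powersetCard] at hQ
    have hdisj : Disjoint Q e := disjoint_of_subset_left hQ.1 sdiff_disjoint
    refine ⟨Q ∪ e, ?_, ?_⟩
    · simp only [mem_filter, mem_powersetCard]
      have hcard : e.card ≤ A.card := card_le_card he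
      refine ⟨⟨union_subset (hQ.1.trans sdiff_subset) he, ?_⟩, subset_union_right⟩
      rw [card_union_of_disjoint hdisj, hQ.2]
      have : e.card ≤ A.card := hcard
      omega
    · rw [union_sdiff_right, Finset.sdiff_eq_self_iff_disjoint.2 hdisj]

open scoped Classical in
lemma aux_double_count (r k : ℕ) (hrk : r ≤ k)
    (G : Finset (Finset (Fin (2 * k)))) (hG : ∀ e ∈ G, e.card = r)
    (hconst : ∀ A ∈ (Finset.univ : Finset (Fin (2 * k))).powersetCard k,
      ∀ B ∈ (Finset.univ : Finset (Fin (2 * k))).powersetCard k,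
        (G.filter (fun e => e ⊆ A)).card = (G.filter (fun e => e ⊆ B)).card)
    (B0 : Finset (Fin (2 * k))) (hB0 : B0.card = k)
    (A : Finset (Fin (2 * k))) (hA : k ≤ A.card) :
    (G.filter (fun e => e ⊆ A)).card * (A.card - r).choose (k - r)
      = A.card.choose k * (G.filter (fun e => e ⊆ B0)).card := by
  have key : ∑ P ∈ A.powersetCard k, (G.filter (fun e => e ⊆ P)).card
      = A.card.choose k * (G.filter (fun e => e ⊆ B0)).card := by
    have hc : ∀ P ∈ A.powersetCard k,
        (G.filter (fun e => e ⊆ P)).card = (G.filter (fun e => e ⊆ B0)).card := by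
      intro P hP
      rw [mem_powersetCard] at hP
      exact hconst P (mem_powersetCard.2 ⟨subset_univ _, hP.2⟩)
        B0 (mem_powersetCard.2 ⟨subset_univ _, hB0⟩)
    rw [Finset.sum_congr rfl hc, Finset.sum_const, smul_eq_mul, Finset.card_powersetCard]
  rw [← key]
  have swap : ∑ P ∈ A.powersetCard k, (G.filter (fun e => e ⊆ P)).card
      = ∑ e ∈ G, ((A.powersetCard k).filter (fun P => e ⊆ P)).card := by
    simp only [Finset.card_filter]
    exact Finset.sum_comm
  rw [swap]
  rw [← Finset.sum_filter_add_sum_filter_not G (fun e => e ⊆ A)]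
  have h2 : ∑ e ∈ G.filter (fun e => ¬ e ⊆ A),
      ((A.powersetCard k).filter (fun P => e ⊆ P)).card = 0 := by
    refine Finset.sum_eq_zero fun e he => ?_
    rw [Finset.card_eq_zero, Finset.filter_eq_empty_iff]
    intro P hP
    rw [mem_powersetCard] at hP
    rw [mem_filter] at he
    exact fun hsub => he.2 (hsub.trans hP.1)
  have hc2 : ∀ e ∈ G.filter (fun e => e ⊆ A),
      ((A.powersetCard k).filter (fun P => e ⊆ P)).card = (A.card - r).choose (k - r) := by
    intro e he
    rw [mem_filter] at he
    have := aux_count_supersets A e he.2 k (by rw [hG e he.1]; exact hrk)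
    rw [this, hG e he.1]
  rw [h2, add_zero, Finset.sum_congr rfl hc2, Finset.sum_const, smul_eq_mul]

open scoped Classical in
lemma aux_cnt_const (r k : ℕ) (hrk : r ≤ k)
    (G : Finset (Finset (Fin (2 * k)))) (hG : ∀ e ∈ G, e.card = r)
    (hconst : ∀ A ∈ (Finset.univ : Finset (Fin (2 * k))).powersetCard k,
      ∀ B ∈ (Finset.univ : Finset (Fin (2 * k))).powersetCard k,
        (G.filter (fun e => e ⊆ A)).card = (G.filter (fun e => e ⊆ B)).card)
    (A B : Finset (Fin (2 * k))) (hA : k ≤ A.card) (hAB : A.card = B.card) :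
    (G.filter (fun e => e ⊆ A)).card = (G.filter (fun e => e ⊆ B)).card := by
  have hk2 : k ≤ (Finset.univ : Finset (Fin (2 * k))).card := by
    simp [Finset.card_univ]; omega
  obtain ⟨B0, -, hB0⟩ := Finset.exists_subset_card_eq hk2
  have h1 := aux_double_count r k hrk G hG hconst B0 hB0 A hA
  have h2 := aux_double_count r k hrk G hG hconst B0 hB0 B (hAB ▸ hA)
  rw [← hAB] at h2
  have hpos : 0 < (A.card - r).choose (k - r) :=
    Nat.choose_pos (by omega)
  exact Nat.eq_of_mul_eq_mul_right hpos (h1.trans h2.symm)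

open scoped Classical in
lemma aux_ie {α : Type*} [Fintype α] [DecidableEq α] (G : Finset (Finset α)) (S : Finset α) :
    ((G.filter (fun e => S ⊆ e)).card : ℤ) =
      ∑ T ∈ S.powerset, (-1 : ℤ) ^ T.card *
        ((G.filter (fun e => e ⊆ Finset.univ \ T)).card : ℤ) := by
  have hswap : ∑ T ∈ S.powerset, (-1 : ℤ) ^ T.card *
        ((G.filter (fun e => e ⊆ Finset.univ \ T)).card : ℤ)
      = ∑ e ∈ G, ∑ T ∈ S.powerset,
        (-1 : ℤ) ^ T.card * (if e ⊆ Finset.univ \ T then 1 else 0) := by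
    rw [Finset.sum_comm]
    refine Finset.sum_congr rfl fun T _ => ?_
    rw [Finset.card_filter]
    push_cast
    rw [Finset.mul_sum]
  rw [hswap, Finset.card_filter]
  push_cast
  refine Finset.sum_congr rfl fun e _ => ?_
  have hcond : ∀ T ∈ S.powerset,
      (-1 : ℤ) ^ T.card * (if e ⊆ Finset.univ \ T then 1 else 0)
        = if T ⊆ S \ e then (-1 : ℤ) ^ T.card else 0 := by
    intro T hT
    rw [Finset.mem_powerset] at hT
    have : (e ⊆ Finset.univ \ T) ↔ (T ⊆ S \ e) := by
      rw [Finset.subset_sdiff, Finset.subset_sdiff]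
      constructor
      · rintro ⟨-, hd⟩; exact ⟨hT, hd.symm⟩
      · rintro ⟨-, hd⟩; exact ⟨Finset.subset_univ _, hd.symm⟩
    simp only [this]
    split <;> simp
  rw [Finset.sum_congr rfl hcond]
  have hsub : (S \ e).powerset ⊆ S.powerset :=
    Finset.powerset_mono.2 (Finset.sdiff_subset)
  rw [← Finset.sum_subset hsub (fun T hT hT' => ?_)]
  · have : ∑ T ∈ (S \ e).powerset, (if T ⊆ S \ e then (-1 : ℤ) ^ T.card else 0)
        = ∑ T ∈ (S \ e).powerset, (-1 : ℤ) ^ T.card := by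
      refine Finset.sum_congr rfl fun T hT => ?_
      rw [Finset.mem_powerset] at hT
      rw [if_pos hT]
    rw [this, Finset.sum_powerset_neg_one_pow_card]
    by_cases h : S ⊆ e <;> simp [h, Finset.sdiff_eq_empty_iff_subset]
  · rw [Finset.mem_powerset] at hT'
    rw [if_neg hT']

open scoped Classical in
/-- If every `k`-vertex subset of an `r`-uniform hypergraph on `2k` vertices
(with `k ≥ r`) induces the same number of edges, then for every `s ≤ k` the degree
`deg(S)` (number of edges containing `S`) is constant over `s`-element vertex sets `S`. -/
theorem stmt4 (r k : ℕ) (hr : 0 < r) (hrk : r ≤ k)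
    (G : Finset (Finset (Fin (2 * k)))) (hG : ∀ e ∈ G, e.card = r)
    (hconst : ∀ A ∈ (Finset.univ : Finset (Fin (2 * k))).powersetCard k,
      ∀ B ∈ (Finset.univ : Finset (Fin (2 * k))).powersetCard k,
        (G.filter (fun e => e ⊆ A)).card = (G.filter (fun e => e ⊆ B)).card) :
    ∀ s ≤ k, ∀ S T : Finset (Fin (2 * k)), S.card = s → T.card = s →
      (G.filter (fun e => S ⊆ e)).card = (G.filter (fun e => T ⊆ e)).card := by
  intro s hs S T hS hT
  have hcu : (Finset.univ : Finset (Fin (2 * k))).card = 2 * k := by simp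
  have hch : ∀ i : ℕ, i ≤ k → ∃ C : Finset (Fin (2 * k)), C.card = i := by
    intro i hi
    obtain ⟨C, -, hC⟩ := Finset.exists_subset_card_eq
      (s := (Finset.univ : Finset (Fin (2 * k)))) (n := i) (by omega)
    exact ⟨C, hC⟩
  set f : ℕ → ℤ := fun i =>
    if h : i ≤ k then
      (-1 : ℤ) ^ i * ((G.filter (fun e => e ⊆ Finset.univ \ (hch i h).choose)).card : ℤ)
    else 0 with hf
  have hterm : ∀ W : Finset (Fin (2 * k)), W.card ≤ k →
      (-1 : ℤ) ^ W.card * ((G.filter (fun e => e ⊆ Finset.univ \ W)).card : ℤ) = f W.card := by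
    intro W hW
    rw [hf]
    simp only [dif_pos hW]
    congr 1
    have hCcard := (hch W.card hW).choose_spec
    have h1 : (Finset.univ \ W).card = 2 * k - W.card := by
      rw [Finset.card_sdiff_of_subset (Finset.subset_univ _), hcu]
    have h2 : (Finset.univ \ (hch W.card hW).choose).card = 2 * k - W.card := by
      rw [Finset.card_sdiff_of_subset (Finset.subset_univ _), hcu, hCcard]
    exact_mod_cast aux_cnt_const r k hrk G hG hconst _ _ (by omega) (h1.trans h2.symm)
  have key : ((G.filter (fun e => S ⊆ e)).card : ℤ) = ((G.filter (fun e => T ⊆ e)).card : ℤ) := by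
    rw [aux_ie, aux_ie]
    have hSsum : ∀ U ∈ S.powerset,
        (-1 : ℤ) ^ U.card * ((G.filter (fun e => e ⊆ Finset.univ \ U)).card : ℤ) = f U.card := by
      intro U hU
      rw [Finset.mem_powerset] at hU
      exact hterm U (le_trans (le_trans (Finset.card_le_card hU) hS.le) hs)
    have hTsum : ∀ U ∈ T.powerset,
        (-1 : ℤ) ^ U.card * ((G.filter (fun e => e ⊆ Finset.univ \ U)).card : ℤ) = f U.card := by
      intro U hU
      rw [Finset.mem_powerset] at hU
      exact hterm U (le_trans (le_trans (Finset.card_le_card hU) hT.le) hs)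
    rw [Finset.sum_congr rfl hSsum, Finset.sum_congr rfl hTsum,
      Finset.sum_powerset_apply_card, Finset.sum_powerset_apply_card, hS, hT]
  exact_mod_cast key
end

section
/- Consider a red-blue colouring of the edges of the complete graph $K_n$ with at least $\varepsilon n^2$ blue edges and at least $\varepsilon n^2$ red edges, where $\varepsilon > 0$ is a constant. Then, for $n$ sufficiently large, there are at least $c(\varepsilon) n^4$ ordered 4-tuples of distinct vertices $(v, w, v', w')$ such that the path $v w v' w'$ is alternating, i.e., the edges $vw$ and $v'w'$ have one colour and the edge $wv'$ has the other colour, for some constant $c(\varepsilon) > 0$ depending only on $\varepsilon$. -/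
open Finset

section
variable {n : ℕ} (col : Sym2 (Fin n) → Bool)

def colG (c : Bool) : SimpleGraph (Fin n) where
  Adj u v := u ≠ v ∧ col s(u, v) = c
  symm := by
    constructor
    intro u v ⟨h1, h2⟩
    exact ⟨h1.symm, by rwa [Sym2.eq_swap]⟩
  loopless := by constructor; intro u ⟨h, _⟩; exact h rfl

instance (c : Bool) : DecidableRel (colG col c).Adj :=
  fun u v => inferInstanceAs (Decidable (u ≠ v ∧ col s(u, v) = c))

lemma colG_edgeFinset (c : Bool) :
    (univ.filter (fun e : Sym2 (Fin n) => ¬ e.IsDiag ∧ col e = c)) = (colG col c).edgeFinset := by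
  ext e
  induction e using Sym2.ind with
  | _ x y =>
    simp only [SimpleGraph.mem_edgeFinset, SimpleGraph.mem_edgeSet, mem_filter, mem_univ, true_and,
      Sym2.mk_isDiag_iff]
    exact Iff.rfl

lemma colG_degree_le (c : Bool) (w : Fin n) : (colG col c).degree w ≤ n := by
  classical
  rw [SimpleGraph.degree]
  calc ((colG col c).neighborFinset w).card ≤ (univ : Finset (Fin n)).card :=
        Finset.card_le_card (Finset.subset_univ _)
    _ = n := by rw [Finset.card_univ, Fintype.card_fin]

lemma pairs_card_le_snd (S T : Finset (Fin n)) (c : Bool) :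
    (((S ×ˢ T).filter fun p => p.1 ≠ p.2 ∧ col s(p.1, p.2) = c)).card
      ≤ ∑ w ∈ T, (colG col c).degree w := by
  classical
  rw [Finset.card_eq_sum_card_fiberwise (f := Prod.snd) (t := T)
    (fun p hp => (Finset.mem_product.mp (Finset.mem_filter.mp hp).1).2)]
  refine Finset.sum_le_sum fun w hw => ?_
  refine Finset.card_le_card_of_injOn Prod.fst ?_ ?_
  · intro p hp
    simp only [Finset.mem_coe, Finset.mem_filter] at hp
    obtain ⟨⟨hp1, hc⟩, hw'⟩ := hp
    rw [Finset.mem_coe, SimpleGraph.mem_neighborFinset]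
    subst hw'
    exact ((colG col c).adj_symm ⟨hc.1, hc.2⟩)
  · intro p hp q hq h
    simp only [Finset.mem_coe, Finset.mem_filter] at hp hq
    exact Prod.ext h (hp.2.trans hq.2.symm)

lemma pairs_card_le_fst (S T : Finset (Fin n)) (c : Bool) :
    (((S ×ˢ T).filter fun p => p.1 ≠ p.2 ∧ col s(p.1, p.2) = c)).card
      ≤ ∑ w ∈ S, (colG col c).degree w := by
  classical
  rw [Finset.card_eq_sum_card_fiberwise (f := Prod.fst) (t := S)
    (fun p hp => (Finset.mem_product.mp (Finset.mem_filter.mp hp).1).1)]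
  refine Finset.sum_le_sum fun w hw => ?_
  refine Finset.card_le_card_of_injOn Prod.snd ?_ ?_
  · intro p hp
    simp only [Finset.mem_coe, Finset.mem_filter] at hp
    obtain ⟨⟨hp1, hc⟩, hw'⟩ := hp
    rw [Finset.mem_coe, SimpleGraph.mem_neighborFinset]
    subst hw'
    exact ⟨hc.1, hc.2⟩
  · intro p hp q hq h
    simp only [Finset.mem_coe, Finset.mem_filter] at hp hq
    exact Prod.ext (hp.2.trans hq.2.symm) h

lemma arith_contra (ε : ℝ) (r : ℝ) (hε1 : 0 < ε) (hε2 : ε ≤ 1/8) (hr : 0 < r)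
    (hh : (2048:ℝ) ≤ ε ^ 4 * r)
    (hkey : ((ε - 2*(ε^2/16)) * r) * ((ε - 2*(ε^2/16)) * r) ≤ 2 * (ε^2/16) * r * r + r) :
    False := by
  have s2 : (63/64 * ε) * r ≤ (ε - 2 * (ε^2/16)) * r := by nlinarith [hr.le]
  have s3 : ((63/64 * ε) * r) * ((63/64 * ε) * r)
      ≤ ((ε - 2 * (ε^2/16)) * r) * ((ε - 2 * (ε^2/16)) * r) := by
    have h0 : 0 ≤ (63/64 * ε) * r := by positivity
    exact mul_le_mul s2 s2 h0 (le_trans h0 s2)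
  have s4 : ε ^ 2 * r ≤ 2 := by nlinarith [le_trans s3 hkey, hr, mul_pos hr hr]
  nlinarith [hh, s4, hε1, hε2, sq_nonneg ε]

/-- The set of `δn`-mixed vertices. -/
noncomputable def mixedSet (δ : ℝ) : Finset (Fin n) :=
  by classical exact univ.filter (fun w => δ * n ≤ ((colG col true).degree w : ℝ) ∧
    δ * n ≤ ((colG col false).degree w : ℝ))

lemma mixed_card (ε : ℝ) (hε1 : 0 < ε) (hε2 : ε ≤ 1/8)
    (hn : (2048 / ε ^ 4 : ℝ) ≤ n)
    (hb : ε * n ^ 2 ≤ (((colG col true).edgeFinset.card : ℕ) : ℝ))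
    (hr : ε * n ^ 2 ≤ (((colG col false).edgeFinset.card : ℕ) : ℝ)) :
    (ε ^ 2 / 16) * n ≤ ((mixedSet col (ε ^ 2 / 16)).card : ℝ) := by
  classical
  set δ : ℝ := ε ^ 2 / 16 with hδ
  have hδpos : 0 < δ := by positivity
  have h2δ : 2 * δ ≤ ε := by rw [hδ]; nlinarith
  have hrn : (0:ℝ) < n := lt_of_lt_of_le (by positivity) hn
  by_contra hcon
  push_neg at hcon
  set M : Finset (Fin n) := mixedSet col δ with hM
  set R : Finset (Fin n) := univ.filter (fun w => ((colG col true).degree w : ℝ) < δ * n) with hR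
  set B : Finset (Fin n) := univ.filter (fun w => ((colG col false).degree w : ℝ) < δ * n) with hB
  -- total degree sums
  have hsum : ∀ c : Bool, ε * n ^ 2 ≤ ((∑ w, (colG col c).degree w : ℕ) : ℝ) := by
    intro c
    rw [SimpleGraph.sum_degrees_eq_twice_card_edges]
    have : (((colG col c).edgeFinset.card : ℕ) : ℝ) ≤ ((2 * (colG col c).edgeFinset.card : ℕ) : ℝ) := by
      push_cast; linarith [Nat.cast_nonneg (α := ℝ) (colG col c).edgeFinset.card]
    cases c
    · exact le_trans hr this
    · exact le_trans hb this
  -- cover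
  have hcover : (univ : Finset (Fin n)) ⊆ M ∪ R ∪ B := by
    intro w _
    simp only [Finset.mem_union, hM, hR, hB, mixedSet, Finset.mem_filter, Finset.mem_univ,
      true_and]
    by_cases h1 : ((colG col true).degree w : ℝ) < δ * n
    · exact Or.inl (Or.inr h1)
    · by_cases h2 : ((colG col false).degree w : ℝ) < δ * n
      · exact Or.inr h2
      · exact Or.inl (Or.inl ⟨le_of_not_gt h1, le_of_not_gt h2⟩)
  have hsplit : ∀ c : Bool, (∑ w, (colG col c).degree w : ℕ)
      ≤ ∑ w ∈ M, (colG col c).degree w + ∑ w ∈ R, (colG col c).degree w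
        + ∑ w ∈ B, (colG col c).degree w := by
    intro c
    calc (∑ w, (colG col c).degree w : ℕ) ≤ ∑ w ∈ M ∪ R ∪ B, (colG col c).degree w :=
          Finset.sum_le_sum_of_subset hcover
      _ ≤ ∑ w ∈ M ∪ R, (colG col c).degree w + ∑ w ∈ B, (colG col c).degree w := by
          have := Finset.sum_union_inter (s₁ := M ∪ R) (s₂ := B) (f := fun w => (colG col c).degree w)
          omega
      _ ≤ _ := by
          have := Finset.sum_union_inter (s₁ := M) (s₂ := R) (f := fun w => (colG col c).degree w)
          omega
  -- pointwise bounds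
  have hMb : ∀ c : Bool, ((∑ w ∈ M, (colG col c).degree w : ℕ) : ℝ) ≤ δ * n * n := by
    intro c
    have h1 : (∑ w ∈ M, (colG col c).degree w : ℕ) ≤ M.card * n :=
      le_trans (Finset.sum_le_card_nsmul M _ n (fun w _ => colG_degree_le col c w)) (by simp)
    calc ((∑ w ∈ M, (colG col c).degree w : ℕ) : ℝ) ≤ ((M.card * n : ℕ) : ℝ) := by exact_mod_cast h1
      _ ≤ δ * n * n := by push_cast; nlinarith [hcon]
  have hcards : ∀ S : Finset (Fin n), ((S.card : ℕ) : ℝ) ≤ n := by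
    intro S
    have : S.card ≤ n := le_trans (Finset.card_le_card (Finset.subset_univ S)) (by simp)
    exact_mod_cast this
  have hRsmall : ((∑ w ∈ R, (colG col true).degree w : ℕ) : ℝ) ≤ δ * n * R.card := by
    rw [Nat.cast_sum]
    calc ∑ w ∈ R, ((colG col true).degree w : ℝ) ≤ ∑ w ∈ R, δ * n := by
          refine Finset.sum_le_sum fun w hw => ?_
          rw [hR] at hw
          exact le_of_lt (Finset.mem_filter.mp hw).2
      _ = δ * n * R.card := by rw [Finset.sum_const, nsmul_eq_mul]; ring
  have hBsmall : ((∑ w ∈ B, (colG col false).degree w : ℕ) : ℝ) ≤ δ * n * B.card := by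
    rw [Nat.cast_sum]
    calc ∑ w ∈ B, ((colG col false).degree w : ℝ) ≤ ∑ w ∈ B, δ * n := by
          refine Finset.sum_le_sum fun w hw => ?_
          rw [hB] at hw
          exact le_of_lt (Finset.mem_filter.mp hw).2
      _ = δ * n * B.card := by rw [Finset.sum_const, nsmul_eq_mul]; ring
  have hgen : ∀ (S : Finset (Fin n)) (c : Bool),
      ((∑ w ∈ S, (colG col c).degree w : ℕ) : ℝ) ≤ (S.card : ℝ) * n := by
    intro S c
    have h1 : (∑ w ∈ S, (colG col c).degree w : ℕ) ≤ S.card * n :=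
      le_trans (Finset.sum_le_card_nsmul S _ n (fun w _ => colG_degree_le col c w)) (by simp)
    exact_mod_cast h1
  -- lower bounds on B and R
  have hBlow : (ε - 2*δ) * n ≤ (B.card : ℝ) := by
    have h0 := hsum true
    have h1 := hsplit true
    have h2 : ((∑ w, (colG col true).degree w : ℕ) : ℝ)
        ≤ δ * n * n + δ * n * R.card + (B.card : ℝ) * n := by
      have := hMb true
      have := hgen B true
      have hcast : ((∑ w ∈ M, (colG col true).degree w + ∑ w ∈ R, (colG col true).degree w
          + ∑ w ∈ B, (colG col true).degree w : ℕ) : ℝ)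
          = ((∑ w ∈ M, (colG col true).degree w : ℕ) : ℝ)
            + ((∑ w ∈ R, (colG col true).degree w : ℕ) : ℝ)
            + ((∑ w ∈ B, (colG col true).degree w : ℕ) : ℝ) := by push_cast; ring
      have h3 : ((∑ w, (colG col true).degree w : ℕ) : ℝ)
          ≤ ((∑ w ∈ M, (colG col true).degree w + ∑ w ∈ R, (colG col true).degree w
          + ∑ w ∈ B, (colG col true).degree w : ℕ) : ℝ) := by exact_mod_cast h1
      rw [hcast] at h3
      linarith [hRsmall]
    have hRn := hcards R
    nlinarith [h0, h2, Nat.cast_nonneg (α := ℝ) B.card]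
  have hRlow : (ε - 2*δ) * n ≤ (R.card : ℝ) := by
    have h0 := hsum false
    have h1 := hsplit false
    have h2 : ((∑ w, (colG col false).degree w : ℕ) : ℝ)
        ≤ δ * n * n + δ * n * B.card + (R.card : ℝ) * n := by
      have := hMb false
      have := hgen R false
      have hcast : ((∑ w ∈ M, (colG col false).degree w + ∑ w ∈ R, (colG col false).degree w
          + ∑ w ∈ B, (colG col false).degree w : ℕ) : ℝ)
          = ((∑ w ∈ M, (colG col false).degree w : ℕ) : ℝ)
            + ((∑ w ∈ R, (colG col false).degree w : ℕ) : ℝ)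
            + ((∑ w ∈ B, (colG col false).degree w : ℕ) : ℝ) := by push_cast; ring
      have h3 : ((∑ w, (colG col false).degree w : ℕ) : ℝ)
          ≤ ((∑ w ∈ M, (colG col false).degree w + ∑ w ∈ R, (colG col false).degree w
          + ∑ w ∈ B, (colG col false).degree w : ℕ) : ℝ) := by exact_mod_cast h1
      rw [hcast] at h3
      linarith [hBsmall]
    have hBn := hcards B
    nlinarith [h0, h2, Nat.cast_nonneg (α := ℝ) R.card]
  -- the bipartite pair count
  set X : Finset (Fin n × Fin n) := (B ×ˢ R).filter (fun p => p.1 ≠ p.2) with hX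
  have hXlow : (B.card : ℝ) * R.card ≤ (X.card : ℝ) + B.card := by
    have h1 := Finset.card_filter_add_card_filter_not
      (s := B ×ˢ R) (p := fun p => p.1 ≠ p.2)
    have h2 : ((B ×ˢ R).filter (fun p => ¬ p.1 ≠ p.2)).card ≤ B.card := by
      refine Finset.card_le_card_of_injOn Prod.fst ?_ ?_
      · intro p hp
        simp only [Finset.mem_coe, Finset.mem_filter, Finset.mem_product] at hp
        exact hp.1.1
      · intro p hp q hq h
        simp only [Finset.mem_coe, Finset.mem_filter, not_not] at hp hq
        exact Prod.ext h (by rw [← hp.2, ← hq.2, h])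
    rw [← hX] at h1
    have h3 : X.card + B.card ≥ (B ×ˢ R).card := by omega
    rw [Finset.card_product] at h3
    exact_mod_cast h3
  have hXsplit : X.card ≤ ((B ×ˢ R).filter (fun p => p.1 ≠ p.2 ∧ col s(p.1, p.2) = true)).card
      + ((B ×ˢ R).filter (fun p => p.1 ≠ p.2 ∧ col s(p.1, p.2) = false)).card := by
    have h1 := Finset.card_filter_add_card_filter_not
      (s := X) (p := fun p => col s(p.1, p.2) = true)
    have e1 : X.filter (fun p => col s(p.1, p.2) = true)
        = (B ×ˢ R).filter (fun p => p.1 ≠ p.2 ∧ col s(p.1, p.2) = true) := by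
      rw [hX, Finset.filter_filter]
    have e2 : X.filter (fun p => ¬ col s(p.1, p.2) = true)
        = (B ×ˢ R).filter (fun p => p.1 ≠ p.2 ∧ col s(p.1, p.2) = false) := by
      rw [hX, Finset.filter_filter]
      exact Finset.filter_congr (fun p _ => by simp)
    rw [e1, e2] at h1
    omega
  -- upper bounds on X
  have hXt := pairs_card_le_snd col B R true
  have hXf := pairs_card_le_fst col B R false
  have hXub : (X.card : ℝ) ≤ 2 * δ * n * n := by
    have c1 : (((B ×ˢ R).filter (fun p => p.1 ≠ p.2 ∧ col s(p.1, p.2) = true)).card : ℝ)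
        ≤ δ * n * R.card := le_trans (by exact_mod_cast hXt) hRsmall
    have c2 : (((B ×ˢ R).filter (fun p => p.1 ≠ p.2 ∧ col s(p.1, p.2) = false)).card : ℝ)
        ≤ δ * n * B.card := le_trans (by exact_mod_cast hXf) hBsmall
    have c3 : (X.card : ℝ) ≤ (((B ×ˢ R).filter (fun p => p.1 ≠ p.2 ∧ col s(p.1, p.2) = true)).card : ℝ)
        + (((B ×ˢ R).filter (fun p => p.1 ≠ p.2 ∧ col s(p.1, p.2) = false)).card : ℝ) := by
      exact_mod_cast hXsplit
    have d1 : δ * n * (R.card : ℝ) ≤ δ * n * n :=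
      mul_le_mul_of_nonneg_left (hcards R) (by positivity)
    have d2 : δ * n * (B.card : ℝ) ≤ δ * n * n :=
      mul_le_mul_of_nonneg_left (hcards B) (by positivity)
    linarith
  -- contradiction
  have hp : ((ε - 2*δ) * n) * ((ε - 2*δ) * n) ≤ (B.card : ℝ) * R.card := by
    have hnn : 0 ≤ (ε - 2*δ) * n := mul_nonneg (by linarith) (Nat.cast_nonneg _)
    exact mul_le_mul hBlow hRlow hnn (Nat.cast_nonneg _)
  have hh : (2048 : ℝ) ≤ ε ^ 4 * n := by
    rw [div_le_iff₀ (by positivity)] at hn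
    linarith [hn]
  have hkey : ((ε - 2*δ) * n) * ((ε - 2*δ) * n) ≤ 2 * δ * n * n + n := by
    have := hcards B
    linarith [hp, hXlow, hXub]
  rw [hδ] at hkey
  exact arith_contra ε n hε1 hε2 hrn hh hkey

lemma arith2 (x y : ℝ) (hx : 2 ≤ x) (hy : 0 < y) (h8 : 8 * y ≤ x * x) :
    x ^ 4 / 16 ≤ (x * x - y) * ((x - 1) * (x - 1) - y) := by
  nlinarith [sq_nonneg (x - 2), sq_nonneg x, mul_pos hy hy, sq_nonneg (x*x - 8*y)]

lemma tuple_bound (δ : ℝ) (hδ : 0 < δ) (hδ1 : δ ≤ 1) (hn : (8:ℝ) / δ ^ 2 ≤ n)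
    (hM : δ * n ≤ ((mixedSet col δ).card : ℝ)) :
    δ ^ 4 / 16 * n ^ 4 ≤ (((univ : Finset (Fin n × Fin n × Fin n × Fin n)).filter
      (fun t => ([t.1, t.2.1, t.2.2.1, t.2.2.2] : List (Fin n)).Nodup ∧
        col s(t.1, t.2.1) = col s(t.2.2.1, t.2.2.2) ∧
        col s(t.2.1, t.2.2.1) ≠ col s(t.1, t.2.1))).card : ℝ) := by
  classical
  set M : Finset (Fin n) := mixedSet col δ with hMdef
  set T : Finset (Fin n × Fin n × Fin n × Fin n) :=
    (univ.filter (fun t => ([t.1, t.2.1, t.2.2.1, t.2.2.2] : List (Fin n)).Nodup ∧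
      col s(t.1, t.2.1) = col s(t.2.2.1, t.2.2.2) ∧
      col s(t.2.1, t.2.2.1) ≠ col s(t.1, t.2.1))) with hT
  have hr0 : (0:ℝ) < n := lt_of_lt_of_le (by positivity) hn
  have hn8 : (8:ℝ) ≤ δ ^ 2 * n := by
    rw [div_le_iff₀ (by positivity)] at hn
    linarith
  have hK2 : (2:ℝ) ≤ δ * n := by nlinarith [mul_nonneg hδ.le hr0.le]
  set P : Finset (Fin n × Fin n) := (M ×ˢ M).filter (fun p => p.1 ≠ p.2) with hP
  -- degrees of mixed vertices
  have hdeg : ∀ w ∈ M, ∀ c : Bool, δ * n ≤ ((colG col c).degree w : ℝ) := by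
    intro w hw c
    rw [hMdef, mixedSet, Finset.mem_filter] at hw
    cases c
    · exact hw.2.2
    · exact hw.2.1
  -- fiberwise lower bound
  have key : ∀ p ∈ P, ((δ * n - 1) * (δ * n - 1) - n : ℝ)
      ≤ ((T.filter (fun t => (t.2.1, t.2.2.1) = p)).card : ℝ) := by
    rintro ⟨w, v'⟩ hp
    rw [hP, Finset.mem_filter, Finset.mem_product] at hp
    obtain ⟨⟨hwM, hv'M⟩, hne⟩ := hp
    set c : Bool := col s(w, v') with hc
    set Sv : Finset (Fin n) := ((colG col (!c)).neighborFinset w).erase v' with hSv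
    set Sw : Finset (Fin n) := ((colG col (!c)).neighborFinset v').erase w with hSw
    set D : Finset (Fin n × Fin n) := (Sv ×ˢ Sw).filter (fun q => q.1 ≠ q.2) with hD
    have hinj : D.card ≤ (T.filter (fun t => (t.2.1, t.2.2.1) = (w, v'))).card := by
      refine Finset.card_le_card_of_injOn (fun q => (q.1, w, v', q.2)) ?_ ?_
      · rintro ⟨v, w'⟩ hq
        rw [hD, Finset.mem_coe, Finset.mem_filter, Finset.mem_product] at hq
        obtain ⟨⟨hv, hw'⟩, hvw'⟩ := hq
        rw [hSv, Finset.mem_erase, SimpleGraph.mem_neighborFinset] at hv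
        rw [hSw, Finset.mem_erase, SimpleGraph.mem_neighborFinset] at hw'
        have hvv' := hv.1
        have hwv := hv.2.1
        have hcv := hv.2.2
        have hw'w := hw'.1
        have hv'w' := hw'.2.1
        have hcw' := hw'.2.2
        rw [Finset.mem_coe, Finset.mem_filter]
        refine ⟨Finset.mem_filter.mpr ⟨Finset.mem_univ _, ?_, ?_, ?_⟩, rfl⟩
        · have hvw : v ≠ w := fun h => hwv h.symm
          have hww' : w ≠ w' := fun h => hw'w h.symm
          have hne' : w ≠ v' := hne
          simp only [List.nodup_cons, List.mem_cons, List.not_mem_nil, or_false,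
            List.nodup_nil, and_true, not_or]
          exact ⟨⟨hvw, hvv', hvw'⟩, ⟨hne', hww'⟩, hv'w', not_false⟩
        · have e1 : col s(v, w) = !c := by rw [Sym2.eq_swap]; exact hcv
          rw [e1, hcw']
        · have e1 : col s(v, w) = !c := by rw [Sym2.eq_swap]; exact hcv
          rw [e1, ← hc]
          simp
      · rintro ⟨v, w'⟩ hq ⟨v2, w2⟩ hq2 h
        simp only [Prod.mk.injEq] at h
        exact Prod.ext h.1 h.2.2.2
    -- size of D
    have hSvlow : δ * n - 1 ≤ (Sv.card : ℝ) := by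
      have h1 : (colG col (!c)).degree w - 1 ≤ Sv.card := by
        rw [hSv]
        exact (Finset.pred_card_le_card_erase)
      have h2 := hdeg w hwM (!c)
      have h3 : ((colG col (!c)).degree w : ℝ) - 1 ≤ (Sv.card : ℝ) := by
        have : (colG col (!c)).degree w ≤ Sv.card + 1 := by omega
        have := (Nat.cast_le (α := ℝ)).mpr this
        push_cast at this
        linarith
      linarith
    have hSwlow : δ * n - 1 ≤ (Sw.card : ℝ) := by
      have h1 : (colG col (!c)).degree v' - 1 ≤ Sw.card := by
        rw [hSw]
        exact (Finset.pred_card_le_card_erase)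
      have h2 := hdeg v' hv'M (!c)
      have h3 : ((colG col (!c)).degree v' : ℝ) - 1 ≤ (Sw.card : ℝ) := by
        have : (colG col (!c)).degree v' ≤ Sw.card + 1 := by omega
        have := (Nat.cast_le (α := ℝ)).mpr this
        push_cast at this
        linarith
      linarith
    have hSvn : (Sv.card : ℝ) ≤ n := by
      have : Sv.card ≤ n := le_trans (Finset.card_le_card (Finset.subset_univ Sv)) (by simp)
      exact_mod_cast this
    have hDlow : (Sv.card : ℝ) * Sw.card - Sv.card ≤ (D.card : ℝ) := by
      have h1 := Finset.card_filter_add_card_filter_not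
        (s := Sv ×ˢ Sw) (p := fun q => q.1 ≠ q.2)
      rw [← hD] at h1
      have h2 : ((Sv ×ˢ Sw).filter (fun q => ¬ q.1 ≠ q.2)).card ≤ Sv.card := by
        refine Finset.card_le_card_of_injOn Prod.fst ?_ ?_
        · intro q hq
          exact (Finset.mem_product.mp (Finset.mem_filter.mp hq).1).1
        · intro q hq q2 hq2 h
          simp only [Finset.mem_coe, Finset.mem_filter, not_not] at hq hq2
          exact Prod.ext h (by rw [← hq.2, ← hq2.2, h])
      have h3 : Sv.card * Sw.card ≤ D.card + Sv.card := by
        rw [← Finset.card_product Sv Sw]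
        omega
      have h4 : ((Sv.card * Sw.card : ℕ) : ℝ) ≤ ((D.card + Sv.card : ℕ) : ℝ) := by
        exact_mod_cast h3
      push_cast at h4
      linarith
    have hprod : (δ * n - 1) * (δ * n - 1) ≤ (Sv.card : ℝ) * Sw.card :=
      mul_le_mul hSvlow hSwlow (by linarith) (Nat.cast_nonneg _)
    have : ((δ * n - 1) * (δ * n - 1) - n : ℝ) ≤ (D.card : ℝ) := by linarith
    exact le_trans this (by exact_mod_cast hinj)
  -- sum over P
  have hfib : T.card = ∑ p ∈ (univ : Finset (Fin n × Fin n)),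
      (T.filter (fun t => (t.2.1, t.2.2.1) = p)).card :=
    Finset.card_eq_sum_card_fiberwise (fun t _ => Finset.mem_univ _)
  have hsumP : ∑ p ∈ P, (T.filter (fun t => (t.2.1, t.2.2.1) = p)).card ≤ T.card := by
    rw [hfib]
    exact Finset.sum_le_sum_of_subset (Finset.subset_univ P)
  have hTlow : (P.card : ℝ) * ((δ * n - 1) * (δ * n - 1) - n) ≤ (T.card : ℝ) := by
    calc (P.card : ℝ) * ((δ * n - 1) * (δ * n - 1) - n)
        = P.card • ((δ * n - 1) * (δ * n - 1) - n : ℝ) := by rw [nsmul_eq_mul]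
      _ ≤ ∑ p ∈ P, ((T.filter (fun t => (t.2.1, t.2.2.1) = p)).card : ℝ) :=
          Finset.card_nsmul_le_sum P _ _ key
      _ = ((∑ p ∈ P, (T.filter (fun t => (t.2.1, t.2.2.1) = p)).card : ℕ) : ℝ) := by
          rw [Nat.cast_sum]
      _ ≤ (T.card : ℝ) := by exact_mod_cast hsumP
  -- size of P
  have hPlow : (δ * n) * (δ * n) - n ≤ (P.card : ℝ) := by
    have h1 := Finset.card_filter_add_card_filter_not
      (s := M ×ˢ M) (p := fun p => p.1 ≠ p.2)
    rw [← hP] at h1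
    have h2 : ((M ×ˢ M).filter (fun q => ¬ q.1 ≠ q.2)).card ≤ M.card := by
      refine Finset.card_le_card_of_injOn Prod.fst ?_ ?_
      · intro q hq
        exact (Finset.mem_product.mp (Finset.mem_filter.mp hq).1).1
      · intro q hq q2 hq2 h
        simp only [Finset.mem_coe, Finset.mem_filter, not_not] at hq hq2
        exact Prod.ext h (by rw [← hq.2, ← hq2.2, h])
    have h3 : M.card * M.card ≤ P.card + M.card := by
      rw [← Finset.card_product M M]
      omega
    have h4 : ((M.card * M.card : ℕ) : ℝ) ≤ ((P.card + M.card : ℕ) : ℝ) := by exact_mod_cast h3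
    have hMn : (M.card : ℝ) ≤ n := by
      have : M.card ≤ n := le_trans (Finset.card_le_card (Finset.subset_univ M)) (by simp)
      exact_mod_cast this
    have h5 : (δ * n) * (δ * n) ≤ (M.card : ℝ) * M.card :=
      mul_le_mul hM hM (by positivity) (Nat.cast_nonneg _)
    push_cast at h4
    linarith
  -- finish
  have hβ : (0:ℝ) ≤ (δ * n - 1) * (δ * n - 1) - n := by nlinarith
  have hfinal : ((δ * n) * (δ * n) - n) * ((δ * n - 1) * (δ * n - 1) - n) ≤ (T.card : ℝ) :=
    le_trans (mul_le_mul_of_nonneg_right hPlow hβ) hTlow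
  have := arith2 (δ * n) n hK2 hr0 (by nlinarith)
  calc δ ^ 4 / 16 * n ^ 4 = (δ * n) ^ 4 / 16 := by ring
    _ ≤ ((δ * n) * (δ * n) - n) * ((δ * n - 1) * (δ * n - 1) - n) := this
    _ ≤ (T.card : ℝ) := hfinal


/-- For every `ε > 0` there is `c > 0` such that for all sufficiently large `n`:
any red-blue colouring of the edges of `K_n` with at least `ε n²` edges of each colour has
at least `c n⁴` ordered 4-tuples of distinct vertices `(v, w, v', w')` such that the path
`v w v' w'` is alternating (edges `vw` and `v'w'` have one colour, `wv'` has the other). -/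
theorem stmt6 (ε : ℝ) (hε : 0 < ε) :
    ∃ c : ℝ, 0 < c ∧ ∃ N : ℕ, ∀ n ≥ N, ∀ col : Sym2 (Fin n) → Bool,
      ε * n ^ 2 ≤ (((Finset.univ : Finset (Sym2 (Fin n))).filter
          (fun e => ¬ e.IsDiag ∧ col e = true)).card : ℝ) →
      ε * n ^ 2 ≤ (((Finset.univ : Finset (Sym2 (Fin n))).filter
          (fun e => ¬ e.IsDiag ∧ col e = false)).card : ℝ) →
      c * n ^ 4 ≤ (((Finset.univ : Finset (Fin n × Fin n × Fin n × Fin n)).filter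
          (fun t => ([t.1, t.2.1, t.2.2.1, t.2.2.2] : List (Fin n)).Nodup ∧
            col s(t.1, t.2.1) = col s(t.2.2.1, t.2.2.2) ∧
            col s(t.2.1, t.2.2.1) ≠ col s(t.1, t.2.1))).card : ℝ) := by
  classical
  set ε' : ℝ := min ε (1/8) with hε'def
  have hε'1 : 0 < ε' := lt_min hε (by norm_num)
  have hε'2 : ε' ≤ 1/8 := min_le_right _ _
  have hε'3 : ε' ≤ ε := min_le_left _ _
  set δ : ℝ := ε' ^ 2 / 16 with hδdef
  have hδ : 0 < δ := by positivity
  have hδ1 : δ ≤ 1 := by rw [hδdef]; nlinarith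
  refine ⟨δ ^ 4 / 16, by positivity, max ⌈(2048:ℝ)/ε'^4⌉₊ ⌈(8:ℝ)/δ^2⌉₊, ?_⟩
  intro n hn col hb hr
  have hncastmax : (max ⌈(2048:ℝ)/ε'^4⌉₊ ⌈(8:ℝ)/δ^2⌉₊ : ℕ) ≤ n := hn
  have hn1 : (2048:ℝ)/ε'^4 ≤ n := by
    refine le_trans (Nat.le_ceil _) ?_
    exact_mod_cast le_trans (le_max_left _ _) hncastmax
  have hn2 : (8:ℝ)/δ^2 ≤ n := by
    refine le_trans (Nat.le_ceil _) ?_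
    exact_mod_cast le_trans (le_max_right _ _) hncastmax
  have hsq : (0:ℝ) ≤ (n:ℝ)^2 := by positivity
  have hb' : ε' * n ^ 2 ≤ (((colG col true).edgeFinset.card : ℕ) : ℝ) := by
    rw [← colG_edgeFinset]
    exact le_trans (mul_le_mul_of_nonneg_right hε'3 hsq) hb
  have hr' : ε' * n ^ 2 ≤ (((colG col false).edgeFinset.card : ℕ) : ℝ) := by
    rw [← colG_edgeFinset]
    exact le_trans (mul_le_mul_of_nonneg_right hε'3 hsq) hr
  have hmix := mixed_card col ε' hε'1 hε'2 hn1 hb' hr'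
  exact tuple_bound col δ hδ hδ1 hn2 hmix

end
end

section
/- Let $A$ and $B$ be disjoint finite sets with $|A|, |B| \ge 5$, let $M \subseteq A \times B$ be a set of pairwise disjoint pairs, and let $G_{A,B,M}$ be the 3-uniform hypergraph on $A \cup B$ whose edges are the triples intersecting both $A$ and $B$, except those triples containing a pair from $M$. Then for any six distinct vertices $x, x', y, y', z, z'$ of $G_{A,B,M}$, with edge indicators $a$, we have $a_{xyz} - a_{xyz'} - a_{xy'z} - a_{x'yz} + a_{xy'z'} + a_{x'yz'} + a_{x'y'z} - a_{x'y'z'} = 0$. -/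
open Finset
open scoped Classical

/-- The edge indicator of the 3-graph `G_{A,B,M}`: `{u,v,w}` is an edge iff it meets both
`A` and `B` and contains no pair from `M`. -/
noncomputable def gabmInd {V : Type*} [DecidableEq V] (A B : Finset V)
    (M : Finset (V × V)) (u v w : V) : ℤ :=
  if (({u, v, w} : Finset V) ∩ A).Nonempty ∧ (({u, v, w} : Finset V) ∩ B).Nonempty ∧
      ∀ p ∈ M, ¬(p.1 ∈ ({u, v, w} : Finset V) ∧ p.2 ∈ ({u, v, w} : Finset V))
  then 1 else 0

lemma uniquePair {V : Type*} [DecidableEq V] (A B : Finset V) (hAB : Disjoint A B)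
    (M : Finset (V × V)) (hMAB : ∀ p ∈ M, p.1 ∈ A ∧ p.2 ∈ B)
    (hMdisj : ∀ p ∈ M, ∀ q ∈ M, p ≠ q → p.1 ≠ q.1 ∧ p.2 ≠ q.2)
    (u v w : V) (p q : V × V) (hp : p ∈ M) (hq : q ∈ M)
    (hp1 : p.1 ∈ ({u, v, w} : Finset V)) (hp2 : p.2 ∈ ({u, v, w} : Finset V))
    (hq1 : q.1 ∈ ({u, v, w} : Finset V)) (hq2 : q.2 ∈ ({u, v, w} : Finset V)) :
    p = q := by
  by_contra hne
  obtain ⟨h11, h22⟩ := hMdisj p hp q hq hne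
  obtain ⟨hpA, hpB⟩ := hMAB p hp
  obtain ⟨hqA, hqB⟩ := hMAB q hq
  have d := Finset.disjoint_left.mp hAB
  have h12 : p.1 ≠ p.2 := fun h => d hpA (h ▸ hpB)
  have h12' : p.1 ≠ q.2 := fun h => d hpA (h ▸ hqB)
  have h21 : q.1 ≠ p.2 := fun h => d hqA (h ▸ hpB)
  have h21' : q.1 ≠ q.2 := fun h => d hqA (h ▸ hqB)
  have hsub : ({p.1, q.1, p.2, q.2} : Finset V) ⊆ {u, v, w} := by
    simp [Finset.insert_subset_iff, hp1, hp2, hq1, hq2]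
  have hc4 : ({p.1, q.1, p.2, q.2} : Finset V).card = 4 := by
    rw [Finset.card_insert_of_notMem (by simp [h11, h12, h12']),
      Finset.card_insert_of_notMem (by simp [h21, h21']),
      Finset.card_insert_of_notMem (by simp [h22]), Finset.card_singleton]
  have hc3 : ({u, v, w} : Finset V).card ≤ 3 :=
    (Finset.card_insert_le _ _).trans (by have := Finset.card_insert_le v {w}; simp at this; omega)
  have := Finset.card_le_card hsub
  omega

noncomputable def aInd {V : Type*} [DecidableEq V] (A : Finset V) (u : V) : ℤ :=
  if u ∈ A then 1 else 0

noncomputable def mInd {V : Type*} [DecidableEq V] (M : Finset (V × V)) (a b : V) : ℤ :=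
  if (a, b) ∈ M ∨ (b, a) ∈ M then 1 else 0

lemma gabm_formula {V : Type*} [DecidableEq V] (A B : Finset V) (hAB : Disjoint A B)
    (M : Finset (V × V)) (hMAB : ∀ p ∈ M, p.1 ∈ A ∧ p.2 ∈ B)
    (hMdisj : ∀ p ∈ M, ∀ q ∈ M, p ≠ q → p.1 ≠ q.1 ∧ p.2 ≠ q.2)
    (u v w : V) (hu : u ∈ A ∪ B) (hv : v ∈ A ∪ B) (hw : w ∈ A ∪ B)
    (huv : u ≠ v) (huw : u ≠ w) (hvw : v ≠ w) :
    gabmInd A B M u v w =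
      1 - aInd A u * aInd A v * aInd A w - aInd B u * aInd B v * aInd B w
        - (mInd M u v + mInd M u w + mInd M v w) := by
  have d := Finset.disjoint_left.mp hAB
  have hmu : u ∈ ({u, v, w} : Finset V) := by simp
  have hmv : v ∈ ({u, v, w} : Finset V) := by simp
  have hmw : w ∈ ({u, v, w} : Finset V) := by simp
  unfold gabmInd aInd mInd
  by_cases h : (({u, v, w} : Finset V) ∩ A).Nonempty ∧ (({u, v, w} : Finset V) ∩ B).Nonempty ∧
      ∀ p ∈ M, ¬(p.1 ∈ ({u, v, w} : Finset V) ∧ p.2 ∈ ({u, v, w} : Finset V))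
  · rw [if_pos h]
    obtain ⟨hA', hB', hno⟩ := h
    -- A-product zero: some vertex in B
    have hAprod : (if u ∈ A then (1:ℤ) else 0) * (if v ∈ A then 1 else 0) * (if w ∈ A then 1 else 0) = 0 := by
      obtain ⟨t, ht⟩ := hB'
      rw [Finset.mem_inter, Finset.mem_insert, Finset.mem_insert, Finset.mem_singleton] at ht
      obtain ⟨(rfl | rfl | rfl), htB⟩ := ht <;>
        simp [if_neg (fun hA'' => d hA'' htB)]
    have hBprod : (if u ∈ B then (1:ℤ) else 0) * (if v ∈ B then 1 else 0) * (if w ∈ B then 1 else 0) = 0 := by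
      obtain ⟨t, ht⟩ := hA'
      rw [Finset.mem_inter, Finset.mem_insert, Finset.mem_insert, Finset.mem_singleton] at ht
      obtain ⟨(rfl | rfl | rfl), htA⟩ := ht <;>
        simp [if_neg (fun hB'' => d htA hB'')]
    have hm : ∀ a b : V, a ∈ ({u, v, w} : Finset V) → b ∈ ({u, v, w} : Finset V) →
        (if (a, b) ∈ M ∨ (b, a) ∈ M then (1:ℤ) else 0) = 0 := by
      intro a b ha hb
      refine if_neg ?_
      rintro (hq | hq)
      · exact hno (a, b) hq ⟨ha, hb⟩
      · exact hno (b, a) hq ⟨hb, ha⟩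
    rw [hAprod, hBprod, hm u v hmu hmv, hm u w hmu hmw, hm v w hmv hmw]
    ring
  · rw [if_neg h]
    by_cases hp : ∃ p ∈ M, p.1 ∈ ({u, v, w} : Finset V) ∧ p.2 ∈ ({u, v, w} : Finset V)
    · obtain ⟨p, hpM, hp1, hp2⟩ := hp
      obtain ⟨hpA, hpB⟩ := hMAB p hpM
      have hAprod : (if u ∈ A then (1:ℤ) else 0) * (if v ∈ A then 1 else 0) * (if w ∈ A then 1 else 0) = 0 := by
        rw [Finset.mem_insert, Finset.mem_insert, Finset.mem_singleton] at hp2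
        obtain (h2 | h2 | h2) := hp2 <;> rw [← h2] <;>
          simp [if_neg (fun hA'' => d hA'' hpB)]
      have hBprod : (if u ∈ B then (1:ℤ) else 0) * (if v ∈ B then 1 else 0) * (if w ∈ B then 1 else 0) = 0 := by
        rw [Finset.mem_insert, Finset.mem_insert, Finset.mem_singleton] at hp1
        obtain (h1 | h1 | h1) := hp1 <;> rw [← h1] <;>
          simp [if_neg (fun hB'' => d hpA hB'')]
      -- uniqueness specialized
      have uniq : ∀ a b : V, (a, b) ∈ M → a ∈ ({u, v, w} : Finset V) → b ∈ ({u, v, w} : Finset V) →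
          a = p.1 ∧ b = p.2 := by
        intro a b hab ha hb
        have := uniquePair A B hAB M hMAB hMdisj u v w (a, b) p hab hpM ha hb hp1 hp2
        exact ⟨congrArg Prod.fst this, congrArg Prod.snd this⟩
      -- show the m-sum is 1
      have hmsum : (if (u, v) ∈ M ∨ (v, u) ∈ M then (1:ℤ) else 0)
          + (if (u, w) ∈ M ∨ (w, u) ∈ M then 1 else 0)
          + (if (v, w) ∈ M ∨ (w, v) ∈ M then 1 else 0) = 1 := by
        have hp1' := hp1; have hp2' := hp2
        rw [Finset.mem_insert, Finset.mem_insert, Finset.mem_singleton] at hp1' hp2'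
        have hpp : p = (p.1, p.2) := rfl
        have hne12 : p.1 ≠ p.2 := fun h => d hpA (h ▸ hpB)
        have e : ∀ a b : V, a ∈ ({u, v, w} : Finset V) → b ∈ ({u, v, w} : Finset V) →
            (if (a, b) ∈ M ∨ (b, a) ∈ M then (1:ℤ) else 0)
              = (if (a = p.1 ∧ b = p.2) ∨ (b = p.1 ∧ a = p.2) then 1 else 0) := by
          intro a b ha hb
          by_cases hc : (a = p.1 ∧ b = p.2) ∨ (b = p.1 ∧ a = p.2)
          · rw [if_pos hc]
            obtain ⟨rfl, rfl⟩ | ⟨rfl, rfl⟩ := hc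
            · exact if_pos (Or.inl (hpp ▸ hpM))
            · exact if_pos (Or.inr (hpp ▸ hpM))
          · rw [if_neg hc]
            refine if_neg ?_
            rintro (hq | hq)
            · exact hc (Or.inl (uniq a b hq ha hb))
            · exact hc (Or.inr (uniq b a hq hb ha))
        rw [e u v hmu hmv, e u w hmu hmw, e v w hmv hmw]
        rcases hp1' with h1 | h1 | h1 <;> rcases hp2' with h2 | h2 | h2 <;>
          first
          | exact absurd (h1.trans h2.symm) hne12
          | (subst h1; subst h2;
             simp [hne12, Ne.symm hne12, huv, huw, hvw, Ne.symm huv, Ne.symm huw, Ne.symm hvw])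
      rw [hAprod, hBprod]
      rw [hmsum]
      ring
    · push_neg at hp
      have hno : ∀ p ∈ M, ¬(p.1 ∈ ({u, v, w} : Finset V) ∧ p.2 ∈ ({u, v, w} : Finset V)) := by
        intro p hpM hc; exact (hp p hpM hc.1) hc.2
      have hm0 : ∀ a b : V, a ∈ ({u, v, w} : Finset V) → b ∈ ({u, v, w} : Finset V) →
          (if (a, b) ∈ M ∨ (b, a) ∈ M then (1:ℤ) else 0) = 0 := by
        intro a b ha hb
        refine if_neg ?_
        rintro (hq | hq)
        · exact hno _ hq ⟨ha, hb⟩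
        · exact hno _ hq ⟨hb, ha⟩
      rw [hm0 u v hmu hmv, hm0 u w hmu hmw, hm0 v w hmv hmw]
      have hAorB : ¬(({u, v, w} : Finset V) ∩ A).Nonempty ∨ ¬(({u, v, w} : Finset V) ∩ B).Nonempty := by
        by_contra hc
        push_neg at hc
        exact h ⟨hc.1, hc.2, hno⟩
      rcases hAorB with h0 | h0
      · have hall : ∀ t ∈ ({u, v, w} : Finset V), t ∉ A := by
          intro t ht htA; exact h0 ⟨t, Finset.mem_inter.mpr ⟨ht, htA⟩⟩
        have huB : u ∈ B := (Finset.mem_union.mp hu).resolve_left (hall u hmu)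
        have hvB : v ∈ B := (Finset.mem_union.mp hv).resolve_left (hall v hmv)
        have hwB : w ∈ B := (Finset.mem_union.mp hw).resolve_left (hall w hmw)
        simp [hall u hmu, hall v hmv, hall w hmw, huB, hvB, hwB]
      · have hall : ∀ t ∈ ({u, v, w} : Finset V), t ∉ B := by
          intro t ht htB; exact h0 ⟨t, Finset.mem_inter.mpr ⟨ht, htB⟩⟩
        have huA : u ∈ A := (Finset.mem_union.mp hu).resolve_right (hall u hmu)
        have hvA : v ∈ A := (Finset.mem_union.mp hv).resolve_right (hall v hmv)
        have hwA : w ∈ A := (Finset.mem_union.mp hw).resolve_right (hall w hmw)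
        simp [hall u hmu, hall v hmv, hall w hmw, huA, hvA, hwA]

lemma bInd_eq {V : Type*} [DecidableEq V] (A B : Finset V) (hAB : Disjoint A B)
    (t : V) (ht : t ∈ A ∪ B) : aInd B t = 1 - aInd A t := by
  unfold aInd
  rcases Finset.mem_union.mp ht with h | h
  · rw [if_pos h, if_neg (Finset.disjoint_left.mp hAB h)]; ring
  · rw [if_pos h, if_neg (Finset.disjoint_right.mp hAB h)]; ring


/-- the 3-graph `G_{A,B,M}` (with `A, B` disjoint of size at least 5 and
`M ⊆ A × B` a set of pairwise disjoint pairs) is `𝓕`-free: for any six distinct vertices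
`x, x', y, y', z, z'` the signed sum of edge indicators vanishes. -/
theorem stmt13 {V : Type*} [DecidableEq V] (A B : Finset V) (hAB : Disjoint A B)
    (hA : 5 ≤ A.card) (hB : 5 ≤ B.card)
    (M : Finset (V × V)) (hMAB : ∀ p ∈ M, p.1 ∈ A ∧ p.2 ∈ B)
    (hMdisj : ∀ p ∈ M, ∀ q ∈ M, p ≠ q → p.1 ≠ q.1 ∧ p.2 ≠ q.2)
    (x x' y y' z z' : V)
    (hmem : ∀ u ∈ ([x, x', y, y', z, z'] : List V), u ∈ A ∪ B)
    (hnodup : ([x, x', y, y', z, z'] : List V).Nodup) :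
    gabmInd A B M x y z - gabmInd A B M x y z' - gabmInd A B M x y' z
        - gabmInd A B M x' y z + gabmInd A B M x y' z' + gabmInd A B M x' y z'
        + gabmInd A B M x' y' z - gabmInd A B M x' y' z' = 0 := by
  simp only [List.mem_cons, List.not_mem_nil, or_false, forall_eq_or_imp, forall_eq] at hmem
  obtain ⟨hx, hx', hy, hy', hz, hz'⟩ := hmem
  simp only [List.nodup_cons, List.mem_cons, List.not_mem_nil, or_false, not_or,
    List.nodup_nil, and_true] at hnodup
  obtain ⟨⟨hxx', hxy, hxy', hxz, hxz'⟩, ⟨hx'y, hx'y', hx'z, hx'z'⟩, ⟨hyy', hyz, hyz'⟩,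
    ⟨hy'z, hy'z'⟩, hzz'⟩ := hnodup
  have F := gabm_formula A B hAB M hMAB hMdisj
  rw [F x y z hx hy hz hxy hxz hyz,
    F x y z' hx hy hz' hxy hxz' hyz',
    F x y' z hx hy' hz hxy' hxz hy'z,
    F x' y z hx' hy hz hx'y hx'z hyz,
    F x y' z' hx hy' hz' hxy' hxz' hy'z',
    F x' y z' hx' hy hz' hx'y hx'z' hyz',
    F x' y' z hx' hy' hz hx'y' hx'z hy'z,
    F x' y' z' hx' hy' hz' hx'y' hx'z' hy'z',
    bInd_eq A B hAB x hx, bInd_eq A B hAB x' hx', bInd_eq A B hAB y hy,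
    bInd_eq A B hAB y' hy', bInd_eq A B hAB z hz, bInd_eq A B hAB z' hz']
  ring
end

section
/- Let $G' = G_{A,B,\emptyset}$ be the complete bipartite-style 3-graph on disjoint sets $A$ and $B$ with $|A| + |B| = n$ (edges are all triples intersecting both $A$ and $B$). Then for any vertices $x, y' \in A$ and $x', y \in B$ with $x, x', y, y'$ distinct, we have $|\deg_{G'}(x,y) - \deg_{G'}(x',y) - \deg_{G'}(x,y') + \deg_{G'}(x',y')| = n - 4$, where $\deg_{G'}(u,v)$ is the number of edges of $G'$ containing both $u$ and $v$. -/
open Finset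
open scoped Classical

/-- The codegree `deg(u,v)` in the 3-graph `G_{A,B,∅}`: the number of vertices `w` with
`w ∉ {u,v}` such that the triple `{u,v,w}` meets both `A` and `B`. -/
noncomputable def codegAB {V : Type*} [DecidableEq V] [Fintype V] (A B : Finset V)
    (u v : V) : ℕ :=
  (Finset.univ.filter (fun w => w ≠ u ∧ w ≠ v ∧
    (({u, v, w} : Finset V) ∩ A).Nonempty ∧ (({u, v, w} : Finset V) ∩ B).Nonempty)).card

lemma codeg_mixed {V : Type*} [DecidableEq V] [Fintype V] (A B : Finset V)
    (u v : V) (hu : u ∈ A) (hv : v ∈ B) (huv : u ≠ v) :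
    codegAB A B u v = Fintype.card V - 2 := by
  unfold codegAB
  have hset : (Finset.univ.filter (fun w => w ≠ u ∧ w ≠ v ∧
      (({u, v, w} : Finset V) ∩ A).Nonempty ∧ (({u, v, w} : Finset V) ∩ B).Nonempty))
      = Finset.univ \ {u, v} := by
    ext w
    simp only [mem_filter, mem_univ, true_and, mem_sdiff, mem_insert, mem_singleton]
    constructor
    · rintro ⟨h1, h2, _, _⟩; tauto
    · rintro h
      refine ⟨by tauto, by tauto, ⟨u, by simp [hu]⟩, ⟨v, by simp [hv]⟩⟩
  rw [hset, card_sdiff_of_subset (by simp)]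
  congr 1
  rw [card_insert_of_notMem (by simpa using huv), card_singleton]

lemma codeg_same {V : Type*} [DecidableEq V] [Fintype V] (A B : Finset V)
    (hdisj : Disjoint A B) (u v : V) (hu : u ∈ A) (hv : v ∈ A) :
    codegAB A B u v = B.card := by
  unfold codegAB
  congr 1
  ext w
  simp only [mem_filter, mem_univ, true_and]
  constructor
  · rintro ⟨h1, h2, _, ⟨z, hz⟩⟩
    simp only [mem_inter, mem_insert, mem_singleton] at hz
    rcases hz with ⟨(rfl | rfl | rfl), hzB⟩
    · exact absurd hzB (Finset.disjoint_left.mp hdisj hu)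
    · exact absurd hzB (Finset.disjoint_left.mp hdisj hv)
    · exact hzB
  · intro hw
    have h1 : w ≠ u := fun h => Finset.disjoint_left.mp hdisj hu (h ▸ hw)
    have h2 : w ≠ v := fun h => Finset.disjoint_left.mp hdisj hv (h ▸ hw)
    exact ⟨h1, h2, ⟨u, by simp [hu]⟩, ⟨w, by simp [hw]⟩⟩

lemma codeg_same' {V : Type*} [DecidableEq V] [Fintype V] (A B : Finset V)
    (hdisj : Disjoint A B) (u v : V) (hu : u ∈ B) (hv : v ∈ B) :
    codegAB A B u v = A.card := by
  unfold codegAB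
  congr 1
  ext w
  simp only [mem_filter, mem_univ, true_and]
  constructor
  · rintro ⟨h1, h2, ⟨z, hz⟩, _⟩
    simp only [mem_inter, mem_insert, mem_singleton] at hz
    rcases hz with ⟨(rfl | rfl | rfl), hzA⟩
    · exact absurd hu (Finset.disjoint_left.mp hdisj hzA)
    · exact absurd hv (Finset.disjoint_left.mp hdisj hzA)
    · exact hzA
  · intro hw
    have h1 : w ≠ u := fun h => Finset.disjoint_left.mp hdisj hw (h ▸ hu)
    have h2 : w ≠ v := fun h => Finset.disjoint_left.mp hdisj hw (h ▸ hv)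
    exact ⟨h1, h2, ⟨w, by simp [hw]⟩, ⟨u, by simp [hu]⟩⟩

lemma codeg_mixed' {V : Type*} [DecidableEq V] [Fintype V] (A B : Finset V)
    (u v : V) (hu : u ∈ B) (hv : v ∈ A) (huv : u ≠ v) :
    codegAB A B u v = Fintype.card V - 2 := by
  unfold codegAB
  have hset : (Finset.univ.filter (fun w => w ≠ u ∧ w ≠ v ∧
      (({u, v, w} : Finset V) ∩ A).Nonempty ∧ (({u, v, w} : Finset V) ∩ B).Nonempty))
      = Finset.univ \ {u, v} := by
    ext w
    simp only [mem_filter, mem_univ, true_and, mem_sdiff, mem_insert, mem_singleton]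
    constructor
    · rintro ⟨h1, h2, _, _⟩; tauto
    · rintro h
      refine ⟨by tauto, by tauto, ⟨v, by simp [hv]⟩, ⟨u, by simp [hu]⟩⟩
  rw [hset, card_sdiff_of_subset (by simp)]
  congr 1
  rw [card_insert_of_notMem (by simpa using huv), card_singleton]

/-- in `G' = G_{A,B,∅}` on `n` vertices, for distinct `x, y' ∈ A` and
`x', y ∈ B` we have `|deg(x,y) - deg(x',y) - deg(x,y') + deg(x',y')| = n - 4`. -/
theorem stmt14 {V : Type*} [DecidableEq V] [Fintype V] (A B : Finset V)
    (hdisj : Disjoint A B) (hcover : A ∪ B = Finset.univ)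
    (x y' : V) (hx : x ∈ A) (hy' : y' ∈ A)
    (x' y : V) (hx' : x' ∈ B) (hy : y ∈ B)
    (hnodup : ([x, x', y, y'] : List V).Nodup) :
    |(codegAB A B x y : ℤ) - (codegAB A B x' y : ℤ) - (codegAB A B x y' : ℤ)
        + (codegAB A B x' y' : ℤ)| = (Fintype.card V : ℤ) - 4 := by
  simp only [List.nodup_cons, List.mem_cons, List.not_mem_nil, or_false,
    List.mem_singleton, List.nodup_nil, and_true, not_or] at hnodup
  obtain ⟨⟨hxx', hxy, hxy'⟩, ⟨hx'y, hx'y'⟩, hyy'⟩ := hnodup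
  have hsum : A.card + B.card = Fintype.card V := by
    rw [← card_union_of_disjoint hdisj, hcover, card_univ]
  have hn : 4 ≤ Fintype.card V := by
    have : ({x, x', y, y'} : Finset V).card = 4 := by
      rw [card_insert_of_notMem (by simp [hxx', hxy, hxy']),
        card_insert_of_notMem (by simp [hx'y, hx'y']),
        card_insert_of_notMem (by simpa using hyy'), card_singleton]
    calc 4 = ({x, x', y, y'} : Finset V).card := this.symm
      _ ≤ Fintype.card V := card_le_card (subset_univ _) |>.trans_eq card_univ
  rw [codeg_mixed A B x y hx hy hxy, codeg_same' A B hdisj x' y hx' hy,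
    codeg_same A B hdisj x y' hx hy',
    codeg_mixed' A B x' y' hx' hy' (fun h => absurd hx' (h ▸ Finset.disjoint_left.mp hdisj hy'))]
  have h2 : (((Fintype.card V - 2 : ℕ) : ℤ)) = (Fintype.card V : ℤ) - 2 := by
    have : 2 ≤ Fintype.card V := by omega
    push_cast [Nat.cast_sub this]; ring
  rw [h2]
  have hAB : (A.card : ℤ) + (B.card : ℤ) = (Fintype.card V : ℤ) := by exact_mod_cast hsum
  have hn' : (4 : ℤ) ≤ (Fintype.card V : ℤ) := by exact_mod_cast hn
  rw [abs_of_nonneg (by linarith)]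
  linarith
end

section
/- Fix a 6-element vertex set $\{x, x', y, y', z, z'\}$, and let $\mathcal{F}$ be the family of 3-uniform hypergraphs $F$ on this vertex set for which $a_{xyz} - a_{xyz'} - a_{xy'z} - a_{x'yz} + a_{xy'z'} + a_{x'yz'} + a_{x'y'z} - a_{x'y'z'} \ne 0$ (where $a$ is the edge indicator of $F$). Let $G$ be an $\mathcal{F}$-free 3-graph, let $v$ be a vertex, and suppose $G - v = G_{A,B,M}$ with $|A|, |B| \ge 5$, where $M \subseteq A \times B$ is a set of disjoint pairs. Then there exist $A' \supseteq A$, $B' \supseteq B$ partitioning $V(G)$ and disjoint pairs $M' \supseteq M$, $M' \subseteq A' \times B'$, such that $G = G_{A', B', M'}$. -/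
set_option linter.unusedSectionVars false
open Finset
open scoped Classical

namespace Stmt18

structure Setup (V : Type*) [DecidableEq V] [Fintype V] where
  G : Finset (Finset V)
  v : V
  A : Finset V
  B : Finset V
  M : Finset (V × V)
  hFfree : ∀ x x' y y' z z' : V, ([x, x', y, y', z, z'] : List V).Nodup →
      ((if ({x, y, z} : Finset V) ∈ G then (1 : ℤ) else 0)
        - (if ({x, y, z'} : Finset V) ∈ G then 1 else 0)
        - (if ({x, y', z} : Finset V) ∈ G then 1 else 0)
        - (if ({x', y, z} : Finset V) ∈ G then 1 else 0)
        + (if ({x, y', z'} : Finset V) ∈ G then 1 else 0)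
        + (if ({x', y, z'} : Finset V) ∈ G then 1 else 0)
        + (if ({x', y', z} : Finset V) ∈ G then 1 else 0)
        - (if ({x', y', z'} : Finset V) ∈ G then 1 else 0)) = 0
  hpart : A ∪ B = Finset.univ.erase v
  hdisj : Disjoint A B
  hA : 5 ≤ A.card
  hB : 5 ≤ B.card
  hMAB : ∀ p ∈ M, p.1 ∈ A ∧ p.2 ∈ B
  hMdisj : ∀ p ∈ M, ∀ q ∈ M, p ≠ q → p.1 ≠ q.1 ∧ p.2 ≠ q.2
  hGv : ∀ e : Finset V, e.card = 3 → v ∉ e →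
      (e ∈ G ↔ ((e ∩ A).Nonempty ∧ (e ∩ B).Nonempty ∧
        ∀ p ∈ M, ¬(p.1 ∈ e ∧ p.2 ∈ e)))

variable {V : Type*} [DecidableEq V] [Fintype V] (S : Setup V)

/-- edge indicator of a triple -/
def Setup.e3 (p q r : V) : ℤ := if ({p, q, r} : Finset V) ∈ S.G then 1 else 0

/-- link indicator at v -/
def Setup.g (p q : V) : ℤ := if ({S.v, p, q} : Finset V) ∈ S.G then 1 else 0

/-- matching indicator -/
def Setup.m (a b : V) : ℤ := if (a, b) ∈ S.M then 1 else 0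

lemma tri_swap23 (p q r : V) : ({p, q, r} : Finset V) = {p, r, q} := by
  rw [show ({q, r} : Finset V) = {r, q} from Finset.pair_comm q r]

lemma tri_swap12 (p q r : V) : ({p, q, r} : Finset V) = {q, p, r} :=
  Finset.insert_comm p q {r}

lemma tri_rot (p q r : V) : ({p, q, r} : Finset V) = {r, p, q} := by
  rw [tri_swap23, tri_swap12]

lemma Setup.gsymm (p q : V) : S.g p q = S.g q p := by
  unfold Setup.g
  rw [tri_swap23]

lemma Setup.g01 (p q : V) : S.g p q = 0 ∨ S.g p q = 1 := by
  unfold Setup.g; split <;> simp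

lemma Setup.m01 (a b : V) : S.m a b = 0 ∨ S.m a b = 1 := by
  unfold Setup.m; split <;> simp

lemma Setup.nevA {a : V} (ha : a ∈ S.A) : a ≠ S.v := by
  have : a ∈ S.A ∪ S.B := Finset.mem_union_left _ ha
  rw [S.hpart] at this
  exact (Finset.mem_erase.mp this).1

lemma Setup.nevB {b : V} (hb : b ∈ S.B) : b ≠ S.v := by
  have : b ∈ S.A ∪ S.B := Finset.mem_union_right _ hb
  rw [S.hpart] at this
  exact (Finset.mem_erase.mp this).1

lemma Setup.nAB {a b : V} (ha : a ∈ S.A) (hb : b ∈ S.B) : a ≠ b := by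
  intro h; subst h
  exact (Finset.disjoint_left.mp S.hdisj ha) hb

lemma Setup.vnotin : S.v ∉ S.A ∪ S.B := by
  rw [S.hpart]; simp

/-- the master relation, instance of F-freeness with z = v -/
lemma Setup.master {x x' y y' z' : V}
    (hnd : ([x, x', y, y', S.v, z'] : List V).Nodup) :
    S.g x y - S.g x y' - S.g x' y + S.g x' y'
      = S.e3 x y z' - S.e3 x y' z' - S.e3 x' y z' + S.e3 x' y' z' := by
  have H := S.hFfree x x' y y' S.v z' hnd
  have e1 : ({x, y, S.v} : Finset V) = {S.v, x, y} := tri_rot x y S.v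
  have e2 : ({x, y', S.v} : Finset V) = {S.v, x, y'} := tri_rot x y' S.v
  have e3' : ({x', y, S.v} : Finset V) = {S.v, x', y} := tri_rot x' y S.v
  have e4 : ({x', y', S.v} : Finset V) = {S.v, x', y'} := tri_rot x' y' S.v
  rw [e1, e2, e3', e4] at H
  unfold Setup.g Setup.e3
  linarith [H]


lemma Setup.filter_card_le {b : V} (hb : b ∈ S.B) :
    (S.A.filter (fun z => (z, b) ∈ S.M)).card ≤ 1 := by
  apply Finset.card_le_one.mpr
  intro x hx y hy
  simp only [Finset.mem_filter] at hx hy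
  by_contra hne
  have := S.hMdisj (x, b) hx.2 (y, b) hy.2 (by simp [hne])
  exact this.2 rfl

lemma Setup.pick (x x' : V) {y y' : V} (hy : y ∈ S.B) (hy' : y' ∈ S.B) :
    ∃ z ∈ S.A, z ≠ x ∧ z ≠ x' ∧ (z, y) ∉ S.M ∧ (z, y') ∉ S.M := by
  set T : Finset V := insert x (insert x'
    ((S.A.filter (fun z => (z, y) ∈ S.M)) ∪ (S.A.filter (fun z => (z, y') ∈ S.M)))) with hT
  have hTcard : T.card ≤ 4 := by
    calc T.card ≤ (insert x' ((S.A.filter (fun z => (z, y) ∈ S.M)) ∪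
        (S.A.filter (fun z => (z, y') ∈ S.M)))).card + 1 := Finset.card_insert_le _ _
      _ ≤ ((S.A.filter (fun z => (z, y) ∈ S.M)) ∪
        (S.A.filter (fun z => (z, y') ∈ S.M))).card + 1 + 1 := by
          have := Finset.card_insert_le x' ((S.A.filter (fun z => (z, y) ∈ S.M)) ∪
            (S.A.filter (fun z => (z, y') ∈ S.M)))
          omega
      _ ≤ 4 := by
          have h1 := S.filter_card_le hy
          have h2 := S.filter_card_le hy'
          have := Finset.card_union_le (S.A.filter (fun z => (z, y) ∈ S.M))
            (S.A.filter (fun z => (z, y') ∈ S.M))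
          omega
  have : ¬ S.A ⊆ T := by
    intro hsub
    have := Finset.card_le_card hsub
    have := S.hA
    omega
  obtain ⟨z, hzA, hzT⟩ := Finset.not_subset.mp this
  refine ⟨z, hzA, ?_, ?_, ?_, ?_⟩
  · intro h; exact hzT (by simp [hT, h])
  · intro h; exact hzT (by simp [hT, h])
  · intro h; exact hzT (by simp [hT, Finset.mem_filter, hzA, h])
  · intro h; exact hzT (by simp [hT, Finset.mem_filter, hzA, h])

lemma Setup.card3 {p q r : V} (hpq : p ≠ q) (hpr : p ≠ r) (hqr : q ≠ r) :
    ({p, q, r} : Finset V).card = 3 := by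
  rw [Finset.card_insert_of_notMem (by simp [hpq, hpr]),
    Finset.card_insert_of_notMem (by simp [hqr])]
  simp

lemma Setup.eAAB {a1 a2 b : V} (h1 : a1 ∈ S.A) (h2 : a2 ∈ S.A) (hb : b ∈ S.B)
    (h12 : a1 ≠ a2) : S.e3 a1 a2 b = 1 - S.m a1 b - S.m a2 b := by
  have h1b := S.nAB h1 hb
  have h2b := S.nAB h2 hb
  have hv : S.v ∉ ({a1, a2, b} : Finset V) := by
    simp only [Finset.mem_insert, Finset.mem_singleton]
    push_neg
    exact ⟨(S.nevA h1).symm, (S.nevA h2).symm, (S.nevB hb).symm⟩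
  have hiff := S.hGv {a1, a2, b} (Setup.card3 h12 h1b h2b) hv
  have hmm : ¬((a1, b) ∈ S.M ∧ (a2, b) ∈ S.M) := by
    rintro ⟨hx, hy⟩
    exact (S.hMdisj _ hx _ hy (by simp [h12])).2 rfl
  by_cases hm1 : (a1, b) ∈ S.M
  · have hnG : ({a1, a2, b} : Finset V) ∉ S.G := by
      rw [hiff]
      rintro ⟨-, -, hM⟩
      exact hM _ hm1 ⟨by simp, by simp⟩
    have hm2 : (a2, b) ∉ S.M := fun h => hmm ⟨hm1, h⟩
    simp [Setup.e3, Setup.m, hnG, hm1, hm2]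
  · by_cases hm2 : (a2, b) ∈ S.M
    · have hnG : ({a1, a2, b} : Finset V) ∉ S.G := by
        rw [hiff]
        rintro ⟨-, -, hM⟩
        exact hM _ hm2 ⟨by simp, by simp⟩
      simp [Setup.e3, Setup.m, hnG, hm1, hm2]
    · have hG : ({a1, a2, b} : Finset V) ∈ S.G := by
        rw [hiff]
        refine ⟨⟨a1, by simp [h1]⟩, ⟨b, by simp [hb]⟩, ?_⟩
        rintro p hp ⟨hp1, hp2⟩
        obtain ⟨hpA, hpB⟩ := S.hMAB p hp
        simp only [Finset.mem_insert, Finset.mem_singleton] at hp1 hp2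
        rcases hp2 with h | h | h
        · exact S.nAB h1 hpB h.symm
        · exact S.nAB h2 hpB h.symm
        · rcases hp1 with h' | h' | h'
          · apply hm1; have : p = (a1, b) := Prod.ext h' h; rwa [this] at hp
          · apply hm2; have : p = (a2, b) := Prod.ext h' h; rwa [this] at hp
          · exact S.nAB hpA hb h'
      simp [Setup.e3, Setup.m, hG, hm1, hm2]

lemma Setup.eABB {a b1 b2 : V} (ha : a ∈ S.A) (h1 : b1 ∈ S.B) (h2 : b2 ∈ S.B)
    (h12 : b1 ≠ b2) : S.e3 a b1 b2 = 1 - S.m a b1 - S.m a b2 := by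
  have hab1 := S.nAB ha h1
  have hab2 := S.nAB ha h2
  have hv : S.v ∉ ({a, b1, b2} : Finset V) := by
    simp only [Finset.mem_insert, Finset.mem_singleton]
    push_neg
    exact ⟨(S.nevA ha).symm, (S.nevB h1).symm, (S.nevB h2).symm⟩
  have hiff := S.hGv {a, b1, b2} (Setup.card3 hab1 hab2 h12) hv
  have hmm : ¬((a, b1) ∈ S.M ∧ (a, b2) ∈ S.M) := by
    rintro ⟨hx, hy⟩
    exact (S.hMdisj _ hx _ hy (by simp [h12])).1 rfl
  by_cases hm1 : (a, b1) ∈ S.M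
  · have hnG : ({a, b1, b2} : Finset V) ∉ S.G := by
      rw [hiff]
      rintro ⟨-, -, hM⟩
      exact hM _ hm1 ⟨by simp, by simp⟩
    have hm2 : (a, b2) ∉ S.M := fun h => hmm ⟨hm1, h⟩
    simp [Setup.e3, Setup.m, hnG, hm1, hm2]
  · by_cases hm2 : (a, b2) ∈ S.M
    · have hnG : ({a, b1, b2} : Finset V) ∉ S.G := by
        rw [hiff]
        rintro ⟨-, -, hM⟩
        exact hM _ hm2 ⟨by simp, by simp⟩
      simp [Setup.e3, Setup.m, hnG, hm1, hm2]
    · have hG : ({a, b1, b2} : Finset V) ∈ S.G := by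
        rw [hiff]
        refine ⟨⟨a, by simp [ha]⟩, ⟨b1, by simp [h1]⟩, ?_⟩
        rintro p hp ⟨hp1, hp2⟩
        obtain ⟨hpA, hpB⟩ := S.hMAB p hp
        simp only [Finset.mem_insert, Finset.mem_singleton] at hp1 hp2
        rcases hp1 with h | h | h
        · rcases hp2 with h' | h' | h'
          · exact S.nAB ha hpB h'.symm
          · apply hm1; have : p = (a, b1) := Prod.ext h h'; rwa [this] at hp
          · apply hm2; have : p = (a, b2) := Prod.ext h h'; rwa [this] at hp
        · exact S.nAB hpA h1 h
        · exact S.nAB hpA h2 h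
      simp [Setup.e3, Setup.m, hG, hm1, hm2]

lemma Setup.eAAA {a1 a2 a3 : V} (h1 : a1 ∈ S.A) (h2 : a2 ∈ S.A) (h3 : a3 ∈ S.A)
    (h12 : a1 ≠ a2) (h13 : a1 ≠ a3) (h23 : a2 ≠ a3) : S.e3 a1 a2 a3 = 0 := by
  have hv : S.v ∉ ({a1, a2, a3} : Finset V) := by
    simp only [Finset.mem_insert, Finset.mem_singleton]
    push_neg
    exact ⟨(S.nevA h1).symm, (S.nevA h2).symm, (S.nevA h3).symm⟩
  have hiff := S.hGv {a1, a2, a3} (Setup.card3 h12 h13 h23) hv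
  have hnG : ({a1, a2, a3} : Finset V) ∉ S.G := by
    rw [hiff]
    rintro ⟨-, ⟨x, hx⟩, -⟩
    simp only [Finset.mem_inter, Finset.mem_insert, Finset.mem_singleton] at hx
    rcases hx.1 with h | h | h <;> subst h <;>
      exact S.nAB (by assumption) hx.2 rfl
  simp [Setup.e3, hnG]


lemma nodup6 {V : Type*} {a b c d e f : V} (h1 : a≠b) (h2 : a≠c) (h3 : a≠d) (h4 : a≠e)
    (h5 : a≠f) (h6 : b≠c) (h7 : b≠d) (h8 : b≠e) (h9 : b≠f) (h10 : c≠d) (h11 : c≠e)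
    (h12 : c≠f) (h13 : d≠e) (h14 : d≠f) (h15 : e≠f) : ([a,b,c,d,e,f] : List V).Nodup := by
  simp [List.nodup_cons, *]

lemma Setup.R3 {x x' y y' : V} (hx : x ∈ S.A) (hx' : x' ∈ S.A) (hy : y ∈ S.B)
    (hy' : y' ∈ S.B) (hxx : x ≠ x') (hyy : y ≠ y') :
    S.g x y - S.g x y' - S.g x' y + S.g x' y'
      = -(S.m x y) + S.m x y' + S.m x' y - S.m x' y' := by
  obtain ⟨z, hz, hzx, hzx', hzy, hzy'⟩ := S.pick x x' hy hy'
  have hnd : ([x, x', y, y', S.v, z] : List V).Nodup :=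
    nodup6 hxx (S.nAB hx hy) (S.nAB hx hy') (S.nevA hx) (Ne.symm hzx)
      (S.nAB hx' hy) (S.nAB hx' hy') (S.nevA hx') (Ne.symm hzx')
      hyy (S.nevB hy) (Ne.symm (S.nAB hz hy)) (S.nevB hy') (Ne.symm (S.nAB hz hy'))
      (Ne.symm (S.nevA hz))
  have H := S.master hnd
  have E1 : S.e3 x y z = 1 - S.m x y := by
    have : S.e3 x y z = S.e3 x z y := by unfold Setup.e3; rw [tri_swap23]
    rw [this, S.eAAB hx hz hy (Ne.symm hzx)]
    simp [Setup.m, hzy]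
  have E2 : S.e3 x y' z = 1 - S.m x y' := by
    have : S.e3 x y' z = S.e3 x z y' := by unfold Setup.e3; rw [tri_swap23]
    rw [this, S.eAAB hx hz hy' (Ne.symm hzx)]
    simp [Setup.m, hzy']
  have E3 : S.e3 x' y z = 1 - S.m x' y := by
    have : S.e3 x' y z = S.e3 x' z y := by unfold Setup.e3; rw [tri_swap23]
    rw [this, S.eAAB hx' hz hy (Ne.symm hzx')]
    simp [Setup.m, hzy]
  have E4 : S.e3 x' y' z = 1 - S.m x' y' := by
    have : S.e3 x' y' z = S.e3 x' z y' := by unfold Setup.e3; rw [tri_swap23]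
    rw [this, S.eAAB hx' hz hy' (Ne.symm hzx')]
    simp [Setup.m, hzy']
  rw [E1, E2, E3, E4] at H
  linarith

lemma Setup.R5 {x y x' y' : V} (hx : x ∈ S.A) (hy : y ∈ S.A) (hx' : x' ∈ S.B)
    (hy' : y' ∈ S.B) (hxy : x ≠ y) (hxy' : x' ≠ y') :
    S.g x y - S.g x y' - S.g x' y + S.g x' y' = S.m x y' + S.m y x' - 1 := by
  obtain ⟨z, hz, hzx, hzy, hzmx', hzmy'⟩ := S.pick x y hx' hy'
  have hnd : ([x, x', y, y', S.v, z] : List V).Nodup :=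
    nodup6 (S.nAB hx hx') hxy (S.nAB hx hy') (S.nevA hx) (Ne.symm hzx)
      (Ne.symm (S.nAB hy hx')) hxy' (S.nevB hx') (Ne.symm (S.nAB hz hx'))
      (S.nAB hy hy') (S.nevA hy) (Ne.symm hzy) (S.nevB hy') (Ne.symm (S.nAB hz hy'))
      (Ne.symm (S.nevA hz))
  have H := S.master hnd
  have E1 : S.e3 x y z = 0 := S.eAAA hx hy hz hxy (Ne.symm hzx) (Ne.symm hzy)
  have E2 : S.e3 x y' z = 1 - S.m x y' := by
    have : S.e3 x y' z = S.e3 x z y' := by unfold Setup.e3; rw [tri_swap23]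
    rw [this, S.eAAB hx hz hy' (Ne.symm hzx)]
    simp [Setup.m, hzmy']
  have E3 : S.e3 x' y z = 1 - S.m y x' := by
    have : S.e3 x' y z = S.e3 y z x' := by unfold Setup.e3; rw [tri_rot y z x']
    rw [this, S.eAAB hy hz hx' (Ne.symm hzy)]
    simp [Setup.m, hzmx']
  have E4 : S.e3 x' y' z = 1 := by
    have : S.e3 x' y' z = S.e3 z x' y' := by unfold Setup.e3; rw [tri_rot x' y' z]
    rw [this, S.eABB hz hx' hy' hxy']
    simp [Setup.m, hzmx', hzmy']
  rw [E1, E2, E3, E4] at H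
  linarith


lemma rigidity {α : Type*} [DecidableEq α] {S : Finset α} (h3 : 3 ≤ S.card)
    (f : α → ℤ) (c : ℤ)
    (h : ∀ x ∈ S, ∀ y ∈ S, x ≠ y → f x + f y = c ∨ f x + f y = c + 1) :
    ∃ t w, w ∈ S ∧ ∀ x ∈ S, x ≠ w → f x = t := by
  have hne1 : S.Nonempty := Finset.card_pos.mp (by omega)
  obtain ⟨x1, hx1⟩ := hne1
  have hne2 : (S.erase x1).Nonempty := Finset.card_pos.mp (by
    rw [Finset.card_erase_of_mem hx1]; omega)
  obtain ⟨x2, hx2'⟩ := hne2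
  obtain ⟨hx21, hx2⟩ := Finset.mem_erase.mp hx2'
  have hne3 : ((S.erase x1).erase x2).Nonempty := Finset.card_pos.mp (by
    rw [Finset.card_erase_of_mem hx2', Finset.card_erase_of_mem hx1]; omega)
  obtain ⟨x3, hx3'⟩ := hne3
  obtain ⟨hx32, hx3''⟩ := Finset.mem_erase.mp hx3'
  obtain ⟨hx31, hx3⟩ := Finset.mem_erase.mp hx3''
  -- find p q ∈ S distinct with f p = f q
  have hexpq : ∃ p ∈ S, ∃ q ∈ S, p ≠ q ∧ f p = f q := by
    by_cases e12 : f x1 = f x2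
    · exact ⟨x1, hx1, x2, hx2, Ne.symm hx21, e12⟩
    by_cases e13 : f x1 = f x3
    · exact ⟨x1, hx1, x3, hx3, Ne.symm hx31, e13⟩
    refine ⟨x2, hx2, x3, hx3, Ne.symm hx32, ?_⟩
    have h12 := h x1 hx1 x2 hx2 (Ne.symm hx21)
    have h13 := h x1 hx1 x3 hx3 (Ne.symm hx31)
    have h23 := h x2 hx2 x3 hx3 (Ne.symm hx32)
    rcases h12 with h' | h' <;> rcases h13 with h'' | h'' <;> rcases h23 with h''' | h''' <;>
      omega
  obtain ⟨p, hp, q, hq, hpq, hfpq⟩ := hexpq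
  have uniq : ∀ x ∈ S, ∀ y ∈ S, x ≠ y → f x ≠ f p → f y ≠ f p → False := by
    intro x hx y hy hxy hfx hfy
    have hpx : p ≠ x := by rintro rfl; exact hfx rfl
    have hpy : p ≠ y := by rintro rfl; exact hfy rfl
    have Hpq := h p hp q hq hpq
    have Hpx := h p hp x hx hpx
    have Hpy := h p hp y hy hpy
    have Hxy := h x hx y hy hxy
    rcases Hpq with h' | h' <;> rcases Hpx with h'' | h'' <;> rcases Hpy with h''' | h''' <;>
      rcases Hxy with h'''' | h'''' <;> omega
  by_cases hex : ∃ x ∈ S, f x ≠ f p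
  · obtain ⟨w, hw, hwne⟩ := hex
    refine ⟨f p, w, hw, fun x hx hxw => ?_⟩
    by_contra hne
    exact uniq x hx w hw hxw hne hwne
  · push_neg at hex
    exact ⟨f p, p, hp, fun x hx _ => hex x hx⟩

lemma Setup.machinery :
    ∃ (φ ψ : V → ℤ) (t s kp lm : ℤ) (w u : V), w ∈ S.A ∧ u ∈ S.B ∧
      (∀ a ∈ S.A, ∀ b ∈ S.B, S.g a b = φ a + ψ b - S.m a b) ∧
      (∀ a ∈ S.A, ∀ a' ∈ S.A, a ≠ a' → S.g a a' = φ a + φ a' + kp) ∧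
      (∀ b ∈ S.B, ∀ b' ∈ S.B, b ≠ b' → S.g b b' = ψ b + ψ b' + lm) ∧
      (∀ a ∈ S.A, a ≠ w → φ a = t) ∧
      (∀ b ∈ S.B, b ≠ u → ψ b = s) ∧
      t + s = 1 ∧
      ((2*t + kp = 0 ∧ 2*s + lm = 1) ∨ (2*t + kp = 1 ∧ 2*s + lm = 0)) := by
  obtain ⟨a0, ha0, a1, ha1, ha01⟩ := Finset.one_lt_card.mp (show 1 < S.A.card by
    have := S.hA; omega)
  obtain ⟨b0, hb0, b1, hb1, hb01⟩ := Finset.one_lt_card.mp (show 1 < S.B.card by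
    have := S.hB; omega)
  set φ : V → ℤ := fun a => S.g a b0 + S.m a b0 with hφ
  set ψ : V → ℤ := fun b => S.g a0 b + S.m a0 b - (S.g a0 b0 + S.m a0 b0) with hψ
  have cross : ∀ a ∈ S.A, ∀ b ∈ S.B, S.g a b = φ a + ψ b - S.m a b := by
    intro a ha b hb
    by_cases haa : a = a0
    · subst haa; simp only [hφ, hψ]; ring
    · by_cases hbb : b = b0
      · subst hbb; simp only [hφ, hψ]; ring
      · have := S.R3 ha ha0 hb hb0 haa hbb
        simp only [hφ, hψ]; linarith
  have SumEq : ∀ a ∈ S.A, ∀ a' ∈ S.A, a ≠ a' → ∀ b ∈ S.B, ∀ b' ∈ S.B, b ≠ b' →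
      S.g a a' + S.g b b' = φ a + φ a' + ψ b + ψ b' - 1 := by
    intro a ha a' ha' haa' b hb b' hb' hbb'
    have H := S.R5 ha ha' hb hb' haa' hbb'
    have c1 := cross a ha b' hb'
    have c2 := cross a' ha' b hb
    have hs : S.g b a' = S.g a' b := S.gsymm b a'
    linarith
  set kp : ℤ := S.g a0 a1 - φ a0 - φ a1 with hkp
  set lm : ℤ := S.g b0 b1 - ψ b0 - ψ b1 with hlm
  have base := SumEq a0 ha0 a1 ha1 ha01 b0 hb0 b1 hb1 hb01
  have APair : ∀ a ∈ S.A, ∀ a' ∈ S.A, a ≠ a' → S.g a a' = φ a + φ a' + kp := by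
    intro a ha a' ha' h
    have := SumEq a ha a' ha' h b0 hb0 b1 hb1 hb01
    simp only [hkp]; linarith
  have BPair : ∀ b ∈ S.B, ∀ b' ∈ S.B, b ≠ b' → S.g b b' = ψ b + ψ b' + lm := by
    intro b hb b' hb' h
    have := SumEq a0 ha0 a1 ha1 ha01 b hb b' hb' h
    simp only [hlm]; linarith
  have hkl : kp + lm = -1 := by simp only [hkp, hlm]; linarith
  have hcondA : ∀ x ∈ S.A, ∀ y ∈ S.A, x ≠ y → φ x + φ y = -kp ∨ φ x + φ y = -kp + 1 := by
    intro x hx y hy hxy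
    have := APair x hx y hy hxy
    rcases S.g01 x y with h | h
    · left; linarith
    · right; linarith
  have hcondB : ∀ x ∈ S.B, ∀ y ∈ S.B, x ≠ y → ψ x + ψ y = -lm ∨ ψ x + ψ y = -lm + 1 := by
    intro x hx y hy hxy
    have := BPair x hx y hy hxy
    rcases S.g01 x y with h | h
    · left; linarith
    · right; linarith
  obtain ⟨t, w, hw, hphi⟩ := rigidity (show (3:ℕ) ≤ S.A.card by have := S.hA; omega)
    φ (-kp) hcondA
  obtain ⟨s, u, hu, hpsi⟩ := rigidity (show (3:ℕ) ≤ S.B.card by have := S.hB; omega)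
    ψ (-lm) hcondB
  have hAw : 1 < (S.A.erase w).card := by
    rw [Finset.card_erase_of_mem hw]; have := S.hA; omega
  have hBu : 1 < (S.B.erase u).card := by
    rw [Finset.card_erase_of_mem hu]; have := S.hB; omega
  obtain ⟨a2, ha2', a3, ha3', ha23⟩ := Finset.one_lt_card.mp hAw
  obtain ⟨b2, hb2', b3, hb3', hb23⟩ := Finset.one_lt_card.mp hBu
  obtain ⟨ha2w, ha2⟩ := Finset.mem_erase.mp ha2'
  obtain ⟨ha3w, ha3⟩ := Finset.mem_erase.mp ha3'
  obtain ⟨hb2u, hb2⟩ := Finset.mem_erase.mp hb2'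
  obtain ⟨hb3u, hb3⟩ := Finset.mem_erase.mp hb3'
  have gA : S.g a2 a3 = 2*t + kp := by
    have := APair a2 ha2 a3 ha3 ha23
    rw [hphi a2 ha2 ha2w, hphi a3 ha3 ha3w] at this
    linarith
  have gB : S.g b2 b3 = 2*s + lm := by
    have := BPair b2 hb2 b3 hb3 hb23
    rw [hpsi b2 hb2 hb2u, hpsi b3 hb3 hb3u] at this
    linarith
  have hts : t + s = 1 ∧ ((2*t + kp = 0 ∧ 2*s + lm = 1) ∨ (2*t + kp = 1 ∧ 2*s + lm = 0)) := by
    rcases S.g01 a2 a3 with h1 | h1 <;> rcases S.g01 b2 b3 with h2 | h2 <;>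
      constructor <;> omega
  exact ⟨φ, ψ, t, s, kp, lm, w, u, hw, hu, cross, APair, BPair, hphi, hpsi, hts.1, hts.2⟩


/-- the target conclusion -/
def Setup.Concl : Prop :=
  ∃ (A' B' : Finset V) (M' : Finset (V × V)),
    S.A ⊆ A' ∧ S.B ⊆ B' ∧ S.M ⊆ M' ∧
    A' ∪ B' = Finset.univ ∧ Disjoint A' B' ∧
    (∀ p ∈ M', p.1 ∈ A' ∧ p.2 ∈ B') ∧
    (∀ p ∈ M', ∀ q ∈ M', p ≠ q → p.1 ≠ q.1 ∧ p.2 ≠ q.2) ∧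
    ∀ e : Finset V, e.card = 3 →
      (e ∈ S.G ↔ ((e ∩ A').Nonempty ∧ (e ∩ B').Nonempty ∧
        ∀ p ∈ M', ¬(p.1 ∈ e ∧ p.2 ∈ e)))

lemma Setup.assemble (M' : Finset (V × V))
    (hMM' : S.M ⊆ M')
    (hM'A : ∀ p ∈ M', p.1 ∈ insert S.v S.A ∧ p.2 ∈ S.B)
    (hM'new : ∀ p ∈ M', p ∉ S.M → p.1 = S.v)
    (hM'disj : ∀ p ∈ M', ∀ q ∈ M', p ≠ q → p.1 ≠ q.1 ∧ p.2 ≠ q.2)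
    (hedge : ∀ p q : V, p ≠ q → p ∈ S.A ∪ S.B → q ∈ S.A ∪ S.B →
      (({S.v, p, q} : Finset V) ∈ S.G ↔ ((p ∈ S.B ∨ q ∈ S.B) ∧
        ∀ r ∈ M', ¬(r.1 ∈ ({S.v, p, q} : Finset V) ∧ r.2 ∈ ({S.v, p, q} : Finset V))))) :
    S.Concl := by
  have hvnAB := S.vnotin
  have hvB : S.v ∉ S.B := fun h => hvnAB (Finset.mem_union_right _ h)
  refine ⟨insert S.v S.A, S.B, M', Finset.subset_insert _ _, le_refl _, hMM', ?_, ?_,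
    hM'A, hM'disj, ?_⟩
  · rw [Finset.insert_union, S.hpart, Finset.insert_erase (Finset.mem_univ S.v)]
  · rw [Finset.disjoint_left]
    intro x hx hxB
    rcases Finset.mem_insert.mp hx with rfl | hxA
    · exact hvB hxB
    · exact (S.nAB hxA hxB) rfl
  · intro e he3
    by_cases hv : S.v ∈ e
    · have h2 : (e.erase S.v).card = 2 := by
        rw [Finset.card_erase_of_mem hv, he3]
      obtain ⟨p, q, hpq, hepq⟩ := Finset.card_eq_two.mp h2
      have he : e = {S.v, p, q} := by
        rw [← hepq, Finset.insert_erase hv]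
      have hpv : p ≠ S.v := by
        have : p ∈ e.erase S.v := by rw [hepq]; simp
        exact (Finset.mem_erase.mp this).1
      have hqv : q ≠ S.v := by
        have : q ∈ e.erase S.v := by rw [hepq]; simp
        exact (Finset.mem_erase.mp this).1
      have hpAB : p ∈ S.A ∪ S.B := by
        rw [S.hpart]; exact Finset.mem_erase.mpr ⟨hpv, Finset.mem_univ p⟩
      have hqAB : q ∈ S.A ∪ S.B := by
        rw [S.hpart]; exact Finset.mem_erase.mpr ⟨hqv, Finset.mem_univ q⟩
      subst he
      rw [hedge p q hpq hpAB hqAB]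
      have hBiff : (({S.v, p, q} : Finset V) ∩ S.B).Nonempty ↔ (p ∈ S.B ∨ q ∈ S.B) := by
        constructor
        · rintro ⟨x, hx⟩
          obtain ⟨hx1, hx2⟩ := Finset.mem_inter.mp hx
          simp only [Finset.mem_insert, Finset.mem_singleton] at hx1
          rcases hx1 with rfl | rfl | rfl
          · exact absurd hx2 hvB
          · exact Or.inl hx2
          · exact Or.inr hx2
        · rintro (h | h)
          · exact ⟨p, Finset.mem_inter.mpr ⟨by simp, h⟩⟩
          · exact ⟨q, Finset.mem_inter.mpr ⟨by simp, h⟩⟩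
      have hAne : (({S.v, p, q} : Finset V) ∩ insert S.v S.A).Nonempty :=
        ⟨S.v, Finset.mem_inter.mpr ⟨by simp, by simp⟩⟩
      constructor
      · rintro ⟨h1, h2⟩
        exact ⟨hAne, hBiff.mpr h1, h2⟩
      · rintro ⟨-, h1, h2⟩
        exact ⟨hBiff.mp h1, h2⟩
    · have h1 := S.hGv e he3 hv
      have hEA : e ∩ insert S.v S.A = e ∩ S.A := by
        ext x
        simp only [Finset.mem_inter, Finset.mem_insert]
        constructor
        · rintro ⟨hx, rfl | hx2⟩
          · exact absurd hx hv
          · exact ⟨hx, hx2⟩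
        · rintro ⟨hx, hx2⟩
          exact ⟨hx, Or.inr hx2⟩
      rw [h1, hEA]
      constructor
      · rintro ⟨h2, h3, h4⟩
        refine ⟨h2, h3, ?_⟩
        intro r hr hre
        by_cases hrM : r ∈ S.M
        · exact h4 r hrM hre
        · rw [hM'new r hr hrM] at hre
          exact hv hre.1
      · rintro ⟨h2, h3, h4⟩
        exact ⟨h2, h3, fun r hr => h4 r (hMM' hr)⟩


lemma Setup.mem_of_g {p q : V} (h : S.g p q = 1) : ({S.v, p, q} : Finset V) ∈ S.G := by
  by_contra hc; simp [Setup.g, hc] at h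

lemma Setup.notMem_of_g {p q : V} (h : S.g p q = 0) : ({S.v, p, q} : Finset V) ∉ S.G := by
  intro hc; simp [Setup.g, hc] at h

lemma Setup.m_eq_zero {a b : V} (h : S.m a b = 0) : (a, b) ∉ S.M := by
  intro hc; simp [Setup.m, hc] at h

lemma Setup.mem_of_m {a b : V} (h : S.m a b = 1) : (a, b) ∈ S.M := by
  by_contra hc; simp [Setup.m, hc] at h

lemma Setup.m_of_notMem {a b : V} (h : (a, b) ∉ S.M) : S.m a b = 0 := by
  simp [Setup.m, h]

lemma Setup.notAB {a : V} (ha : a ∈ S.A) (hb : a ∈ S.B) : False :=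
  S.nAB ha hb rfl

set_option maxHeartbeats 2000000 in
lemma Setup.core
    (hside : ∃ b ∈ S.B, ∃ b' ∈ S.B, b ≠ b' ∧ ({S.v, b, b'} : Finset V) ∈ S.G) :
    S.Concl := by
  obtain ⟨φ, ψ, t, s, kp, lm, w, u, hw, hu, cross, APair, BPair, hphi, hpsi, hts, hcases⟩ :=
    S.machinery
  have hvnAB := S.vnotin
  have hvA : S.v ∉ S.A := fun h => hvnAB (Finset.mem_union_left _ h)
  have hvB : S.v ∉ S.B := fun h => hvnAB (Finset.mem_union_right _ h)
  have hAw2 : 1 < (S.A.erase w).card := by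
    rw [Finset.card_erase_of_mem hw]; have := S.hA; omega
  have hBu2 : 1 < (S.B.erase u).card := by
    rw [Finset.card_erase_of_mem hu]; have := S.hB; omega
  obtain ⟨a4, ha4', a5, ha5', ha45⟩ := Finset.one_lt_card.mp hAw2
  obtain ⟨b4, hb4', b5, hb5', hb45⟩ := Finset.one_lt_card.mp hBu2
  obtain ⟨ha4w, ha4⟩ := Finset.mem_erase.mp ha4'
  obtain ⟨ha5w, ha5⟩ := Finset.mem_erase.mp ha5'
  obtain ⟨hb4u, hb4⟩ := Finset.mem_erase.mp hb4'
  obtain ⟨hb5u, hb5⟩ := Finset.mem_erase.mp hb5'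
  -- rule out the case where v behaves like a B-vertex
  have hα : 2*t + kp = 0 ∧ 2*s + lm = 1 := by
    rcases hcases with h | h
    · exact h
    exfalso
    have key : ∀ c ∈ S.B, c ≠ u → S.g c u = 1 → False := by
      intro c hc hcu hgc
      have h1 := BPair c hc u hu hcu
      rw [hpsi c hc hcu] at h1
      have hmu : ∀ a ∈ S.A, a ≠ w → (a, u) ∈ S.M := by
        intro a ha haw
        have hc2 := cross a ha u hu
        rw [hphi a ha haw] at hc2
        rcases S.g01 a u with hg | hg <;> rcases S.m01 a u with hm | hm
        · omega
        · exact S.mem_of_m hm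
        · omega
        · exact S.mem_of_m hm
      have p4 := hmu a4 ha4 ha4w
      have p5 := hmu a5 ha5 ha5w
      exact (S.hMdisj (a4, u) p4 (a5, u) p5 (by simp [ha45])).2 rfl
    obtain ⟨b, hb, b', hb', hbb', hbG⟩ := hside
    have hg1 : S.g b b' = 1 := by simp [Setup.g, hbG]
    by_cases hbu : b = u
    · subst hbu
      exact key b' hb' (Ne.symm hbb') (by rw [S.gsymm]; exact hg1)
    · by_cases hb'u : b' = u
      · subst hb'u
        exact key b hb hbu hg1
      · have h2 := BPair b hb b' hb' hbb'
        rw [hpsi b hb hbu, hpsi b' hb' hb'u] at h2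
        omega
  -- all of A has φ-value t
  have hphiall : ∀ a ∈ S.A, φ a = t := by
    intro a ha
    by_cases haw : a = w
    · subst haw
      have h1 := APair a hw a4 ha4 (fun h => ha4w h.symm)
      rw [hphi a4 ha4 ha4w] at h1
      have hφw : φ a = t ∨ φ a = t + 1 := by
        rcases S.g01 a a4 with h | h <;> omega
      rcases hφw with h | h
      · exact h
      exfalso
      have hmw : ∀ b ∈ S.B, b ≠ u → (a, b) ∈ S.M := by
        intro b hb hbu
        have hc2 := cross a hw b hb
        rw [hpsi b hb hbu, h] at hc2
        rcases S.g01 a b with hg | hg <;> rcases S.m01 a b with hm | hm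
        · omega
        · exact S.mem_of_m hm
        · omega
        · exact S.mem_of_m hm
      have p4 := hmw b4 hb4 hb4u
      have p5 := hmw b5 hb5 hb5u
      exact (S.hMdisj (a, b4) p4 (a, b5) p5 (by simp [hb45])).1 rfl
    · exact hphi a ha haw
  -- A-pairs are non-edges
  have gA0 : ∀ p ∈ S.A, ∀ q ∈ S.A, p ≠ q → S.g p q = 0 := by
    intro p hp q hq hpq
    rw [APair p hp q hq hpq, hphiall p hp, hphiall q hq]
    omega
  -- cross formula
  have gAB : ∀ p ∈ S.A, ∀ q ∈ S.B, q ≠ u → S.g p q = 1 - S.m p q := by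
    intro p hp q hq hqu
    have := cross p hp q hq
    rw [hphiall p hp, hpsi q hq hqu] at this
    omega
  -- determine ψ u
  have h1 := BPair u hu b4 hb4 (fun h => hb4u h.symm)
  rw [hpsi b4 hb4 hb4u] at h1
  have hψu : ψ u = s - 1 ∨ ψ u = s := by
    rcases S.g01 u b4 with h | h <;> omega
  rcases hψu with hpu | hpu
  · -- v gets the partner u
    have hMu : ∀ a ∈ S.A, (a, u) ∉ S.M ∧ S.g a u = 0 := by
      intro a ha
      have hc2 := cross a ha u hu
      rw [hphiall a ha, hpu] at hc2
      rcases S.g01 a u with hg | hg <;> rcases S.m01 a u with hm | hm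
      · exact ⟨S.m_eq_zero hm, hg⟩
      · omega
      · omega
      · omega
    have gBu : ∀ q ∈ S.B, q ≠ u → S.g u q = 0 := by
      intro q hq hqu
      have := BPair u hu q hq (Ne.symm hqu)
      rw [hpsi q hq hqu, hpu] at this
      omega
    have gB1 : ∀ p ∈ S.B, ∀ q ∈ S.B, p ≠ q → p ≠ u → q ≠ u → S.g p q = 1 := by
      intro p hp q hq hpq hpu' hqu'
      rw [BPair p hp q hq hpq, hpsi p hp hpu', hpsi q hq hqu']
      omega
    refine S.assemble (insert (S.v, u) S.M) (Finset.subset_insert _ _) ?_ ?_ ?_ ?_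
    · intro p hp
      rcases Finset.mem_insert.mp hp with rfl | hpM
      · exact ⟨Finset.mem_insert_self _ _, hu⟩
      · exact ⟨Finset.mem_insert_of_mem (S.hMAB p hpM).1, (S.hMAB p hpM).2⟩
    · intro p hp hpM
      rcases Finset.mem_insert.mp hp with rfl | h
      · rfl
      · exact absurd h hpM
    · intro p hp q hq hpq
      rcases Finset.mem_insert.mp hp with rfl | hpM <;>
        rcases Finset.mem_insert.mp hq with rfl | hqM
      · exact absurd rfl hpq
      · constructor
        · intro h
          exact hvA (show S.v ∈ S.A by rw [show S.v = q.1 from h]; exact (S.hMAB q hqM).1)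
        · intro h
          apply (hMu q.1 (S.hMAB q hqM).1).1
          have hq' : ((q.1, u) : V × V) = q := Prod.ext rfl h
          rw [hq']; exact hqM
      · constructor
        · intro h
          exact hvA (show S.v ∈ S.A by rw [show S.v = p.1 from h.symm]; exact (S.hMAB p hpM).1)
        · intro h
          apply (hMu p.1 (S.hMAB p hpM).1).1
          have hp' : ((p.1, u) : V × V) = p := Prod.ext rfl h.symm
          rw [hp']; exact hpM
      · exact S.hMdisj p hpM q hqM hpq
    · -- the edge characterisation
      have hedgeAB : ∀ p ∈ S.A, ∀ q ∈ S.B, p ≠ q →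
          (({S.v, p, q} : Finset V) ∈ S.G ↔ ((p ∈ S.B ∨ q ∈ S.B) ∧
            ∀ r ∈ insert (S.v, u) S.M,
              ¬(r.1 ∈ ({S.v, p, q} : Finset V) ∧ r.2 ∈ ({S.v, p, q} : Finset V)))) := by
        intro p hp q hq hpq
        by_cases hqu : q = u
        · subst hqu
          refine iff_of_false (S.notMem_of_g (hMu p hp).2) ?_
          rintro ⟨-, hall⟩
          exact hall (S.v, q) (Finset.mem_insert_self _ _) ⟨by simp, by simp⟩
        · by_cases hm : (p, q) ∈ S.M
          · refine iff_of_false (S.notMem_of_g (by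
              rw [gAB p hp q hq hqu]; simp [Setup.m, hm])) ?_
            rintro ⟨-, hall⟩
            exact hall (p, q) (Finset.mem_insert_of_mem hm) ⟨by simp, by simp⟩
          · refine iff_of_true (S.mem_of_g (by
              rw [gAB p hp q hq hqu, S.m_of_notMem hm]; ring)) ⟨Or.inr hq, ?_⟩
            rintro r hr ⟨hr1, hr2⟩
            rcases Finset.mem_insert.mp hr with rfl | hrM
            · simp only [Finset.mem_insert, Finset.mem_singleton] at hr2
              rcases hr2 with h | h | h
              · exact (S.nevB hu) h
              · exact S.notAB hp (h ▸ hu)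
              · exact hqu (h.symm)
            · obtain ⟨hrA, hrB⟩ := S.hMAB r hrM
              simp only [Finset.mem_insert, Finset.mem_singleton] at hr1 hr2
              have hr1' : r.1 = p := by
                rcases hr1 with h | h | h
                · exact absurd (h ▸ hrA) hvA
                · exact h
                · exact absurd hrA (fun hh => S.notAB (h ▸ hh) hq)
              have hr2' : r.2 = q := by
                rcases hr2 with h | h | h
                · exact absurd (h ▸ hrB) hvB
                · exact absurd hrB (fun hh => S.notAB hp (h ▸ hh))
                · exact h
              exact hm (by rw [show ((p, q) : V × V) = r from Prod.ext hr1'.symm hr2'.symm]; exact hrM)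
      intro p q hpq hpAB hqAB
      rcases Finset.mem_union.mp hpAB with hp | hp <;> rcases Finset.mem_union.mp hqAB with hq | hq
      · -- A A
        refine iff_of_false (S.notMem_of_g (gA0 p hp q hq hpq)) ?_
        rintro ⟨h | h, -⟩
        · exact S.notAB hp h
        · exact S.notAB hq h
      · exact hedgeAB p hp q hq hpq
      · have H := hedgeAB q hq p hp (Ne.symm hpq)
        rw [show ({S.v, p, q} : Finset V) = {S.v, q, p} from tri_swap23 _ _ _, H]
        exact and_congr_left' or_comm
      · -- B B
        by_cases hpu' : p = u
        · subst hpu'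
          refine iff_of_false (S.notMem_of_g (gBu q hq (Ne.symm hpq))) ?_
          rintro ⟨-, hall⟩
          exact hall (S.v, p) (Finset.mem_insert_self _ _) ⟨by simp, by simp⟩
        · by_cases hqu' : q = u
          · subst hqu'
            refine iff_of_false (S.notMem_of_g (by rw [S.gsymm]; exact gBu p hp hpu')) ?_
            rintro ⟨-, hall⟩
            exact hall (S.v, q) (Finset.mem_insert_self _ _) ⟨by simp, by simp⟩
          · refine iff_of_true (S.mem_of_g (gB1 p hp q hq hpq hpu' hqu')) ⟨Or.inl hp, ?_⟩
            rintro r hr ⟨hr1, hr2⟩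
            rcases Finset.mem_insert.mp hr with rfl | hrM
            · simp only [Finset.mem_insert, Finset.mem_singleton] at hr2
              rcases hr2 with h | h | h
              · exact (S.nevB hu) h
              · exact hpu' h.symm
              · exact hqu' h.symm
            · obtain ⟨hrA, hrB⟩ := S.hMAB r hrM
              simp only [Finset.mem_insert, Finset.mem_singleton] at hr1
              rcases hr1 with h | h | h
              · exact absurd (h ▸ hrA) hvA
              · exact S.notAB (h ▸ hrA) hp
              · exact S.notAB (h ▸ hrA) hq
  · -- no partner
    have hpsiall : ∀ b ∈ S.B, ψ b = s := by
      intro b hb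
      by_cases h : b = u
      · rw [h]; exact hpu
      · exact hpsi b hb h
    have gAB' : ∀ p ∈ S.A, ∀ q ∈ S.B, S.g p q = 1 - S.m p q := by
      intro p hp q hq
      have := cross p hp q hq
      rw [hphiall p hp, hpsiall q hq] at this
      omega
    have gB1 : ∀ p ∈ S.B, ∀ q ∈ S.B, p ≠ q → S.g p q = 1 := by
      intro p hp q hq hpq
      rw [BPair p hp q hq hpq, hpsiall p hp, hpsiall q hq]
      omega
    refine S.assemble S.M (le_refl _)
      (fun p hp => ⟨Finset.mem_insert_of_mem (S.hMAB p hp).1, (S.hMAB p hp).2⟩)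
      (fun p hp h => absurd hp h) S.hMdisj ?_
    have hedgeAB : ∀ p ∈ S.A, ∀ q ∈ S.B, p ≠ q →
        (({S.v, p, q} : Finset V) ∈ S.G ↔ ((p ∈ S.B ∨ q ∈ S.B) ∧
          ∀ r ∈ S.M, ¬(r.1 ∈ ({S.v, p, q} : Finset V) ∧ r.2 ∈ ({S.v, p, q} : Finset V)))) := by
      intro p hp q hq hpq
      by_cases hm : (p, q) ∈ S.M
      · refine iff_of_false (S.notMem_of_g (by
          rw [gAB' p hp q hq]; simp [Setup.m, hm])) ?_
        rintro ⟨-, hall⟩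
        exact hall (p, q) hm ⟨by simp, by simp⟩
      · refine iff_of_true (S.mem_of_g (by
          rw [gAB' p hp q hq, S.m_of_notMem hm]; ring)) ⟨Or.inr hq, ?_⟩
        rintro r hrM ⟨hr1, hr2⟩
        obtain ⟨hrA, hrB⟩ := S.hMAB r hrM
        simp only [Finset.mem_insert, Finset.mem_singleton] at hr1 hr2
        have hr1' : r.1 = p := by
          rcases hr1 with h | h | h
          · exact absurd (h ▸ hrA) hvA
          · exact h
          · exact absurd hrA (fun hh => S.notAB (h ▸ hh) hq)
        have hr2' : r.2 = q := by
          rcases hr2 with h | h | h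
          · exact absurd (h ▸ hrB) hvB
          · exact absurd hrB (fun hh => S.notAB hp (h ▸ hh))
          · exact h
        exact hm (by rw [show ((p, q) : V × V) = r from Prod.ext hr1'.symm hr2'.symm]; exact hrM)
    intro p q hpq hpAB hqAB
    rcases Finset.mem_union.mp hpAB with hp | hp <;> rcases Finset.mem_union.mp hqAB with hq | hq
    · refine iff_of_false (S.notMem_of_g (gA0 p hp q hq hpq)) ?_
      rintro ⟨h | h, -⟩
      · exact S.notAB hp h
      · exact S.notAB hq h
    · exact hedgeAB p hp q hq hpq
    · have H := hedgeAB q hq p hp (Ne.symm hpq)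
      rw [show ({S.v, p, q} : Finset V) = {S.v, q, p} from tri_swap23 _ _ _, H]
      exact and_congr_left' or_comm
    · refine iff_of_true (S.mem_of_g (gB1 p hp q hq hpq)) ⟨Or.inl hp, ?_⟩
      rintro r hrM ⟨hr1, hr2⟩
      obtain ⟨hrA, hrB⟩ := S.hMAB r hrM
      simp only [Finset.mem_insert, Finset.mem_singleton] at hr1
      rcases hr1 with h | h | h
      · exact absurd (h ▸ hrA) hvA
      · exact S.notAB (h ▸ hrA) hp
      · exact S.notAB (h ▸ hrA) hq


end Stmt18

open Stmt18 in
/-- let `G` be an `𝓕`-free 3-graph (for every six distinct vertices the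
signed sum of edge indicators vanishes), let `v` be a vertex, and suppose that `G - v`
equals `G_{A,B,M}` with `|A|, |B| ≥ 5` and `M ⊆ A × B` a set of pairwise disjoint pairs.
Then `G = G_{A',B',M'}` for some partition `A' ⊇ A`, `B' ⊇ B` of the vertex set and some
set of pairwise disjoint pairs `M' ⊇ M` with `M' ⊆ A' × B'`. -/
theorem stmt18 {V : Type*} [DecidableEq V] [Fintype V]
    (G : Finset (Finset V)) (hG3 : ∀ e ∈ G, e.card = 3)
    (hFfree : ∀ x x' y y' z z' : V, ([x, x', y, y', z, z'] : List V).Nodup →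
      ((if ({x, y, z} : Finset V) ∈ G then (1 : ℤ) else 0)
        - (if ({x, y, z'} : Finset V) ∈ G then 1 else 0)
        - (if ({x, y', z} : Finset V) ∈ G then 1 else 0)
        - (if ({x', y, z} : Finset V) ∈ G then 1 else 0)
        + (if ({x, y', z'} : Finset V) ∈ G then 1 else 0)
        + (if ({x', y, z'} : Finset V) ∈ G then 1 else 0)
        + (if ({x', y', z} : Finset V) ∈ G then 1 else 0)
        - (if ({x', y', z'} : Finset V) ∈ G then 1 else 0)) = 0)
    (v : V) (A B : Finset V) (M : Finset (V × V))
    (hpart : A ∪ B = Finset.univ.erase v) (hdisj : Disjoint A B)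
    (hA : 5 ≤ A.card) (hB : 5 ≤ B.card)
    (hMAB : ∀ p ∈ M, p.1 ∈ A ∧ p.2 ∈ B)
    (hMdisj : ∀ p ∈ M, ∀ q ∈ M, p ≠ q → p.1 ≠ q.1 ∧ p.2 ≠ q.2)
    (hGv : ∀ e : Finset V, e.card = 3 → v ∉ e →
      (e ∈ G ↔ ((e ∩ A).Nonempty ∧ (e ∩ B).Nonempty ∧
        ∀ p ∈ M, ¬(p.1 ∈ e ∧ p.2 ∈ e)))) :
    ∃ (A' B' : Finset V) (M' : Finset (V × V)),
      A ⊆ A' ∧ B ⊆ B' ∧ M ⊆ M' ∧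
      A' ∪ B' = Finset.univ ∧ Disjoint A' B' ∧
      (∀ p ∈ M', p.1 ∈ A' ∧ p.2 ∈ B') ∧
      (∀ p ∈ M', ∀ q ∈ M', p ≠ q → p.1 ≠ q.1 ∧ p.2 ≠ q.2) ∧
      ∀ e : Finset V, e.card = 3 →
        (e ∈ G ↔ ((e ∩ A').Nonempty ∧ (e ∩ B').Nonempty ∧
          ∀ p ∈ M', ¬(p.1 ∈ e ∧ p.2 ∈ e))) := by
  classical
  set S : Setup V := ⟨G, v, A, B, M, hFfree, hpart, hdisj, hA, hB, hMAB, hMdisj, hGv⟩ with hS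
  obtain ⟨φ, ψ, t, s, kp, lm, w, u, hw, hu, cross, APair, BPair, hphi, hpsi, hts, hcases⟩ :=
    S.machinery
  have hw' : w ∈ A := hw
  have hu' : u ∈ B := hu
  have hAw2 : 1 < (A.erase w).card := by
    rw [Finset.card_erase_of_mem hw']; omega
  have hBu2 : 1 < (B.erase u).card := by
    rw [Finset.card_erase_of_mem hu']; omega
  obtain ⟨a4, ha4', a5, ha5', ha45⟩ := Finset.one_lt_card.mp hAw2
  obtain ⟨b4, hb4', b5, hb5', hb45⟩ := Finset.one_lt_card.mp hBu2
  obtain ⟨ha4w, ha4⟩ := Finset.mem_erase.mp ha4'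
  obtain ⟨ha5w, ha5⟩ := Finset.mem_erase.mp ha5'
  obtain ⟨hb4u, hb4⟩ := Finset.mem_erase.mp hb4'
  obtain ⟨hb5u, hb5⟩ := Finset.mem_erase.mp hb5'
  rcases hcases with hα | hβ
  · have hside : ∃ b ∈ S.B, ∃ b' ∈ S.B, b ≠ b' ∧ ({S.v, b, b'} : Finset V) ∈ S.G := by
      refine ⟨b4, hb4, b5, hb5, hb45, S.mem_of_g ?_⟩
      rw [BPair b4 hb4 b5 hb5 hb45, hpsi b4 hb4 hb4u, hpsi b5 hb5 hb5u]
      omega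
    obtain ⟨A', B', M', c1, c2, c3, c4, c5, c6, c7, c8⟩ := S.core hside
    exact ⟨A', B', M', c1, c2, c3, c4, c5, c6, c7, c8⟩
  · -- v behaves like a B-vertex: apply the core lemma to the swapped setup
    have hMAB_sw : ∀ p ∈ M.image Prod.swap, p.1 ∈ B ∧ p.2 ∈ A := by
      intro p hp
      obtain ⟨q, hq, rfl⟩ := Finset.mem_image.mp hp
      exact ⟨(hMAB q hq).2, (hMAB q hq).1⟩
    have hMdisj_sw : ∀ p ∈ M.image Prod.swap, ∀ q ∈ M.image Prod.swap, p ≠ q →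
        p.1 ≠ q.1 ∧ p.2 ≠ q.2 := by
      intro p hp q hq hne
      obtain ⟨p0, hp0, rfl⟩ := Finset.mem_image.mp hp
      obtain ⟨q0, hq0, rfl⟩ := Finset.mem_image.mp hq
      have h0 : p0 ≠ q0 := fun h => hne (by rw [h])
      have H := hMdisj p0 hp0 q0 hq0 h0
      exact ⟨H.2, H.1⟩
    have hGv_sw : ∀ e : Finset V, e.card = 3 → v ∉ e →
        (e ∈ G ↔ ((e ∩ B).Nonempty ∧ (e ∩ A).Nonempty ∧
          ∀ p ∈ M.image Prod.swap, ¬(p.1 ∈ e ∧ p.2 ∈ e))) := by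
      intro e h3 hv
      rw [hGv e h3 hv]
      constructor
      · rintro ⟨h1, h2, h3'⟩
        refine ⟨h2, h1, ?_⟩
        rintro p hp ⟨hx, hy⟩
        obtain ⟨q, hq, rfl⟩ := Finset.mem_image.mp hp
        exact h3' q hq ⟨hy, hx⟩
      · rintro ⟨h1, h2, h3'⟩
        refine ⟨h2, h1, ?_⟩
        rintro q hq ⟨hx, hy⟩
        exact h3' q.swap (Finset.mem_image.mpr ⟨q, hq, rfl⟩) ⟨hy, hx⟩
    set Ssw : Setup V := ⟨G, v, B, A, M.image Prod.swap, hFfree,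
      by rw [Finset.union_comm]; exact hpart, hdisj.symm, hB, hA,
      hMAB_sw, hMdisj_sw, hGv_sw⟩ with hSsw
    have hside_sw : ∃ b ∈ Ssw.B, ∃ b' ∈ Ssw.B, b ≠ b' ∧ ({Ssw.v, b, b'} : Finset V) ∈ Ssw.G := by
      refine ⟨a4, ha4, a5, ha5, ha45, S.mem_of_g ?_⟩
      rw [APair a4 ha4 a5 ha5 ha45, hphi a4 ha4 ha4w, hphi a5 ha5 ha5w]
      omega
    obtain ⟨A'', B'', M'', c1, c2, c3, c4, c5, c6, c7, c8⟩ := Ssw.core hside_sw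
    refine ⟨B'', A'', M''.image Prod.swap, c2, c1, ?_, ?_, c5.symm, ?_, ?_, ?_⟩
    · intro p hp
      exact Finset.mem_image.mpr ⟨p.swap, c3 (Finset.mem_image.mpr ⟨p, hp, rfl⟩),
        Prod.swap_swap p⟩
    · rw [Finset.union_comm]; exact c4
    · intro p hp
      obtain ⟨q, hq, rfl⟩ := Finset.mem_image.mp hp
      exact ⟨(c6 q hq).2, (c6 q hq).1⟩
    · intro p hp q hq hne
      obtain ⟨p0, hp0, rfl⟩ := Finset.mem_image.mp hp
      obtain ⟨q0, hq0, rfl⟩ := Finset.mem_image.mp hq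
      have h0 : p0 ≠ q0 := fun h => hne (by rw [h])
      have H := c7 p0 hp0 q0 hq0 h0
      exact ⟨H.2, H.1⟩
    · intro e he3
      rw [c8 e he3]
      constructor
      · rintro ⟨h1, h2, h3'⟩
        refine ⟨h2, h1, ?_⟩
        rintro p hp ⟨hx, hy⟩
        obtain ⟨q, hq, rfl⟩ := Finset.mem_image.mp hp
        exact h3' q hq ⟨hy, hx⟩
      · rintro ⟨h1, h2, h3'⟩
        refine ⟨h2, h1, ?_⟩
        rintro q hq ⟨hx, hy⟩
        exact h3' q.swap (Finset.mem_image.mpr ⟨q, hq, rfl⟩) ⟨hy, hx⟩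
end
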